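/- arXiv:2309.10760 — 7 statements merged into one kernel-verified Lean document; each statement's English description precedes it below -/
import Mathlib

section
/- Let X be a median space of rank n. Then for every a ∈ X and every r > 0, the convex hull of the closed ball B(a,r) is contained in the closed ball B(a, n·r). -/
/-- The interval `[a,b]` in a metric space: points `x` with `d(a,x) + d(x,b) = d(a,b)`. -/
def mInterval {X : Type*} [MetricSpace X] (a b : X) : Set X :=
  {x : X | dist a x + dist x b = dist a b}

/-- A median space: every triple of points has a unique median point. -/
def IsMedianSpace (X : Type*) [MetricSpace X] : Prop :=
  ∀ a b c : X, ∃! m : X,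
    m ∈ mInterval a b ∩ mInterval b c ∩ mInterval a c

/-- A subset is (median) convex if it contains the interval between any two of its points. -/
def MConvex {X : Type*} [MetricSpace X] (C : Set X) : Prop :=
  ∀ a ∈ C, ∀ b ∈ C, mInterval a b ⊆ C

/-- A halfspace: a convex subset with convex complement. -/
def IsHalfspace {X : Type*} [MetricSpace X] (h : Set X) : Prop :=
  MConvex h ∧ MConvex hᶜ

/-- Two subsets are transverse if the four pairwise intersections of them and
their complements are all nonempty. -/
def TransverseSets {X : Type*} (h₁ h₂ : Set X) : Prop :=
  (h₁ ∩ h₂).Nonempty ∧ (h₁ᶜ ∩ h₂).Nonempty ∧ (h₁ ∩ h₂ᶜ).Nonempty ∧ (h₁ᶜ ∩ h₂ᶜ).Nonempty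

/-- `X` has rank `n`: there are `n` pairwise transverse halfspaces but not `n+1`. -/
def HasMedianRank (X : Type*) [MetricSpace X] (n : ℕ) : Prop :=
  (∃ h : Fin n → Set X, (∀ i, IsHalfspace (h i)) ∧
    ∀ i j, i ≠ j → TransverseSets (h i) (h j)) ∧
  ¬ ∃ h : Fin (n + 1) → Set X, (∀ i, IsHalfspace (h i)) ∧
    ∀ i j, i ≠ j → TransverseSets (h i) (h j)

/-- Median convex hull: intersection of all convex subsets containing `A`. -/
def mConvexHull {X : Type*} [MetricSpace X] (A : Set X) : Set X :=
  ⋂₀ {C : Set X | MConvex C ∧ A ⊆ C}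

/-- The hyperplane bounding a halfspace `h`. -/
def mHyperplane {X : Type*} [MetricSpace X] (h : Set X) : Set X :=
  closure h ∩ closure hᶜ

/-- Depth of the halfspace `h` in the subset `A`:
`sup { d(x, ĥ) | x ∈ h ∩ A }`. -/
noncomputable def mDepth {X : Type*} [MetricSpace X] (A h : Set X) : ℝ :=
  sSup ((fun x => Metric.infDist x (mHyperplane h)) '' (h ∩ A))

/-- `π` is the nearest-point projection onto `C`. -/
def IsNearestPointProj {X : Type*} [MetricSpace X] (C : Set X) (π : X → X) : Prop :=
  ∀ x : X, π x ∈ C ∧ dist x (π x) = Metric.infDist x C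

/-- The halfspace `h` separates the points `x` and `y`. -/
def SeparatesPts {X : Type*} (h : Set X) (x y : X) : Prop :=
  (x ∈ h ∧ y ∈ hᶜ) ∨ (y ∈ h ∧ x ∈ hᶜ)

namespace MedianHull

variable {X : Type*} [MetricSpace X]

/-- betweenness -/
def B3 (a x b : X) : Prop := dist a x + dist x b = dist a b

lemma mem_iff_B3 {a b x : X} : x ∈ mInterval a b ↔ B3 a x b := Iff.rfl

lemma b3_aab (a b : X) : B3 a a b := by simp [B3]

lemma b3_abb (a b : X) : B3 a b b := by simp [B3]

lemma B3.symm {a x b : X} (h : B3 a x b) : B3 b x a := by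
  unfold B3 at *
  rw [dist_comm b x, dist_comm x a, dist_comm b a]
  linarith

/-- T1 : if b ∈ [a,c] and x ∈ [a,b] then x ∈ [a,c] -/
lemma b3_trans {a b c x : X} (hb : B3 a b c) (hx : B3 a x b) : B3 a x c := by
  have t1 := dist_triangle x b c
  have t2 := dist_triangle a x c
  unfold B3 at *
  linarith

/-- T2 : if b ∈ [a,c] and x ∈ [a,b] then b ∈ [x,c] -/
lemma b3_mid {a b c x : X} (hb : B3 a b c) (hx : B3 a x b) : B3 x b c := by
  have t1 := dist_triangle x b c
  have t2 := dist_triangle a x c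
  unfold B3 at *
  linarith

/-- GF : if c ∈ [w,y] and x ∈ [c,y] then c ∈ [w,x] -/
lemma b3_gf {w c y x : X} (hw : B3 w c y) (hx : B3 c x y) : B3 w c x := by
  have t1 := dist_triangle w c x
  have t2 := dist_triangle w x y
  unfold B3 at *
  linarith

variable (hmed : IsMedianSpace X)
include hmed

noncomputable def med (a b c : X) : X := (hmed a b c).choose

lemma med_b1 (a b c : X) : B3 a (med hmed a b c) b := ((hmed a b c).choose_spec.1).1.1

lemma med_b2 (a b c : X) : B3 b (med hmed a b c) c := ((hmed a b c).choose_spec.1).1.2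

lemma med_b3 (a b c : X) : B3 a (med hmed a b c) c := ((hmed a b c).choose_spec.1).2

lemma med_unique {a b c z : X} (h1 : B3 a z b) (h2 : B3 b z c) (h3 : B3 a z c) :
    z = med hmed a b c :=
  (hmed a b c).choose_spec.2 z ⟨⟨h1, h2⟩, h3⟩

/-- The GATE lemma: for any w ∈ [u,v], the median of (u,v,x) lies in [x,w]. -/
lemma gate (u v x w : X) (hw : B3 u w v) : B3 x (med hmed u v x) w := by
  set n := med hmed u w x with hn
  set n' := med hmed v w x with hn'
  have hunw : B3 u n w := med_b1 hmed u w x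
  have hwnx : B3 w n x := med_b2 hmed u w x
  have hunx : B3 u n x := med_b3 hmed u w x
  have hvn'w : B3 v n' w := med_b1 hmed v w x
  have hwn'x : B3 w n' x := med_b2 hmed v w x
  have hvn'x : B3 v n' x := med_b3 hmed v w x
  -- step 1 : w ∈ [n, n']
  have hwnn' : B3 n w n' := by
    set μ := med hmed n n' w with hμ
    have h1 : B3 n μ n' := med_b1 hmed n n' w
    have h2 : B3 n' μ w := med_b2 hmed n n' w
    have h3 : B3 n μ w := med_b3 hmed n n' w
    have hμu : B3 w μ u := b3_trans hunw.symm h3.symm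
    have hμv : B3 w μ v := b3_trans hvn'w.symm h2.symm
    have t1 := dist_triangle u μ v
    have hμw : dist w μ = 0 := by
      have c1 : dist u μ = dist μ u := dist_comm _ _
      have c0 : dist w u = dist u w := dist_comm _ _
      unfold B3 at hμu hμv hw
      linarith [dist_nonneg (x := w) (y := μ)]
    have : w = μ := eq_of_dist_eq_zero hμw
    rw [this]; exact h1
  -- step 2
  set T := med hmed n n' x with hT
  have hT1 : B3 n T n' := med_b1 hmed n n' x
  have hT2 : B3 n' T x := med_b2 hmed n n' x
  have hT3 : B3 n T x := med_b3 hmed n n' x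
  have hTxu : B3 x T u := b3_trans hunx.symm hT3.symm
  have hTxv : B3 x T v := b3_trans hvn'x.symm hT2.symm
  have hTuv : B3 u T v := by
    have t1 := dist_triangle u n T
    have t2 := dist_triangle T n' v
    have t3 := dist_triangle u T v
    have c1 : dist w n' = dist n' w := dist_comm _ _
    have c2 : dist n' v = dist v n' := dist_comm _ _
    have c3 : dist w v = dist v w := dist_comm _ _
    unfold B3 at hT1 hwnn' hunw hvn'w hw ⊢
    linarith
  have hTm : T = med hmed u v x := med_unique hmed hTuv hTxv.symm hTxu.symm
  rw [← hTm]
  exact b3_trans hwnx.symm hT3.symm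

/-- The key convexity lemma: the set of points z with c ∈ [z,y] is convex. -/
lemma ystar {c y z₁ z₂ z : X} (h₁ : B3 z₁ c y) (h₂ : B3 z₂ c y) (hz : B3 z₁ z z₂) :
    B3 z c y := by
  set γ := med hmed c z y with hγdef
  have hγ1 : B3 c γ z := med_b1 hmed c z y
  have hγ2 : B3 z γ y := med_b2 hmed c z y
  have hγ3 : B3 c γ y := med_b3 hmed c z y
  set M := med hmed z₁ z₂ c with hMdef
  have hM1 : B3 z₁ M z₂ := med_b1 hmed z₁ z₂ c
  have hM2 : B3 z₂ M c := med_b2 hmed z₁ z₂ c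
  have hM3 : B3 z₁ M c := med_b3 hmed z₁ z₂ c
  have hMz : B3 c M z := gate hmed z₁ z₂ c z hz
  have hcMy : B3 M c y := b3_mid h₁ hM3
  have hMγ : B3 M c γ := b3_gf hcMy hγ3
  have h₁γ : B3 z₁ c γ := b3_gf h₁ hγ3
  have h₂γ : B3 z₂ c γ := b3_gf h₂ hγ3
  have hM1γ : B3 z₁ M γ := by
    unfold B3 at hMγ hM3 h₁γ ⊢
    linarith
  have hM2γ : B3 z₂ M γ := by
    unfold B3 at hMγ hM2 h₂γ ⊢
    linarith
  have hMm : M = med hmed z₁ z₂ γ := med_unique hmed hM1 hM2γ hM1γ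
  have hMγz : B3 γ M z := by
    have := gate hmed z₁ z₂ γ z hz
    rwa [← hMm] at this
  -- numbers
  have ht : dist c γ = 0 := by
    have c1 : dist γ M = dist M γ := dist_comm _ _
    have c2 : dist M c = dist c M := dist_comm _ _
    unfold B3 at hMγz hMz hMγ hγ1
    linarith [dist_nonneg (x := c) (y := γ)]
  have : c = γ := eq_of_dist_eq_zero ht
  rw [this]
  exact hγ2

section Lattice

/-- join in the interval lattice [a,y] -/
noncomputable def sj (a y s t : X) : X := med hmed s t y
/-- meet in the interval lattice [a,y] -/
noncomputable def mt (a y s t : X) : X := med hmed s t a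
/-- gate projection onto [a,y] -/
noncomputable def prj (a y z : X) : X := med hmed a y z

variable {a y : X}

lemma sj_b1 (s t : X) : B3 s (sj hmed a y s t) t := med_b1 hmed s t y
lemma sj_b2 (s t : X) : B3 t (sj hmed a y s t) y := med_b2 hmed s t y
lemma sj_b3 (s t : X) : B3 s (sj hmed a y s t) y := med_b3 hmed s t y
lemma mt_b1 (s t : X) : B3 s (mt hmed a y s t) t := med_b1 hmed s t a
lemma mt_b2 (s t : X) : B3 t (mt hmed a y s t) a := med_b2 hmed s t a
lemma mt_b3 (s t : X) : B3 s (mt hmed a y s t) a := med_b3 hmed s t a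

/-- the join lies in [a,y] -/
lemma sj_mem {s : X} (t : X) (hs : B3 a s y) : B3 a (sj hmed a y s t) y := by
  have h1 : B3 s (sj hmed a y s t) y := sj_b3 hmed s t
  have t1 := dist_triangle a s (sj hmed a y s t)
  have t2 := dist_triangle a (sj hmed a y s t) y
  unfold B3 at *
  linarith

/-- the meet lies in [a,y] -/
lemma mt_mem {s : X} (t : X) (hs : B3 a s y) : B3 a (mt hmed a y s t) y := by
  have h1 : B3 a (mt hmed a y s t) s := (mt_b3 hmed (a := a) (y := y) s t).symm
  have t1 := dist_triangle (mt hmed a y s t) s y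
  have t2 := dist_triangle a (mt hmed a y s t) y
  unfold B3 at *
  linarith

lemma le_sj_left {s : X} (t : X) (hs : B3 a s y) : B3 a s (sj hmed a y s t) := by
  have h1 : B3 s (sj hmed a y s t) y := sj_b3 hmed s t
  have t1 := dist_triangle a s (sj hmed a y s t)
  have t2 := dist_triangle a (sj hmed a y s t) y
  unfold B3 at *
  linarith

lemma le_sj_right (s : X) {t : X} (ht : B3 a t y) : B3 a t (sj hmed a y s t) := by
  have h1 : B3 t (sj hmed a y s t) y := sj_b2 hmed s t
  have t1 := dist_triangle a t (sj hmed a y s t)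
  have t2 := dist_triangle a (sj hmed a y s t) y
  unfold B3 at *
  linarith

lemma mt_le_left (s t : X) : B3 a (mt hmed a y s t) s := (mt_b3 hmed s t).symm

lemma mt_le_right (s t : X) : B3 a (mt hmed a y s t) t := (mt_b2 hmed s t).symm

lemma sj_le {s t w : X} (hs : B3 a s y) (ht : B3 a t y) (hw : B3 a w y)
    (hsw : B3 a s w) (htw : B3 a t w) : B3 a (sj hmed a y s t) w := by
  set P := med hmed s t w with hPdef
  have hP1 : B3 s P t := med_b1 hmed s t w
  have hP2 : B3 t P w := med_b2 hmed s t w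
  have hP3 : B3 s P w := med_b3 hmed s t w
  have hPsy : B3 s P y := by
    have t1 := dist_triangle s P y
    have t3 := dist_triangle P w y
    unfold B3 at *
    linarith
  have hPty : B3 t P y := by
    have t1 := dist_triangle t P y
    have t3 := dist_triangle P w y
    unfold B3 at *
    linarith
  have hPm : P = sj hmed a y s t := med_unique hmed hP1 hPty hPsy
  rw [← hPm]
  have hle : B3 a s (sj hmed a y s t) := le_sj_left hmed t hs
  rw [← hPm] at hle
  unfold B3 at hle hP3 hsw ⊢
  linarith

lemma le_mt {s t w : X} (hws : B3 a w s) (hwt : B3 a w t) : B3 a w (mt hmed a y s t) := by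
  set Q := med hmed s t w with hQdef
  have hQ1 : B3 s Q t := med_b1 hmed s t w
  have hQ2 : B3 t Q w := med_b2 hmed s t w
  have hQ3 : B3 s Q w := med_b3 hmed s t w
  have c1 : dist w a = dist a w := dist_comm _ _
  have c2 : dist s a = dist a s := dist_comm _ _
  have c3 : dist t a = dist a t := dist_comm _ _
  have c4 : dist w s = dist s w := dist_comm _ _
  have c5 : dist w t = dist t w := dist_comm _ _
  have hQsa : B3 s Q a := by
    have t1 := dist_triangle s Q a
    have t3 := dist_triangle Q w a
    unfold B3 at *
    linarith
  have hQta : B3 t Q a := by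
    have t1 := dist_triangle t Q a
    have t3 := dist_triangle Q w a
    unfold B3 at *
    linarith
  have hQm : Q = mt hmed a y s t := med_unique hmed hQ1 hQta hQsa
  rw [← hQm]
  have c6 : dist Q a = dist a Q := dist_comm _ _
  have c7 : dist w Q = dist Q w := dist_comm _ _
  unfold B3 at hQsa hQ3 hws ⊢
  linarith

lemma dist_a_sj_le {s t : X} (hs : B3 a s y) (ht : B3 a t y) :
    dist a (sj hmed a y s t) ≤ dist a s + dist a t := by
  have h1 : B3 s (sj hmed a y s t) t := sj_b1 hmed s t
  have h2 : B3 t (sj hmed a y s t) y := sj_b2 hmed s t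
  have h3 : B3 s (sj hmed a y s t) y := sj_b3 hmed s t
  have hle : B3 a s (sj hmed a y s t) := le_sj_left hmed t hs
  have t1 := dist_triangle s a t
  have c1 : dist s a = dist a s := dist_comm _ _
  have c2 : dist (sj hmed a y s t) t = dist t (sj hmed a y s t) := dist_comm _ _
  unfold B3 at *
  linarith

end Lattice

section Distrib

variable {a y : X}

/-- order-interval implies metric interval -/
lemma oi {s t z : X} (hs : B3 a s y) (ht : B3 a t y)
    (h1 : B3 a (mt hmed a y s t) z) (h2 : B3 a z (sj hmed a y s t)) : B3 s z t := by
  set K := mt hmed a y s t with hK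
  set J := sj hmed a y s t with hJ
  set W := med hmed s t z with hW
  have hW1 : B3 s W t := med_b1 hmed s t z
  have hgK : B3 z W K := gate hmed s t z K (mt_b1 hmed s t)
  have hgJ : B3 z W J := gate hmed s t z J (sj_b1 hmed s t)
  have hKJ : B3 a K J := b3_trans (le_sj_left hmed t hs) (mt_le_left hmed s t)
  have t1 := dist_triangle K W J
  have c1 : dist W K = dist K W := dist_comm _ _
  have c2 : dist K z = dist z K := dist_comm _ _
  have hzW : dist z W = 0 := by
    unfold B3 at h1 h2 hKJ hgK hgJ
    linarith [dist_nonneg (x := z) (y := W)]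
  have : z = W := eq_of_dist_eq_zero hzW
  rw [this]; exact hW1

/-- median = join of pairwise meets -/
lemma med_eq_d0 {s t w : X} (hs : B3 a s y) (ht : B3 a t y) (hw : B3 a w y) :
    med hmed s t w =
      sj hmed a y (mt hmed a y s t) (sj hmed a y (mt hmed a y t w) (mt hmed a y s w)) := by
  set K1 := mt hmed a y s t with hK1
  set K2 := mt hmed a y t w with hK2
  set K3 := mt hmed a y s w with hK3
  have hK1I : B3 a K1 y := mt_mem hmed t hs
  have hK2I : B3 a K2 y := mt_mem hmed w ht
  have hK3I : B3 a K3 y := mt_mem hmed w hs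
  set S23 := sj hmed a y K2 K3 with hS23
  have hS23I : B3 a S23 y := sj_mem hmed K3 hK2I
  set D := sj hmed a y K1 S23 with hD
  have hDI : B3 a D y := sj_mem hmed S23 hK1I
  have hJst : B3 a (sj hmed a y s t) y := sj_mem hmed t hs
  have hJtw : B3 a (sj hmed a y t w) y := sj_mem hmed w ht
  have hJsw : B3 a (sj hmed a y s w) y := sj_mem hmed w hs
  -- components below joins
  have hK1st : B3 a K1 (sj hmed a y s t) := b3_trans (le_sj_left hmed t hs) (mt_le_left hmed s t)
  have hK2st : B3 a K2 (sj hmed a y s t) := b3_trans (le_sj_right hmed s ht) (mt_le_left hmed t w)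
  have hK3st : B3 a K3 (sj hmed a y s t) := b3_trans (le_sj_left hmed t hs) (mt_le_left hmed s w)
  have hK1tw : B3 a K1 (sj hmed a y t w) := b3_trans (le_sj_left hmed w ht) (mt_le_right hmed s t)
  have hK2tw : B3 a K2 (sj hmed a y t w) := b3_trans (le_sj_left hmed w ht) (mt_le_left hmed t w)
  have hK3tw : B3 a K3 (sj hmed a y t w) := b3_trans (le_sj_right hmed t hw) (mt_le_right hmed s w)
  have hK1sw : B3 a K1 (sj hmed a y s w) := b3_trans (le_sj_left hmed w hs) (mt_le_left hmed s t)
  have hK2sw : B3 a K2 (sj hmed a y s w) := b3_trans (le_sj_right hmed s hw) (mt_le_right hmed t w)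
  have hK3sw : B3 a K3 (sj hmed a y s w) := b3_trans (le_sj_left hmed w hs) (mt_le_left hmed s w)
  -- D below each pair join
  have hDst : B3 a D (sj hmed a y s t) :=
    sj_le hmed hK1I hS23I hJst hK1st (sj_le hmed hK2I hK3I hJst hK2st hK3st)
  have hDtw : B3 a D (sj hmed a y t w) :=
    sj_le hmed hK1I hS23I hJtw hK1tw (sj_le hmed hK2I hK3I hJtw hK2tw hK3tw)
  have hDsw : B3 a D (sj hmed a y s w) :=
    sj_le hmed hK1I hS23I hJsw hK1sw (sj_le hmed hK2I hK3I hJsw hK2sw hK3sw)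
  -- meets below D
  have hK1D : B3 a K1 D := le_sj_left hmed S23 hK1I
  have hK2D : B3 a K2 D := b3_trans (le_sj_right hmed K1 hS23I) (le_sj_left hmed K3 hK2I)
  have hK3D : B3 a K3 D := b3_trans (le_sj_right hmed K1 hS23I) (le_sj_right hmed K2 hK3I)
  have m1 : B3 s D t := oi hmed hs ht hK1D hDst
  have m2 : B3 t D w := oi hmed ht hw hK2D hDtw
  have m3 : B3 s D w := oi hmed hs hw hK3D hDsw
  exact (med_unique hmed m1 m2 m3).symm

/-- median = meet of pairwise joins -/
lemma med_eq_e0 {s t w : X} (hs : B3 a s y) (ht : B3 a t y) (hw : B3 a w y) :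
    med hmed s t w =
      mt hmed a y (sj hmed a y s t) (mt hmed a y (sj hmed a y t w) (sj hmed a y s w)) := by
  set J1 := sj hmed a y s t with hJ1
  set J2 := sj hmed a y t w with hJ2
  set J3 := sj hmed a y s w with hJ3
  have hJ1I : B3 a J1 y := sj_mem hmed t hs
  have hJ2I : B3 a J2 y := sj_mem hmed w ht
  have hJ3I : B3 a J3 y := sj_mem hmed w hs
  set M23 := mt hmed a y J2 J3 with hM23
  have hM23I : B3 a M23 y := mt_mem hmed J3 hJ2I
  set E := mt hmed a y J1 M23 with hE
  have hEI : B3 a E y := mt_mem hmed M23 hJ1I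
  -- meets below E
  have hK1J1 : B3 a (mt hmed a y s t) J1 := b3_trans (le_sj_left hmed t hs) (mt_le_left hmed s t)
  have hK1J2 : B3 a (mt hmed a y s t) J2 := b3_trans (le_sj_left hmed w ht) (mt_le_right hmed s t)
  have hK1J3 : B3 a (mt hmed a y s t) J3 := b3_trans (le_sj_left hmed w hs) (mt_le_left hmed s t)
  have hK2J1 : B3 a (mt hmed a y t w) J1 := b3_trans (le_sj_right hmed s ht) (mt_le_left hmed t w)
  have hK2J2 : B3 a (mt hmed a y t w) J2 := b3_trans (le_sj_left hmed w ht) (mt_le_left hmed t w)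
  have hK2J3 : B3 a (mt hmed a y t w) J3 := b3_trans (le_sj_right hmed s hw) (mt_le_right hmed t w)
  have hK3J1 : B3 a (mt hmed a y s w) J1 := b3_trans (le_sj_left hmed t hs) (mt_le_left hmed s w)
  have hK3J2 : B3 a (mt hmed a y s w) J2 := b3_trans (le_sj_right hmed t hw) (mt_le_right hmed s w)
  have hK3J3 : B3 a (mt hmed a y s w) J3 := b3_trans (le_sj_left hmed w hs) (mt_le_left hmed s w)
  have hK1E : B3 a (mt hmed a y s t) E := le_mt hmed hK1J1 (le_mt hmed hK1J2 hK1J3)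
  have hK2E : B3 a (mt hmed a y t w) E := le_mt hmed hK2J1 (le_mt hmed hK2J2 hK2J3)
  have hK3E : B3 a (mt hmed a y s w) E := le_mt hmed hK3J1 (le_mt hmed hK3J2 hK3J3)
  -- E below each pair join
  have hEst : B3 a E J1 := mt_le_left hmed J1 M23
  have hEtw : B3 a E J2 := b3_trans (mt_le_left hmed J2 J3) (mt_le_right hmed J1 M23)
  have hEsw : B3 a E J3 := b3_trans (mt_le_right hmed J2 J3) (mt_le_right hmed J1 M23)
  have m1 : B3 s E t := oi hmed hs ht hK1E hEst
  have m2 : B3 t E w := oi hmed ht hw hK2E hEtw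
  have m3 : B3 s E w := oi hmed hs hw hK3E hEsw
  exact (med_unique hmed m1 m2 m3).symm

/-- key inequality : x ≤ u ∨ v  →  x ≤ (x∧u) ∨ ((u∧v) ∨ (x∧v)) -/
lemma gen_ineq {x u v : X} (hx : B3 a x y) (hu : B3 a u y) (hv : B3 a v y)
    (h : B3 a x (sj hmed a y u v)) :
    B3 a x (sj hmed a y (mt hmed a y x u) (sj hmed a y (mt hmed a y u v) (mt hmed a y x v))) := by
  have he : B3 a x (mt hmed a y (sj hmed a y x u) (mt hmed a y (sj hmed a y u v) (sj hmed a y x v))) :=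
    le_mt hmed (le_sj_left hmed u hx) (le_mt hmed h (le_sj_left hmed v hx))
  rw [← med_eq_e0 hmed hx hu hv, med_eq_d0 hmed hx hu hv] at he
  exact he

end Distrib

section Distrib2
variable {a y : X}

/-- the distributivity consequence needed for primality -/
lemma distrib_le {f π κ t0 : X} (hf : B3 a f y) (hπ : B3 a π y) (hκ : B3 a κ y)
    (ht0 : B3 a t0 y) (h1 : B3 a (mt hmed a y f π) t0) (h2 : B3 a (mt hmed a y f κ) t0) :
    B3 a (mt hmed a y f (sj hmed a y π κ)) t0 := by
  set x := mt hmed a y f (sj hmed a y π κ) with hxdef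
  have hsjπκ : B3 a (sj hmed a y π κ) y := sj_mem hmed κ hπ
  have hxI : B3 a x y := mt_mem hmed _ hf
  have hxf : B3 a x f := mt_le_left hmed f _
  have hxsup : B3 a x (sj hmed a y π κ) := mt_le_right hmed f _
  have hmπκI : B3 a (mt hmed a y π κ) y := mt_mem hmed κ hπ
  have hmxπI : B3 a (mt hmed a y x π) y := mt_mem hmed π hxI
  have hmxκI : B3 a (mt hmed a y x κ) y := mt_mem hmed κ hxI
  have hmfπI : B3 a (mt hmed a y f π) y := mt_mem hmed π hf
  have hmfκI : B3 a (mt hmed a y f κ) y := mt_mem hmed κ hf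
  set R := sj hmed a y (mt hmed a y f π) (mt hmed a y f κ) with hRdef
  have hRI : B3 a R y := sj_mem hmed _ hmfπI
  have hRt0 : B3 a R t0 := sj_le hmed hmfπI hmfκI ht0 h1 h2
  set S := sj hmed a y R (mt hmed a y π κ) with hSdef
  have hSI : B3 a S y := sj_mem hmed _ hRI
  -- x ≤ D1
  have hgen1 := gen_ineq hmed hxI hπ hκ hxsup
  -- mt x π ≤ mt f π ≤ R ≤ S ; mt x κ ≤ mt f κ ≤ R ≤ S ; mt π κ ≤ S
  have hxπfπ : B3 a (mt hmed a y x π) (mt hmed a y f π) :=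
    le_mt hmed (b3_trans hxf (mt_le_left hmed x π)) (mt_le_right hmed x π)
  have hxκfκ : B3 a (mt hmed a y x κ) (mt hmed a y f κ) :=
    le_mt hmed (b3_trans hxf (mt_le_left hmed x κ)) (mt_le_right hmed x κ)
  have hfπR : B3 a (mt hmed a y f π) R := le_sj_left hmed _ hmfπI
  have hfκR : B3 a (mt hmed a y f κ) R := le_sj_right hmed _ hmfκI
  have hRS : B3 a R S := le_sj_left hmed _ hRI
  have hxπS : B3 a (mt hmed a y x π) S := b3_trans hRS (b3_trans hfπR hxπfπ)
  have hxκS : B3 a (mt hmed a y x κ) S := b3_trans hRS (b3_trans hfκR hxκfκ)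
  have hπκS : B3 a (mt hmed a y π κ) S := le_sj_right hmed _ hmπκI
  have hD1S : B3 a (sj hmed a y (mt hmed a y x π)
      (sj hmed a y (mt hmed a y π κ) (mt hmed a y x κ))) S :=
    sj_le hmed hmxπI (sj_mem hmed _ hmπκI) hSI hxπS
      (sj_le hmed hmπκI hmxκI hSI hπκS hxκS)
  have hxS : B3 a x S := b3_trans hD1S hgen1
  -- second application
  have hgen2 := gen_ineq hmed hxI hRI hmπκI hxS
  -- components of D2 are ≤ t0
  have hxRt0 : B3 a (mt hmed a y x R) t0 := b3_trans hRt0 (mt_le_right hmed x R)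
  have hRπκt0 : B3 a (mt hmed a y R (mt hmed a y π κ)) t0 :=
    b3_trans hRt0 (mt_le_left hmed R _)
  have hxπκfπ : B3 a (mt hmed a y x (mt hmed a y π κ)) (mt hmed a y f π) :=
    le_mt hmed (b3_trans hxf (mt_le_left hmed x _))
      (b3_trans (mt_le_left hmed π κ) (mt_le_right hmed x _))
  have hxπκt0 : B3 a (mt hmed a y x (mt hmed a y π κ)) t0 := b3_trans h1 hxπκfπ
  have hD2t0 : B3 a (sj hmed a y (mt hmed a y x R)
      (sj hmed a y (mt hmed a y R (mt hmed a y π κ)) (mt hmed a y x (mt hmed a y π κ)))) t0 :=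
    sj_le hmed (mt_mem hmed R hxI)
      (sj_mem hmed _ (mt_mem hmed _ hRI)) ht0 hxRt0
      (sj_le hmed (mt_mem hmed _ hRI) (mt_mem hmed _ hxI) ht0 hRπκt0 hxπκt0)
  exact b3_trans hD2t0 hgen2

end Distrib2

section Proj
variable {a y : X}

lemma prj_mem (z : X) : B3 a (prj hmed a y z) y := med_b1 hmed a y z

lemma prj_gate {w : X} (z : X) (hw : B3 a w y) : B3 z (prj hmed a y z) w :=
  gate hmed a y z w hw

lemma prj_fix {z : X} (hz : B3 a z y) : prj hmed a y z = z :=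
  (med_unique hmed hz (b3_abb y z) (b3_abb a z)).symm

lemma prj_dist_le (z : X) : dist a (prj hmed a y z) ≤ dist a z := by
  have h : B3 a (prj hmed a y z) z := med_b3 hmed a y z
  unfold B3 at h
  linarith [dist_nonneg (x := prj hmed a y z) (y := z)]

/-- `prj z ≤ J ↔ J ∈ [z,y]` -/
lemma prj_le_iff {z J : X} (hJ : B3 a J y) :
    B3 a (prj hmed a y z) J ↔ B3 z J y := by
  set g := prj hmed a y z with hg
  have hga : B3 z g a := prj_gate hmed z (b3_aab a y)
  have hgy : B3 z g y := prj_gate hmed z (b3_abb a y)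
  have hgJ : B3 z g J := prj_gate hmed z hJ
  have hgI : B3 a g y := prj_mem hmed z
  have c1 : dist g a = dist a g := dist_comm _ _
  constructor
  · intro h
    unfold B3 at *
    linarith
  · intro h
    unfold B3 at *
    linarith

/-- `K ≤ prj z ↔ K ∈ [a,z]` -/
lemma le_prj_iff {z K : X} (hK : B3 a K y) :
    B3 a K (prj hmed a y z) ↔ B3 a K z := by
  set g := prj hmed a y z with hg
  have hga : B3 z g a := prj_gate hmed z (b3_aab a y)
  have hgK : B3 z g K := prj_gate hmed z hK
  have c1 : dist g a = dist a g := dist_comm _ _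
  have c2 : dist g K = dist K g := dist_comm _ _
  have c3 : dist K z = dist z K := dist_comm _ _
  have c4 : dist g z = dist z g := dist_comm _ _
  have c5 : dist z a = dist a z := dist_comm _ _
  constructor
  · intro h
    have t1 := dist_triangle a K z
    have t2 := dist_triangle K g z
    unfold B3 at *
    linarith
  · intro h
    unfold B3 at *
    linarith

end Proj

section Filters
variable {a y : X}

/-- filter in the interval lattice [a,y], containing s0, avoiding the ideal below t0 -/
def Flt (hmed : IsMedianSpace X) (a y s0 t0 : X) (F : Set X) : Prop :=
  (∀ w ∈ F, B3 a w y) ∧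
  (∀ s ∈ F, ∀ t, B3 a t y → B3 a s t → t ∈ F) ∧
  (∀ s ∈ F, ∀ t ∈ F, mt hmed a y s t ∈ F) ∧
  s0 ∈ F ∧
  (∀ w ∈ F, ¬ B3 a w t0)

lemma exists_halfspace {s0 t0 : X} (hs0 : B3 a s0 y) (ht0 : B3 a t0 y)
    (hnle : ¬ B3 a s0 t0) :
    ∃ H : Set X, IsHalfspace H ∧ y ∈ H ∧ a ∉ H ∧ s0 ∈ H ∧
      (∀ w, B3 a w y → B3 a w t0 → w ∉ H) := by
  classical
  set S : Set (Set X) := {F | Flt hmed a y s0 t0 F} with hS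
  -- base filter
  have hbase : {w | B3 a w y ∧ B3 a s0 w} ∈ S := by
    refine ⟨fun w hw => hw.1, fun s hs t htI hst => ⟨htI, b3_trans hst hs.2⟩,
      fun s hs t ht => ⟨mt_mem hmed t hs.1, le_mt hmed hs.2 ht.2⟩,
      ⟨hs0, b3_abb a s0⟩, fun w hw hwt => hnle (b3_trans hwt hw.2)⟩
  obtain ⟨M, hbaseM, hMmax⟩ := zorn_subset_nonempty S (fun c hcS hchain hcne => by
    refine ⟨⋃₀ c, ⟨?_, ?_, ?_, ?_, ?_⟩, fun s hs => Set.subset_sUnion_of_mem hs⟩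
    · rintro w ⟨F, hF, hwF⟩
      exact (hcS hF).1 w hwF
    · rintro s ⟨F, hF, hsF⟩ t htI hst
      exact ⟨F, hF, (hcS hF).2.1 s hsF t htI hst⟩
    · rintro s ⟨F, hF, hsF⟩ t ⟨G, hG, htG⟩
      rcases hchain.total hF hG with h | h
      · exact ⟨G, hG, (hcS hG).2.2.1 s (h hsF) t htG⟩
      · exact ⟨F, hF, (hcS hF).2.2.1 s hsF t (h htG)⟩
    · obtain ⟨F, hF⟩ := hcne
      exact ⟨F, hF, (hcS hF).2.2.2.1⟩
    · rintro w ⟨F, hF, hwF⟩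
      exact (hcS hF).2.2.2.2 w hwF) _ hbase
  have hM : Flt hmed a y s0 t0 M := hMmax.prop
  -- primality
  have hprime : ∀ π κ, B3 a π y → B3 a κ y → sj hmed a y π κ ∈ M → π ∈ M ∨ κ ∈ M := by
    intro π κ hπI hκI hsup
    by_contra hcon
    push_neg at hcon
    obtain ⟨hπM, hκM⟩ := hcon
    -- enlarged filters must violate disjointness
    have key : ∀ ρ : X, B3 a ρ y → ρ ∉ M →
        ∃ f ∈ M, B3 a (mt hmed a y f ρ) t0 := by
      intro ρ hρI hρM
      by_contra hno
      push_neg at hno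
      set F' : Set X := {w | B3 a w y ∧ ∃ f ∈ M, B3 a (mt hmed a y f ρ) w} with hF'
      have hMF' : M ⊆ F' := fun w hw =>
        ⟨hM.1 w hw, w, hw, mt_le_left hmed w ρ⟩
      have hF'S : F' ∈ S := by
        refine ⟨fun w hw => hw.1, ?_, ?_, hMF' hM.2.2.2.1, ?_⟩
        · rintro s ⟨hsI, f, hf, hfs⟩ t htI hst
          exact ⟨htI, f, hf, b3_trans hst hfs⟩
        · rintro s ⟨hsI, f, hf, hfs⟩ t ⟨htI, g, hg, hgt⟩
          refine ⟨mt_mem hmed t hsI, mt hmed a y f g, hM.2.2.1 f hf g hg, ?_⟩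
          have h1 : B3 a (mt hmed a y (mt hmed a y f g) ρ) s :=
            b3_trans hfs (le_mt hmed
              (b3_trans (mt_le_left hmed f g) (mt_le_left hmed _ ρ))
              (mt_le_right hmed _ ρ))
          have h2 : B3 a (mt hmed a y (mt hmed a y f g) ρ) t :=
            b3_trans hgt (le_mt hmed
              (b3_trans (mt_le_right hmed f g) (mt_le_left hmed _ ρ))
              (mt_le_right hmed _ ρ))
          exact le_mt hmed h1 h2
        · rintro w ⟨hwI, f, hf, hfw⟩ hwt0
          exact hno f hf (b3_trans hwt0 hfw)
      have : F' ⊆ M := hMmax.2 hF'S hMF'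
      exact hρM (this ⟨hρI, s0, hM.2.2.2.1, mt_le_right hmed s0 ρ⟩)
    obtain ⟨f1, hf1, hf1π⟩ := key π hπI hπM
    obtain ⟨f2, hf2, hf2κ⟩ := key κ hκI hκM
    set f := mt hmed a y f1 f2 with hfdef
    have hfM : f ∈ M := hM.2.2.1 f1 hf1 f2 hf2
    have hfI : B3 a f y := hM.1 f hfM
    have h1 : B3 a (mt hmed a y f π) t0 :=
      b3_trans hf1π (le_mt hmed
        (b3_trans (mt_le_left hmed f1 f2) (mt_le_left hmed f π))
        (mt_le_right hmed f π))
    have h2 : B3 a (mt hmed a y f κ) t0 :=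
      b3_trans hf2κ (le_mt hmed
        (b3_trans (mt_le_right hmed f1 f2) (mt_le_left hmed f κ))
        (mt_le_right hmed f κ))
    have hd : B3 a (mt hmed a y f (sj hmed a y π κ)) t0 :=
      distrib_le hmed hfI hπI hκI ht0 h1 h2
    have hmem : mt hmed a y f (sj hmed a y π κ) ∈ M :=
      hM.2.2.1 f hfM _ hsup
    exact hM.2.2.2.2 _ hmem hd
  -- the halfspace
  refine ⟨{z | prj hmed a y z ∈ M}, ⟨?_, ?_⟩, ?_, ?_, ?_, ?_⟩
  · -- convex
    intro z₁ hz₁ z₂ hz₂ ξ hξ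
    rw [mem_iff_B3] at hξ
    set K := mt hmed a y (prj hmed a y z₁) (prj hmed a y z₂) with hK
    have hKM : K ∈ M := hM.2.2.1 _ hz₁ _ hz₂
    have hKI : B3 a K y := hM.1 _ hKM
    have h1 : B3 a K z₁ := (le_prj_iff hmed hKI).1 (mt_le_left hmed _ _)
    have h2 : B3 a K z₂ := (le_prj_iff hmed hKI).1 (mt_le_right hmed _ _)
    have h3 : B3 a K ξ := (ystar hmed h1.symm h2.symm hξ).symm
    exact hM.2.1 K hKM _ (prj_mem hmed ξ) ((le_prj_iff hmed hKI).2 h3)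
  · -- complement convex
    intro z₁ hz₁ z₂ hz₂ ξ hξ
    rw [mem_iff_B3] at hξ
    intro hcon
    set J := sj hmed a y (prj hmed a y z₁) (prj hmed a y z₂) with hJ
    have hJI : B3 a J y := sj_mem hmed _ (prj_mem hmed z₁)
    have h1 : B3 z₁ J y := (prj_le_iff hmed hJI).1 (le_sj_left hmed _ (prj_mem hmed z₁))
    have h2 : B3 z₂ J y := (prj_le_iff hmed hJI).1 (le_sj_right hmed _ (prj_mem hmed z₂))
    have h3 : B3 ξ J y := ystar hmed h1 h2 hξ
    have hJM : J ∈ M :=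
      hM.2.1 _ hcon J hJI ((prj_le_iff hmed hJI).2 h3)
    rcases hprime _ _ (prj_mem hmed z₁) (prj_mem hmed z₂) hJM with h | h
    · exact hz₁ h
    · exact hz₂ h
  · -- y ∈ H
    show prj hmed a y y ∈ M
    rw [prj_fix hmed (b3_abb a y)]
    exact hM.2.1 s0 hM.2.2.2.1 y (b3_abb a y) hs0
  · -- a ∉ H
    show prj hmed a y a ∉ M
    rw [prj_fix hmed (b3_aab a y)]
    intro hcon
    exact hM.2.2.2.2 a hcon (b3_aab a t0)
  · -- s0 ∈ H
    show prj hmed a y s0 ∈ M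
    rw [prj_fix hmed hs0]
    exact hM.2.2.2.1
  · -- w ≤ t0 implies w ∉ H
    intro w hwI hwt0
    show prj hmed a y w ∉ M
    rw [prj_fix hmed hwI]
    intro hcon
    exact hM.2.2.2.2 w hcon hwt0

end Filters

omit hmed in
lemma b3_antisymm {a s t : X} (h1 : B3 a s t) (h2 : B3 a t s) : s = t := by
  have h3 : dist s t = 0 := by
    have c1 : dist t s = dist s t := dist_comm _ _
    unfold B3 at h1 h2
    linarith
  exact eq_of_dist_eq_zero h3

/-- fold join over a list, with bottom element `a` -/
noncomputable def jn (a y : X) (l : List X) : X := l.foldr (sj hmed a y) a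

@[simp] lemma jn_nil (a y : X) : jn hmed a y [] = a := rfl

@[simp] lemma jn_cons (a y x : X) (l : List X) :
    jn hmed a y (x :: l) = sj hmed a y x (jn hmed a y l) := rfl

section JoinLemmas
variable {a y : X}

lemma jn_mem {l : List X} (h : ∀ x ∈ l, B3 a x y) : B3 a (jn hmed a y l) y := by
  induction l with
  | nil => exact b3_aab a y
  | cons x l ih =>
    rw [jn_cons]
    exact sj_mem hmed _ (h x (List.mem_cons_self))

lemma le_jn {l : List X} (h : ∀ x ∈ l, B3 a x y) {x : X} (hx : x ∈ l) :
    B3 a x (jn hmed a y l) := by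
  induction l with
  | nil => exact absurd hx List.not_mem_nil
  | cons z l ih =>
    rw [jn_cons]
    rcases List.mem_cons.1 hx with rfl | hx'
    · exact le_sj_left hmed _ (h x (List.mem_cons_self))
    · have h' : ∀ w ∈ l, B3 a w y := fun w hw => h w (List.mem_cons_of_mem z hw)
      exact b3_trans (le_sj_right hmed z (jn_mem hmed h')) (ih h' hx')

lemma jn_le {l : List X} (h : ∀ x ∈ l, B3 a x y) {w : X} (hw : B3 a w y)
    (hlw : ∀ x ∈ l, B3 a x w) : B3 a (jn hmed a y l) w := by
  induction l with
  | nil => exact b3_aab a w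
  | cons z l ih =>
    rw [jn_cons]
    have h' : ∀ x ∈ l, B3 a x y := fun x hx => h x (List.mem_cons_of_mem z hx)
    exact sj_le hmed (h z (List.mem_cons_self)) (jn_mem hmed h') hw
      (hlw z (List.mem_cons_self))
      (ih h' (fun x hx => hlw x (List.mem_cons_of_mem z hx)))

lemma dist_jn_le {l : List X} {r : ℝ} (h : ∀ x ∈ l, B3 a x y) (hr : ∀ x ∈ l, dist a x ≤ r) :
    dist a (jn hmed a y l) ≤ l.length * r := by
  induction l with
  | nil => simp
  | cons z l ih =>
    rw [jn_cons]
    have h' : ∀ x ∈ l, B3 a x y := fun x hx => h x (List.mem_cons_of_mem z hx)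
    have hr' : ∀ x ∈ l, dist a x ≤ r := fun x hx => hr x (List.mem_cons_of_mem z hx)
    have h1 := dist_a_sj_le hmed (h z (List.mem_cons_self)) (jn_mem hmed h')
    have h2 := hr z (List.mem_cons_self)
    have h3 := ih h' hr'
    have : ((z :: l).length : ℝ) * r = r + l.length * r := by
      push_cast [List.length_cons]
      ring
    rw [this]
    linarith

end JoinLemmas

end MedianHull

section ListAux
variable {α : Type*}

lemma mem_of_mem_eraseIdx' : ∀ {l : List α} {i : ℕ} {x : α}, x ∈ l.eraseIdx i → x ∈ l := by
  intro l
  induction l with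
  | nil => intro i x hx; simp [List.eraseIdx] at hx
  | cons z l ih =>
    intro i x hx
    cases i with
    | zero => exact List.mem_cons_of_mem z hx
    | succ i =>
      rw [List.eraseIdx_cons_succ] at hx
      rcases List.mem_cons.1 hx with rfl | hx'
      · exact List.mem_cons_self
      · exact List.mem_cons_of_mem z (ih hx')

lemma get_or_mem_eraseIdx : ∀ {l : List α} {i : ℕ} (hi : i < l.length) {x : α}, x ∈ l →
    x = l.get ⟨i, hi⟩ ∨ x ∈ l.eraseIdx i := by
  intro l
  induction l with
  | nil => intro i hi; simp at hi
  | cons z l ih =>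
    intro i hi x hx
    cases i with
    | zero =>
      rcases List.mem_cons.1 hx with rfl | hx'
      · exact Or.inl rfl
      · exact Or.inr (by simpa [List.eraseIdx_cons_zero] using hx')
    | succ i =>
      rcases List.mem_cons.1 hx with rfl | hx'
      · exact Or.inr (by rw [List.eraseIdx_cons_succ]; exact List.mem_cons_self)
      · have hi' : i < l.length := by simpa using Nat.lt_of_succ_lt_succ hi
        rcases ih hi' hx' with h | h
        · exact Or.inl (by simpa using h)
        · exact Or.inr (by rw [List.eraseIdx_cons_succ]; exact List.mem_cons_of_mem z h)

lemma get_mem_eraseIdx : ∀ {l : List α} {i j : ℕ} (hi : i < l.length) (_ : j < l.length),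
    i ≠ j → l.get ⟨i, hi⟩ ∈ l.eraseIdx j := by
  intro l
  induction l with
  | nil => intro i j hi; simp at hi
  | cons z l ih =>
    intro i j hi hj hij
    cases i with
    | zero =>
      cases j with
      | zero => exact absurd rfl hij
      | succ j =>
        rw [List.eraseIdx_cons_succ]
        exact List.mem_cons_self
    | succ i =>
      have hi' : i < l.length := Nat.lt_of_succ_lt_succ hi
      cases j with
      | zero =>
        rw [List.eraseIdx_cons_zero]
        simpa using List.get_mem l ⟨i, hi'⟩
      | succ j =>
        have hj' : j < l.length := Nat.lt_of_succ_lt_succ hj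
        rw [List.eraseIdx_cons_succ]
        exact List.mem_cons_of_mem z (by simpa using ih hi' hj' (fun h => hij (by rw [h])))

end ListAux

section HullAux
variable {X : Type*} [MetricSpace X]

lemma subset_mConvexHull {A : Set X} : A ⊆ mConvexHull A :=
  fun _ hx => Set.mem_sInter.2 fun _ hC => hC.2 hx

lemma mConvexHull_convex {A : Set X} : MConvex (mConvexHull A) := by
  intro u hu w hw ξ hξ
  exact Set.mem_sInter.2 fun C hC =>
    hC.1 u (Set.mem_sInter.1 hu C hC) w (Set.mem_sInter.1 hw C hC) hξ

lemma mConvexHull_min {A C : Set X} (hC : MConvex C) (hAC : A ⊆ C) : mConvexHull A ⊆ C :=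
  fun _ hx => Set.mem_sInter.1 hx C ⟨hC, hAC⟩

lemma mConvexHull_mono {A B : Set X} (h : A ⊆ B) : mConvexHull A ⊆ mConvexHull B :=
  fun _ hx => Set.mem_sInter.2 fun C hC => Set.mem_sInter.1 hx C ⟨hC.1, h.trans hC.2⟩

end HullAux


open MedianHull

/-- In a median space of rank `n`, the convex hull of the closed ball `B(a,r)`
is contained in the closed ball `B(a, n·r)`. -/
theorem statement2 (X : Type*) [MetricSpace X] (hmed : IsMedianSpace X)
    (n : ℕ) (hrank : HasMedianRank X n) (a : X) (r : ℝ) (hr : 0 < r) :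
    mConvexHull (Metric.closedBall a r) ⊆ Metric.closedBall a (n * r) := by
  classical
  intro y hy
  rw [Metric.mem_closedBall]
  by_contra hgt
  push_neg at hgt
  have hgt' : (n : ℝ) * r < dist a y := by rwa [dist_comm] at hgt
  -- Step 1 : y is in the hull of a finite subset of the ball
  have hfin : ∃ F : Finset X, ↑F ⊆ Metric.closedBall a r ∧ y ∈ mConvexHull (↑F : Set X) := by
    have hC : MConvex {z | ∃ F : Finset X,
        ↑F ⊆ Metric.closedBall a r ∧ z ∈ mConvexHull (↑F : Set X)} := by
      rintro z₁ ⟨F₁, hF₁, hz₁⟩ z₂ ⟨F₂, hF₂, hz₂⟩ ξ hξ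
      refine ⟨F₁ ∪ F₂, ?_, ?_⟩
      · rw [Finset.coe_union]
        exact Set.union_subset hF₁ hF₂
      · have h1 : z₁ ∈ mConvexHull (↑(F₁ ∪ F₂) : Set X) :=
          mConvexHull_mono (by rw [Finset.coe_union]; exact Set.subset_union_left) hz₁
        have h2 : z₂ ∈ mConvexHull (↑(F₁ ∪ F₂) : Set X) :=
          mConvexHull_mono (by rw [Finset.coe_union]; exact Set.subset_union_right) hz₂
        exact mConvexHull_convex z₁ h1 z₂ h2 hξ
    have hsub : Metric.closedBall a r ⊆ {z | ∃ F : Finset X,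
        ↑F ⊆ Metric.closedBall a r ∧ z ∈ mConvexHull (↑F : Set X)} := by
      intro b hb
      exact ⟨{b}, by simpa using hb, subset_mConvexHull (by simp)⟩
    exact mConvexHull_min hC hsub hy
  obtain ⟨F, hFball, hyF⟩ := hfin
  -- Step 2 : project the finite set to the interval [a,y]
  set L0 : List X := F.toList.map (prj hmed a y) with hL0
  have hL0p : ∀ x ∈ L0, B3 a x y ∧ dist a x ≤ r := by
    intro x hx
    rw [hL0, List.mem_map] at hx
    obtain ⟨b, hbF, rfl⟩ := hx
    have hb : b ∈ Metric.closedBall a r := hFball (Finset.mem_toList.1 hbF)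
    rw [Metric.mem_closedBall] at hb
    refine ⟨prj_mem hmed b, le_trans (prj_dist_le hmed b) ?_⟩
    rwa [dist_comm]
  -- Step 3 : y is the join of the projections
  have hjn0 : jn hmed a y L0 = y := by
    have hJI : B3 a (jn hmed a y L0) y := jn_mem hmed (fun x hx => (hL0p x hx).1)
    have hCs : MConvex {z | B3 z (jn hmed a y L0) y} :=
      fun z₁ h₁ z₂ h₂ ξ hξ => ystar hmed h₁ h₂ hξ
    have hsub : (↑F : Set X) ⊆ {z | B3 z (jn hmed a y L0) y} := by
      intro b hb
      have hmem : prj hmed a y b ∈ L0 := by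
        rw [hL0, List.mem_map]
        exact ⟨b, Finset.mem_toList.2 hb, rfl⟩
      have hle : B3 a (prj hmed a y b) (jn hmed a y L0) :=
        le_jn hmed (fun x hx => (hL0p x hx).1) hmem
      exact (prj_le_iff hmed hJI).1 hle
    have hyS : B3 y (jn hmed a y L0) y := mConvexHull_min hCs hsub hyF
    have h0 : dist (jn hmed a y L0) y = 0 := by
      unfold B3 at hyS
      have := dist_nonneg (x := y) (y := jn hmed a y L0)
      have := dist_nonneg (x := jn hmed a y L0) (y := y)
      simp only [dist_self] at hyS
      linarith
    have := eq_of_dist_eq_zero h0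
    exact this
  -- Step 4 : minimal length representation
  set P : ℕ → Prop := fun m => ∃ l : List X,
    (∀ x ∈ l, B3 a x y ∧ dist a x ≤ r) ∧ jn hmed a y l = y ∧ l.length = m with hP
  have hPne : {m | P m}.Nonempty := ⟨L0.length, L0, hL0p, hjn0, rfl⟩
  set m0 := sInf {m | P m} with hm0def
  have hm0 : P m0 := Nat.sInf_mem hPne
  obtain ⟨l, hlp, hljn, hllen⟩ := hm0
  have hlI : ∀ x ∈ l, B3 a x y := fun x hx => (hlp x hx).1
  have hvy : dist a y ≤ (m0 : ℝ) * r := by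
    rw [← hljn, ← hllen]
    exact dist_jn_le hmed hlI (fun x hx => (hlp x hx).2)
  have hm0n : n + 1 ≤ m0 := by
    by_contra h
    push_neg at h
    have h' : m0 ≤ n := Nat.lt_succ_iff.mp h
    have : (m0 : ℝ) * r ≤ (n : ℝ) * r := by
      apply mul_le_mul_of_nonneg_right _ hr.le
      exact_mod_cast h'
    linarith
  -- Step 5 : halfspaces
  have hidx : ∀ i : Fin (n + 1), (i : ℕ) < l.length := by
    intro i
    rw [hllen]
    exact lt_of_lt_of_le i.2 hm0n
  have hH : ∀ i : Fin (n + 1), ∃ H : Set X, IsHalfspace H ∧ y ∈ H ∧ a ∉ H ∧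
      l.get ⟨i, hidx i⟩ ∈ H ∧
      (∀ w, B3 a w y → B3 a w (jn hmed a y (l.eraseIdx i)) → w ∉ H) := by
    intro i
    set s := l.get ⟨i, hidx i⟩ with hs
    set t := jn hmed a y (l.eraseIdx (i : ℕ)) with ht
    have hsI : B3 a s y := hlI s (List.get_mem l _)
    have heI : ∀ x ∈ l.eraseIdx (i : ℕ), B3 a x y :=
      fun x hx => hlI x (mem_of_mem_eraseIdx' hx)
    have htI : B3 a t y := jn_mem hmed heI
    have hnle : ¬ B3 a s t := by
      intro hle
      have hyt : B3 a y t := by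
        rw [← hljn]
        refine jn_le hmed hlI htI ?_
        intro x hx
        rcases get_or_mem_eraseIdx (hidx i) hx with h | h
        · rw [h, ← hs]; exact hle
        · exact le_jn hmed heI h
      have hty : t = y := b3_antisymm htI hyt
      have hP' : P (l.eraseIdx (i : ℕ)).length :=
        ⟨l.eraseIdx (i : ℕ), fun x hx => hlp x (mem_of_mem_eraseIdx' hx), hty, rfl⟩
      have hle' : m0 ≤ (l.eraseIdx (i : ℕ)).length := Nat.sInf_le hP'
      have hlen' : (l.eraseIdx (i : ℕ)).length + 1 = l.length :=
        List.length_eraseIdx_add_one (hidx i)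
      omega
    exact exists_halfspace hmed hsI htI hnle
  choose H hHhs hHy hHa hHs hHt using hH
  -- Step 6 : transversality, contradiction with rank
  apply hrank.2
  refine ⟨H, hHhs, ?_⟩
  intro i j hij
  have hvij : (i : ℕ) ≠ (j : ℕ) := fun h => hij (Fin.ext h)
  have hmemj : l.get ⟨j, hidx j⟩ ∉ H i := by
    apply hHt i _ (hlI _ (List.get_mem l _))
    exact le_jn hmed (fun x hx => hlI x (mem_of_mem_eraseIdx' hx))
      (get_mem_eraseIdx (hidx j) (hidx i) (Ne.symm hvij))
  have hmemi : l.get ⟨i, hidx i⟩ ∉ H j := by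
    apply hHt j _ (hlI _ (List.get_mem l _))
    exact le_jn hmed (fun x hx => hlI x (mem_of_mem_eraseIdx' hx))
      (get_mem_eraseIdx (hidx i) (hidx j) hvij)
  exact ⟨⟨y, hHy i, hHy j⟩,
    ⟨l.get ⟨j, hidx j⟩, hmemj, hHs j⟩,
    ⟨l.get ⟨i, hidx i⟩, hHs i, hmemi⟩,
    ⟨a, hHa i, hHa j⟩⟩
end

section
/- Let X be a complete connected median space of finite rank and let a, b ∈ X with a ≠ b. Then there exists a halfspace h of X with b ∈ h, a ∈ hᶜ and d(a, h) = 0. Consequently, for every a ∈ X, the intersection of all halfspaces h with a ∈ h and a ∈ closure(h) ∩ closure(hᶜ) equals {a}. -/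
namespace MedianWork

variable {X : Type*} [MetricSpace X]

lemma med_exists (hmed : IsMedianSpace X) (a b c : X) :
    ∃ m : X, (dist a m + dist m b = dist a b) ∧ (dist b m + dist m c = dist b c) ∧
      (dist a m + dist m c = dist a c) ∧
      ∀ n : X, (dist a n + dist n b = dist a b) → (dist b n + dist n c = dist b c) →
        (dist a n + dist n c = dist a c) → n = m := by
  obtain ⟨m, ⟨⟨h1, h2⟩, h3⟩, hu⟩ := hmed a b c
  exact ⟨m, h1, h2, h3, fun n n1 n2 n3 => hu n ⟨⟨n1, n2⟩, n3⟩⟩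

/-- M1: intervals are convex. -/
lemma btw_interval (hmed : IsMedianSpace X) {a b x y r : X}
    (hx : dist a x + dist x b = dist a b)
    (hy : dist a y + dist y b = dist a b)
    (hr : dist x r + dist r y = dist x y) :
    dist a r + dist r b = dist a b := by
  obtain ⟨e, he1, he2, he3, -⟩ := med_exists hmed a x r
  obtain ⟨f, hf1, hf2, hf3, -⟩ := med_exists hmed b y r
  obtain ⟨e2, hg1, hg2, hg3, -⟩ := med_exists hmed a y r
  obtain ⟨f2, hh1, hh2, hh3, -⟩ := med_exists hmed b x r
  obtain ⟨k, hk1, hk2, hk3, -⟩ := med_exists hmed r e2 f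
  obtain ⟨k4, hl1, hl2, hl3, -⟩ := med_exists hmed r e f2
  have hd1 : dist a e + dist e b = dist a b := by linarith [dist_triangle a e b, dist_triangle e x b, he1, hx, dist_comm a b, dist_comm a e, dist_comm a x, dist_comm b e, dist_comm b x, dist_comm e x]
  have hd2 : dist a e2 + dist e2 b = dist a b := by linarith [dist_triangle a e2 b, dist_triangle e2 y b, hg1, hy, dist_comm a b, dist_comm a e2, dist_comm a y, dist_comm b e2, dist_comm b y, dist_comm e2 y]
  have hd3 : dist b y + dist y e2 = dist b e2 := by linarith [dist_triangle b y e2, dist_triangle a e2 b, hg1, hy, dist_comm a b, dist_comm a e2, dist_comm a y, dist_comm b e2, dist_comm b y, dist_comm e2 y]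
  have hd4 : dist b x + dist x e = dist b e := by linarith [dist_triangle b x e, dist_triangle a e b, he1, hx, dist_comm a b, dist_comm a e, dist_comm a x, dist_comm b e, dist_comm b x, dist_comm e x]
  have hd6 : dist a x + dist x f2 = dist a f2 := by linarith [dist_triangle a x f2, dist_triangle a f2 b, hh1, hx, dist_comm a b, dist_comm a f2, dist_comm a x, dist_comm b f2, dist_comm b x, dist_comm f2 x]
  have hd5 : dist a y + dist y f = dist a f := by linarith [dist_triangle a y f, dist_triangle a f b, hf1, hy, dist_comm a b, dist_comm a f, dist_comm a y, dist_comm b f, dist_comm b y, dist_comm f y]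
  have hd7 : dist e x + dist x f2 = dist e f2 := by linarith [dist_triangle e x f2, dist_triangle a e f2, hd6, he1, dist_comm a e, dist_comm a f2, dist_comm a x, dist_comm e f2, dist_comm e x, dist_comm f2 x]
  have hd8 : dist f y + dist y e2 = dist f e2 := by linarith [dist_triangle f y e2, dist_triangle b f e2, hd3, hf1, dist_comm b f, dist_comm b e2, dist_comm b y, dist_comm f e2, dist_comm f y, dist_comm e2 y]
  have hd9 : dist b f2 + dist f2 e = dist b e := by linarith [hd7, hh1, hd4, dist_comm b e, dist_comm b f2, dist_comm b x, dist_comm e f2, dist_comm e x, dist_comm f2 x]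
  have hd10 : dist b f + dist f e2 = dist b e2 := by linarith [hd8, hf1, hd3, dist_comm b f, dist_comm b e2, dist_comm b y, dist_comm f e2, dist_comm f y, dist_comm e2 y]
  have hd11 : dist e r + dist r e2 = dist e e2 := by linarith [dist_triangle e r e2, dist_triangle x e e2, dist_triangle x e2 y, he2, hg2, hr, dist_comm e e2, dist_comm e r, dist_comm e x, dist_comm e y, dist_comm e2 r, dist_comm e2 x, dist_comm e2 y, dist_comm r x, dist_comm r y, dist_comm x y]
  have hd15 : dist a e2 + dist e2 k = dist a k := by linarith [dist_triangle a e2 k, dist_triangle a k r, hg3, hk1, dist_comm a e2, dist_comm a k, dist_comm a r, dist_comm e2 k, dist_comm e2 r, dist_comm k r]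
  have hd17 : dist b f + dist f k = dist b k := by linarith [dist_triangle b f k, dist_triangle b k r, hf3, hk3, dist_comm b f, dist_comm b k, dist_comm b r, dist_comm f k, dist_comm f r, dist_comm k r]
  have hd18 : dist a k + dist k b = dist a b := by linarith [dist_triangle a e2 k, dist_triangle k f b, hk2, hd2, hd10, dist_comm a b, dist_comm a e2, dist_comm a f, dist_comm a k, dist_comm b e2, dist_comm b f, dist_comm b k, dist_comm e2 f, dist_comm e2 k, dist_comm f k]
  have hd19 : dist a k + dist k r = dist a r := by linarith [hd15, hk1, hg3, dist_comm a e2, dist_comm a k, dist_comm a r, dist_comm e2 k, dist_comm e2 r, dist_comm k r]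
  have hd20 : dist b k + dist k r = dist b r := by linarith [hd17, hk3, hf3, dist_comm b f, dist_comm b k, dist_comm b r, dist_comm f k, dist_comm f r, dist_comm k r]
  have hd21 : dist a e + dist e k4 = dist a k4 := by linarith [dist_triangle a e k4, dist_triangle a k4 r, he3, hl1, dist_comm a e, dist_comm a k4, dist_comm a r, dist_comm e k4, dist_comm e r, dist_comm k4 r]
  have hd22 : dist b f2 + dist f2 k4 = dist b k4 := by linarith [dist_triangle b f2 k4, dist_triangle b k4 r, hh3, hl3, dist_comm b f2, dist_comm b k4, dist_comm b r, dist_comm f2 k4, dist_comm f2 r, dist_comm k4 r]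
  have hd23 : dist a k4 + dist k4 b = dist a b := by linarith [dist_triangle a e k4, dist_triangle k4 f2 b, hl2, hd1, hd9, dist_comm a b, dist_comm a e, dist_comm a f2, dist_comm a k4, dist_comm b e, dist_comm b f2, dist_comm b k4, dist_comm e f2, dist_comm e k4, dist_comm f2 k4]
  have hd24 : dist a k4 + dist k4 r = dist a r := by linarith [hd21, hl1, he3, dist_comm a e, dist_comm a k4, dist_comm a r, dist_comm e k4, dist_comm e r, dist_comm k4 r]
  have hd25 : dist b k4 + dist k4 r = dist b r := by linarith [hd22, hl3, hh3, dist_comm b f2, dist_comm b k4, dist_comm b r, dist_comm f2 k4, dist_comm f2 r, dist_comm k4 r]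
  have hkk4 : k = k4 := by
    refine (hmed r a b).unique ⟨⟨?_, ?_⟩, ?_⟩ ⟨⟨?_, ?_⟩, ?_⟩
    · show dist r k + dist k a = dist r a
      linarith [hd19, dist_comm r k, dist_comm k a, dist_comm r a]
    · exact hd18
    · show dist r k + dist k b = dist r b
      linarith [hd20, dist_comm r k, dist_comm k b, dist_comm r b]
    · show dist r k4 + dist k4 a = dist r a
      linarith [hd24, dist_comm r k4, dist_comm k4 a, dist_comm r a]
    · exact hd23
    · show dist r k4 + dist k4 b = dist r b
      linarith [hd25, dist_comm r k4, dist_comm k4 b, dist_comm r b]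
  have hd26 : dist e r + dist r k = dist e k := by linarith [dist_triangle e r k, dist_triangle e k e2, hd11, hk1, dist_comm e e2, dist_comm e k, dist_comm e r, dist_comm e2 k, dist_comm e2 r, dist_comm k r]
  have hl1' : dist r k + dist k e = dist r e := by rw [hkk4]; exact hl1
  have hrk : dist r k = 0 := by linarith [hd26, hl1', dist_comm e k, dist_comm e r, dist_comm k r]
  have hrk' : r = k := by rw [← dist_eq_zero]; exact hrk
  rw [hrk']
  exact hd18

/-- Gate property: any median `g` of `(u, w, v)` lies between `w` and every
point `t` of the interval `[u,v]`. -/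
lemma gate_btw (hmed : IsMedianSpace X) {u v w t g : X}
    (hg1 : dist u g + dist g w = dist u w)
    (hg2 : dist w g + dist g v = dist w v)
    (hg3 : dist u g + dist g v = dist u v)
    (ht : dist u t + dist t v = dist u v) :
    dist w g + dist g t = dist w t := by
  obtain ⟨n, hn1, hn2, hn3, -⟩ := med_exists hmed w g t
  have huv : dist u n + dist n v = dist u v := btw_interval hmed hg3 ht hn2
  have hun : dist u n + dist n w = dist u w := by linarith [dist_triangle u g n, dist_triangle u n w, hn1, hg1, dist_comm u g, dist_comm u n, dist_comm u w, dist_comm g n, dist_comm g w, dist_comm n w]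
  have hwv : dist w n + dist n v = dist w v := by linarith [dist_triangle n g v, dist_triangle w n v, hn1, hg2, dist_comm u g, dist_comm u n, dist_comm u w, dist_comm u v, dist_comm g n, dist_comm g w, dist_comm g v, dist_comm n w, dist_comm n v, dist_comm w v]
  have hng : n = g := by
    refine (hmed u w v).unique ⟨⟨hun, hwv⟩, huv⟩ ⟨⟨hg1, hg2⟩, hg3⟩
  rw [← hng]
  exact hn3

/-- Claim 1. -/
lemma claim1 (hmed : IsMedianSpace X) {x c u v z m : X}
    (hu : dist x u + dist u c = dist x c)
    (hz : dist u z + dist z v = dist u v)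
    (hm1 : dist z m + dist m c = dist z c)
    (hm3 : dist z m + dist m v = dist z v) :
    dist x z + dist z m = dist x m := by
  obtain ⟨g1, ha1, ha2, ha3, -⟩ := med_exists hmed x z c
  have hstepa : dist z g1 + dist g1 u = dist z u :=
    gate_btw hmed ha1 ha2 ha3 hu
  have hstepb : dist g1 z + dist z v = dist g1 v := by linarith [dist_triangle g1 z v, dist_triangle u g1 v, hstepa, hz, dist_comm g1 u, dist_comm g1 v, dist_comm g1 z, dist_comm u v, dist_comm u z, dist_comm v z]
  have hstepc : dist g1 z + dist z m = dist g1 m := by linarith [dist_triangle g1 z m, dist_triangle g1 m v, hstepb, hm3, dist_comm g1 m, dist_comm g1 v, dist_comm g1 z, dist_comm m v, dist_comm m z, dist_comm v z]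
  have hstepd : dist x g1 + dist g1 m = dist x m := by
    refine gate_btw hmed (u := z) (v := c) (w := x) ?_ ha3 ha2 hm1
    linarith [ha1, dist_comm x g1, dist_comm g1 z, dist_comm x z]
  linarith [ha1, hstepc, hstepd]

/-- L4. -/
lemma hull_step (hmed : IsMedianSpace X) {x c d u v z : X}
    (hu : dist x u + dist u c = dist x c)
    (hv : dist x v + dist v d = dist x d)
    (hz : dist u z + dist z v = dist u v) :
    ∃ w : X, dist c w + dist w d = dist c d ∧ dist x z + dist z w = dist x w := by
  obtain ⟨m1, hm1a, hm1b, hm1c, -⟩ := med_exists hmed z c v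
  have hc1 : dist x z + dist z m1 = dist x m1 := claim1 hmed hu hz hm1a hm1c
  obtain ⟨m2, hm2a, hm2b, hm2c, -⟩ := med_exists hmed m1 d c
  have hvm1 : dist v m1 + dist m1 c = dist v c := by linarith [hm1b, dist_comm c m1, dist_comm c v, dist_comm m1 v]
  have hc2 : dist x m1 + dist m1 m2 = dist x m2 := claim1 hmed hv hvm1 hm2a hm2c
  refine ⟨m2, ?_, ?_⟩
  · linarith [hm2b, dist_comm c d, dist_comm c m2, dist_comm d m2]
  · linarith [dist_triangle x z m2, dist_triangle z m1 m2, hc1, hc2, dist_comm m1 m2, dist_comm m1 x, dist_comm m1 z, dist_comm m2 x, dist_comm m2 z, dist_comm x z]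

/-- L3. -/
lemma compl_step (hmed : IsMedianSpace X) {x y z a c c' : X}
    (hxc : dist x a + dist a c = dist x c)
    (hyc : dist y a + dist a c' = dist y c')
    (hz : dist x z + dist z y = dist x y) :
    ∃ w : X, dist c w + dist w c' = dist c c' ∧ dist z a + dist a w = dist z w := by
  obtain ⟨g, hg1, hg2, hg3, -⟩ := med_exists hmed z a c
  obtain ⟨g2, hj1, hj2, hj3, -⟩ := med_exists hmed z a c'
  have hxag : dist x a + dist a g = dist x g := by linarith [dist_triangle x a g, dist_triangle x g c, hxc, hg2, dist_comm a c, dist_comm a g, dist_comm a x, dist_comm c g, dist_comm c x, dist_comm g x]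
  have hyag2 : dist y a + dist a g2 = dist y g2 := by linarith [dist_triangle y a g2, dist_triangle y g2 c', hyc, hj2, dist_comm a c', dist_comm a g2, dist_comm a y, dist_comm c' g2, dist_comm c' y, dist_comm g2 y]
  obtain ⟨n, hn1, hn2, hn3, -⟩ := med_exists hmed g a g2
  have hxan : dist x a + dist a n = dist x n := by linarith [dist_triangle x a n, dist_triangle x n g, hxag, hn1, dist_comm a g, dist_comm a n, dist_comm a x, dist_comm g n, dist_comm g x, dist_comm n x]
  have hyan : dist y a + dist a n = dist y n := by linarith [dist_triangle y a n, dist_triangle y n g2, hyag2, hn2, dist_comm a g2, dist_comm a n, dist_comm a y, dist_comm g2 n, dist_comm g2 y, dist_comm n y]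
  obtain ⟨s, hs1, hs2, hs3, -⟩ := med_exists hmed a x y
  have hnas : dist n a + dist a s = dist n s := by linarith [dist_triangle n a s, dist_triangle n s x, hxan, hs1, dist_comm a n, dist_comm a s, dist_comm a x, dist_comm n s, dist_comm n x, dist_comm s x]
  have hnsz : dist n s + dist s z = dist n z := by
    refine gate_btw hmed (u := x) (v := y) (w := n) ?_ ?_ hs2 hz
    · linarith [hxan, hs1, hnas, dist_comm a n, dist_comm a s, dist_comm a x, dist_comm n s, dist_comm n x, dist_comm s x]
    · linarith [hyan, hs3, hnas, dist_comm a n, dist_comm a s, dist_comm a y, dist_comm n s, dist_comm n y, dist_comm s y]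
  have hzna : dist z n + dist n a = dist z a := by linarith [dist_triangle z n a, dist_triangle z g n, hg1, hn1, dist_comm a g, dist_comm a n, dist_comm a z, dist_comm g n, dist_comm g z, dist_comm n z]
  have hna : dist n a = 0 := by
    have h0 : (0:ℝ) ≤ dist n a := dist_nonneg
    linarith [hzna, hnsz, hnas, dist_triangle z s a, dist_comm z n, dist_comm n z,
      dist_comm z s, dist_comm s z, dist_comm s a, dist_comm a s, dist_comm n a, dist_comm a n]
  have hne : n = a := by rw [← dist_eq_zero]; exact hna
  rw [hne] at hn3
  exact hull_step hmed hg3 hj3 hn3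



lemma main_sep [ConnectedSpace X] (hmed : IsMedianSpace X) {a b : X} (hab : a ≠ b) :
    ∃ h : Set X, IsHalfspace h ∧ b ∈ h ∧ a ∈ hᶜ ∧ Metric.infDist a h = 0 := by
  set P : Set (Set X) := {C | MConvex C ∧ b ∈ C ∧ a ∉ C} with hP
  have hbP : ({b} : Set X) ∈ P := by
    refine ⟨?_, rfl, ?_⟩
    · intro u hu v hv w hw
      simp only [Set.mem_singleton_iff] at hu hv ⊢
      have hw2 : dist u w + dist w v = dist u v := hw
      rw [hu, hv] at hw2
      have h0 : dist b w = 0 := by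
        have h1 := dist_nonneg (x := b) (y := w)
        have h2 := dist_nonneg (x := w) (y := b)
        simp only [dist_self] at hw2
        linarith
      exact (dist_eq_zero.mp h0).symm
    · simp only [Set.mem_singleton_iff]
      exact hab
  obtain ⟨C₀, hbsub, hC₀max⟩ := zorn_subset_nonempty P (by
    intro c hcP hchain hcne
    refine ⟨⋃₀ c, ⟨?_, ?_, ?_⟩, fun s hs => Set.subset_sUnion_of_mem hs⟩
    · intro u hu v hv w hw
      obtain ⟨Cu, hCu, huCu⟩ := hu
      obtain ⟨Cv, hCv, hvCv⟩ := hv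
      by_cases heq : Cu = Cv
      · subst heq
        exact ⟨Cu, hCu, (hcP hCu).1 u huCu v hvCv hw⟩
      · rcases hchain hCu hCv heq with hsub | hsub
        · exact ⟨Cv, hCv, (hcP hCv).1 u (hsub huCu) v hvCv hw⟩
        · exact ⟨Cu, hCu, (hcP hCu).1 u huCu v (hsub hvCv) hw⟩
    · obtain ⟨C, hC⟩ := hcne
      exact ⟨C, hC, (hcP hC).2.1⟩
    · rintro ⟨C, hC, haC⟩
      exact (hcP hC).2.2 haC) {b} hbP
  obtain ⟨hC₀conv, hbC₀, haC₀⟩ := hC₀max.1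
  have hreach : ∀ x, x ∉ C₀ → ∃ y ∈ C₀, dist x a + dist a y = dist x y := by
    intro x hx
    set J : Set X := {w | ∃ y ∈ C₀, dist x w + dist w y = dist x y} with hJ
    have hJconv : MConvex J := by
      rintro u ⟨yu, hyu, hu⟩ v ⟨yv, hyv, hv⟩ w hw
      obtain ⟨t, ht1, ht2⟩ := hull_step hmed hu hv hw
      exact ⟨t, hC₀conv yu hyu yv hyv ht1, ht2⟩
    have hCJ : C₀ ⊆ J := fun y hy => ⟨y, hy, by simp [dist_self]⟩
    have hxJ : x ∈ J := ⟨b, hbC₀, by simp [dist_self]⟩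
    by_contra hcon
    push_neg at hcon
    have haJ : a ∉ J := by
      rintro ⟨y, hy, hxy⟩
      exact hcon y hy hxy
    have hJP : J ∈ P := ⟨hJconv, hCJ hbC₀, haJ⟩
    exact hx (hC₀max.2 hJP hCJ hxJ)
  have hcompl : MConvex C₀ᶜ := by
    intro u hu v hv z hz
    by_contra hzC
    rw [Set.notMem_compl_iff] at hzC
    obtain ⟨cu, hcu, hucu⟩ := hreach u hu
    obtain ⟨cv, hcv, hvcv⟩ := hreach v hv
    obtain ⟨w, hw1, hw2⟩ := compl_step hmed hucu hvcv hz
    have hwC : w ∈ C₀ := hC₀conv cu hcu cv hcv hw1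
    exact haC₀ (hC₀conv z hzC w hwC hw2)
  have hdist : Metric.infDist a C₀ = 0 := by
    by_contra hne
    have hpos : 0 < Metric.infDist a C₀ :=
      lt_of_le_of_ne Metric.infDist_nonneg (Ne.symm hne)
    set ε := Metric.infDist a C₀ with hε
    have hpair : ∃ x, x ∉ C₀ ∧ ∃ y ∈ C₀, dist x y < ε / 2 := by
      by_contra hno
      push_neg at hno
      have hclopen : IsClopen C₀ := by
        constructor
        · rw [← isOpen_compl_iff, Metric.isOpen_iff]
          intro x hx
          refine ⟨ε / 2, by positivity, fun w hw => ?_⟩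
          intro hwC
          have h1 := hno x hx w hwC
          rw [Metric.mem_ball] at hw
          rw [dist_comm] at hw
          linarith
        · rw [Metric.isOpen_iff]
          intro y hy
          refine ⟨ε / 2, by positivity, fun w hw => ?_⟩
          by_contra hwC
          have h1 := hno w hwC y hy
          rw [Metric.mem_ball] at hw
          linarith
      rcases isClopen_iff.mp hclopen with h0 | h1
      · rw [h0] at hbC₀
        exact hbC₀
      · exact haC₀ (h1 ▸ Set.mem_univ a)
    obtain ⟨x, hx, y₀, hy₀, hxy₀⟩ := hpair
    obtain ⟨y, hy, hxay⟩ := hreach x hx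
    obtain ⟨m, hma, hmb, hmc, -⟩ := med_exists hmed a y y₀
    have hmC : m ∈ C₀ := hC₀conv y hy y₀ hy₀ hmb
    have hεm : ε ≤ dist a m := Metric.infDist_le_dist_of_mem hmC
    have hxm : dist x a + dist a m = dist x m := by
      linarith [dist_triangle x a m, dist_triangle x m y, hxay, hma,
        dist_comm x a, dist_comm a m, dist_comm m y, dist_comm x m, dist_comm x y,
        dist_comm a y]
    linarith [hxm, dist_triangle x y₀ m, dist_triangle a x y₀, hmc, hεm, hxy₀, hpos,
      dist_comm x a, dist_comm a m, dist_comm m y₀, dist_comm x y₀, dist_comm a y₀,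
      dist_comm x m]
  exact ⟨C₀, ⟨hC₀conv, hcompl⟩, hbC₀, haC₀, hdist⟩

end MedianWork


/-- In a complete connected median space of finite rank, any two distinct points are
separated by a halfspace at distance `0` from the first point; consequently every point
is the intersection of the closed halfspaces branched at it and containing it. -/
theorem statement3 (X : Type*) [MetricSpace X] [CompleteSpace X] [ConnectedSpace X]
    (hmed : IsMedianSpace X) (hrank : ∃ n : ℕ, HasMedianRank X n) :
    (∀ a b : X, a ≠ b → ∃ h : Set X, IsHalfspace h ∧ b ∈ h ∧ a ∈ hᶜ ∧
      Metric.infDist a h = 0) ∧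
    (∀ a : X, ⋂₀ {h : Set X | IsHalfspace h ∧ a ∈ h ∧ a ∈ mHyperplane h} = {a}) := by
  have main : ∀ a b : X, a ≠ b → ∃ h : Set X, IsHalfspace h ∧ b ∈ h ∧ a ∈ hᶜ ∧
      Metric.infDist a h = 0 := fun a b hab => MedianWork.main_sep hmed hab
  refine ⟨main, fun a => ?_⟩
  apply Set.Subset.antisymm
  · intro x hx
    simp only [Set.mem_singleton_iff]
    by_contra hxa
    obtain ⟨h, hhs, hxh, hah, hd0⟩ := main a x (fun he => hxa he.symm)
    have h1 : MConvex hᶜᶜ := by rw [compl_compl]; exact hhs.1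
    have h2 : a ∈ closure hᶜ := subset_closure hah
    have h3 : a ∈ closure hᶜᶜ := by
      rw [compl_compl]
      exact (Metric.mem_closure_iff_infDist_zero ⟨x, hxh⟩).mpr hd0
    have hmem : hᶜ ∈ {h : Set X | IsHalfspace h ∧ a ∈ h ∧ a ∈ mHyperplane h} :=
      ⟨⟨hhs.2, h1⟩, hah, ⟨h2, h3⟩⟩
    exact (Set.mem_sInter.mp hx _ hmem) hxh
  · intro x hx
    simp only [Set.mem_singleton_iff] at hx
    subst hx
    exact Set.mem_sInter.mpr fun h hh => hh.2.1
end

section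
/- Let X be a complete connected median space of rank n and let a, b ∈ X with a ≠ b. Then there exists a halfspace h of X with b ∈ h and a ∈ hᶜ such that d(a, h) = 0 and d(b, hᶜ) ≥ d(a,b)/n. -/
section MedianBasics

variable {X : Type*} [MetricSpace X]

lemma mem_mInt {a b x : X} : x ∈ mInterval a b ↔ dist a x + dist x b = dist a b := Iff.rfl

lemma mInt_left (a b : X) : a ∈ mInterval a b := by simp [mem_mInt]

lemma mInt_right (a b : X) : b ∈ mInterval a b := by simp [mem_mInt]

lemma mInt_symm {a b x : X} (h : x ∈ mInterval a b) : x ∈ mInterval b a := by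
  rw [mem_mInt] at h ⊢
  rw [dist_comm b x, dist_comm x a, dist_comm b a]
  linarith

lemma mInt_self {a x : X} (h : x ∈ mInterval a a) : x = a := by
  rw [mem_mInt] at h
  simp only [dist_self] at h
  have h1 : dist a x = 0 := by
    have := dist_nonneg (x := a) (y := x)
    have := dist_nonneg (x := x) (y := a)
    linarith
  exact (dist_eq_zero.mp (by rwa [dist_comm x a] ))

/-- `y ∈ [a,b]` and `x ∈ [a,y]` imply `x ∈ [a,b]`. -/
lemma B1 {a b x y : X} (hy : y ∈ mInterval a b) (hx : x ∈ mInterval a y) :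
    x ∈ mInterval a b := by
  rw [mem_mInt] at hy hx ⊢
  have t1 : dist x b ≤ dist x y + dist y b := dist_triangle x y b
  have t2 : dist a b ≤ dist a x + dist x b := dist_triangle a x b
  linarith

/-- `y ∈ [a,b]` and `x ∈ [y,b]` imply `x ∈ [a,b]`. -/
lemma B1r {a b x y : X} (hy : y ∈ mInterval a b) (hx : x ∈ mInterval y b) :
    x ∈ mInterval a b :=
  mInt_symm (B1 (mInt_symm hy) (mInt_symm hx))

/-- `a' ∈ [x,c]` and `c' ∈ [a',c]` imply `a' ∈ [x,c']`. -/
lemma B3 {x c a' c' : X} (h1 : a' ∈ mInterval x c) (h2 : c' ∈ mInterval a' c) :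
    a' ∈ mInterval x c' := by
  rw [mem_mInt] at h1 h2 ⊢
  have t1 : dist x c ≤ dist x c' + dist c' c := dist_triangle x c' c
  have t2 : dist x c' ≤ dist x a' + dist a' c' := dist_triangle x a' c'
  linarith

end MedianBasics

section Med

variable {X : Type*} [MetricSpace X]

/-- The median point of a triple. -/
noncomputable def med (hmed : IsMedianSpace X) (a b c : X) : X := (hmed a b c).choose

lemma med_mem₁ (hmed : IsMedianSpace X) (a b c : X) : med hmed a b c ∈ mInterval a b :=
  (hmed a b c).choose_spec.1.1.1

lemma med_mem₂ (hmed : IsMedianSpace X) (a b c : X) : med hmed a b c ∈ mInterval b c :=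
  (hmed a b c).choose_spec.1.1.2

lemma med_mem₃ (hmed : IsMedianSpace X) (a b c : X) : med hmed a b c ∈ mInterval a c :=
  (hmed a b c).choose_spec.1.2

lemma med_unique (hmed : IsMedianSpace X) {a b c m : X} (h1 : m ∈ mInterval a b)
    (h2 : m ∈ mInterval b c) (h3 : m ∈ mInterval a c) : m = med hmed a b c :=
  (hmed a b c).choose_spec.2 m ⟨⟨h1, h2⟩, h3⟩

/-- T2: if `u ∈ [a,z] ∩ [z,b]` then `u ∈ [z, med a z b]`. -/
lemma T2 (hmed : IsMedianSpace X) {a b z u : X} (h1 : u ∈ mInterval a z)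
    (h2 : u ∈ mInterval z b) : u ∈ mInterval z (med hmed a z b) := by
  set p := med hmed a z b with hp
  set q := med hmed a u b with hq
  -- q ∈ [a,z], [z,b], [a,b] hence q = p
  have hq1 : q ∈ mInterval a u := med_mem₁ hmed a u b
  have hq2 : q ∈ mInterval u b := med_mem₂ hmed a u b
  have hq3 : q ∈ mInterval a b := med_mem₃ hmed a u b
  have hqa : q ∈ mInterval a z := B1 h1 hq1
  have hqb : q ∈ mInterval z b := B1r h2 hq2
  have hqp : q = p := med_unique hmed hqa hqb hq3
  -- distances
  have e1 : dist a q + dist q u = dist a u := hq1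
  have e2 : dist a u + dist u z = dist a z := h1
  have e3 : dist a q + dist q z = dist a z := hqa
  have goal : dist z u + dist u q = dist z q := by
    have c1 : dist z u = dist u z := dist_comm z u
    have c2 : dist u q = dist q u := dist_comm u q
    have c3 : dist z q = dist q z := dist_comm z q
    linarith
  rw [mem_mInt, ← hqp]
  exact goal

/-- T4 (gate lemma): if `z ∈ [x,y]` then `med x c y ∈ [z,c]`. -/
lemma T4 (hmed : IsMedianSpace X) {x y z : X} (c : X) (hz : z ∈ mInterval x y) :
    med hmed x c y ∈ mInterval z c := by
  set q := med hmed x z c with hqdef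
  set q' := med hmed y z c with hq'def
  have hq1 : q ∈ mInterval x z := med_mem₁ hmed x z c
  have hq2 : q ∈ mInterval z c := med_mem₂ hmed x z c
  have hq3 : q ∈ mInterval x c := med_mem₃ hmed x z c
  have hq'1 : q' ∈ mInterval y z := med_mem₁ hmed y z c
  have hq'2 : q' ∈ mInterval z c := med_mem₂ hmed y z c
  have hq'3 : q' ∈ mInterval y c := med_mem₃ hmed y z c
  -- q' ∈ [x,y]
  have hq'xy : q' ∈ mInterval x y := B1r hz (mInt_symm hq'1)
  -- z ∈ [q,q']
  have hzqq' : z ∈ mInterval q q' := by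
    rw [mem_mInt]
    have t1 : dist x q' ≤ dist x q + dist q q' := dist_triangle x q q'
    have e1 : dist x q' + dist q' y = dist x y := hq'xy
    have e2 : dist x z + dist z y = dist x y := hz
    have e3 : dist x q + dist q z = dist x z := hq1
    have e4 : dist y q' + dist q' z = dist y z := hq'1
    have t2 : dist q q' ≤ dist q z + dist z q' := dist_triangle q z q'
    have c1 : dist q' y = dist y q' := dist_comm q' y
    have c2 : dist z y = dist y z := dist_comm z y
    have c3 : dist q' z = dist z q' := dist_comm q' z
    linarith
  set w := med hmed q c q' with hwdef
  have hw1 : w ∈ mInterval q c := med_mem₁ hmed q c q'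
  have hw2 : w ∈ mInterval c q' := med_mem₂ hmed q c q'
  have hw3 : w ∈ mInterval q q' := med_mem₃ hmed q c q'
  -- w ∈ [x,c]
  have hwxc : w ∈ mInterval x c := B1r hq3 hw1
  -- w ∈ [c,y]
  have hwcy : w ∈ mInterval c y := B1 (mInt_symm hq'3) hw2
  -- w ∈ [x,y]
  have hwxy : w ∈ mInterval x y := by
    rw [mem_mInt]
    have t1 : dist x w ≤ dist x q + dist q w := dist_triangle x q w
    have t2 : dist w y ≤ dist w q' + dist q' y := dist_triangle w q' y
    have t3 : dist x y ≤ dist x w + dist w y := dist_triangle x w y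
    have e1 : dist q w + dist w q' = dist q q' := hw3
    have e2 : dist q z + dist z q' = dist q q' := hzqq'
    have e3 : dist x q + dist q z = dist x z := hq1
    have e4 : dist y q' + dist q' z = dist y z := hq'1
    have e5 : dist x z + dist z y = dist x y := hz
    have c1 : dist y q' = dist q' y := dist_comm y q'
    have c2 : dist q' z = dist z q' := dist_comm q' z
    have c3 : dist z y = dist y z := dist_comm z y
    linarith
  have hwp : w = med hmed x c y := med_unique hmed hwxc hwcy hwxy
  -- w ∈ [z,c]
  have hwzc : w ∈ mInterval z c := B1r hq2 hw1
  rwa [hwp] at hwzc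

end Med

section Join

variable {X : Type*} [MetricSpace X]

/-- The join of a point and a set. -/
def mJoin {X : Type*} [MetricSpace X] (x : X) (C : Set X) : Set X :=
  ⋃ c ∈ C, mInterval x c

lemma mJoin_subset {x : X} {C : Set X} : C ⊆ mJoin x C := by
  intro c hc
  exact Set.mem_biUnion hc (mInt_right x c)

lemma mem_mJoin_self {x : X} {C : Set X} (hC : C.Nonempty) : x ∈ mJoin x C := by
  obtain ⟨c, hc⟩ := hC
  exact Set.mem_biUnion hc (mInt_left x c)

/-- The join lemma: the join of a point and a convex set is convex. -/
lemma mJoin_convex (hmed : IsMedianSpace X) {C : Set X} (hC : MConvex C) (x : X) :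
    MConvex (mJoin x C) := by
  intro u hu v hv w hw
  obtain ⟨c₁, hc₁, hu1⟩ : ∃ c₁ ∈ C, u ∈ mInterval x c₁ := by
    simpa [mJoin] using hu
  obtain ⟨c₂, hc₂, hv1⟩ : ∃ c₂ ∈ C, v ∈ mInterval x c₂ := by
    simpa [mJoin] using hv
  set c₃ := med hmed c₁ w c₂ with hc₃def
  have hc₃1 : c₃ ∈ mInterval c₁ w := med_mem₁ hmed c₁ w c₂
  have hc₃2 : c₃ ∈ mInterval w c₂ := med_mem₂ hmed c₁ w c₂
  have hc₃3 : c₃ ∈ mInterval c₁ c₂ := med_mem₃ hmed c₁ w c₂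
  have hc₃C : c₃ ∈ C := hC c₁ hc₁ c₂ hc₂ hc₃3
  set μ := med hmed x w c₃ with hμdef
  have hμ1 : μ ∈ mInterval x w := med_mem₁ hmed x w c₃
  have hμ2 : μ ∈ mInterval w c₃ := med_mem₂ hmed x w c₃
  have hμ3 : μ ∈ mInterval x c₃ := med_mem₃ hmed x w c₃
  -- μ ∈ [w,c₁] and [w,c₂]
  have hμwc₁ : μ ∈ mInterval w c₁ := B1 (mInt_symm hc₃1) hμ2
  have hμwc₂ : μ ∈ mInterval w c₂ := B1 hc₃2 hμ2
  -- gates: med x w c₁ ∈ [u,w], med x w c₂ ∈ [v,w]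
  have hg₁ : med hmed x w c₁ ∈ mInterval u w := T4 hmed w hu1
  have hg₂ : med hmed x w c₂ ∈ mInterval v w := T4 hmed w hv1
  -- T2: μ ∈ [x,w] ∩ [w,c₁] ⇒ μ ∈ [w, med x w c₁]
  have hμg₁ : μ ∈ mInterval w (med hmed x w c₁) := T2 hmed hμ1 hμwc₁
  have hμg₂ : μ ∈ mInterval w (med hmed x w c₂) := T2 hmed hμ1 hμwc₂
  -- μ ∈ [w,u] and [w,v]
  have hμwu : μ ∈ mInterval w u := B1 (mInt_symm hg₁) hμg₁
  have hμwv : μ ∈ mInterval w v := B1 (mInt_symm hg₂) hμg₂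
  -- μ ∈ [u,v]
  have hμuv : μ ∈ mInterval u v := B1 hw (mInt_symm hμwu)
  -- μ is a median of (u,w,v); so is w; hence μ = w
  have hμmed : μ = med hmed u w v := med_unique hmed (mInt_symm hμwu) hμwv hμuv
  have hwmed : w = med hmed u w v :=
    med_unique hmed (mInt_symm (mInt_left w u)) (mInt_left w v) hw
  have hμw : μ = w := by rw [hμmed, ← hwmed]
  rw [← hμw]
  exact Set.mem_biUnion hc₃C hμ3

end Join

section Halfspace

variable {X : Type*} [MetricSpace X]

/-- Existence of a maximal convex set containing `C` and avoiding `a`. -/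
lemma exists_maximal_convex (C : Set X) (hC : MConvex C) (a : X) (ha : a ∉ C) :
    ∃ h : Set X, MConvex h ∧ C ⊆ h ∧ a ∉ h ∧
      ∀ g : Set X, MConvex g → h ⊆ g → a ∉ g → g = h := by
  set S : Set (Set X) := {D | MConvex D ∧ C ⊆ D ∧ a ∉ D} with hS
  have hCS : C ∈ S := ⟨hC, subset_rfl, ha⟩
  have hzorn : ∀ c ⊆ S, IsChain (· ⊆ ·) c → c.Nonempty →
      ∃ ub ∈ S, ∀ s ∈ c, s ⊆ ub := by
    intro c hcS hchain hcne
    refine ⟨⋃₀ c, ⟨?_, ?_, ?_⟩, fun s hs => Set.subset_sUnion_of_mem hs⟩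
    · intro u hu v hv w hw
      obtain ⟨Du, hDu, huD⟩ := hu
      obtain ⟨Dv, hDv, hvD⟩ := hv
      rcases hchain.total hDu hDv with h | h
      · exact Set.mem_sUnion.mpr ⟨Dv, hDv, (hcS hDv).1 u (h huD) v hvD hw⟩
      · exact Set.mem_sUnion.mpr ⟨Du, hDu, (hcS hDu).1 u huD v (h hvD) hw⟩
    · obtain ⟨D, hD⟩ := hcne
      exact (hcS hD).2.1.trans (Set.subset_sUnion_of_mem hD)
    · rintro ⟨D, hD, haD⟩
      exact (hcS hD).2.2 haD
  obtain ⟨m, hCm, hm⟩ := zorn_subset_nonempty S hzorn C hCS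
  refine ⟨m, hm.prop.1, hm.prop.2.1, hm.prop.2.2, ?_⟩
  intro g hg hmg hag
  have hgS : g ∈ S := ⟨hg, hm.prop.2.1.trans hmg, hag⟩
  exact subset_antisymm (hm.2 hgS hmg) hmg

/-- A maximal convex set avoiding a point has convex complement. -/
lemma maximal_convex_compl (hmed : IsMedianSpace X) {h : Set X} {a : X}
    (hconv : MConvex h) (hne : h.Nonempty) (ha : a ∉ h)
    (hmax : ∀ g : Set X, MConvex g → h ⊆ g → a ∉ g → g = h) :
    MConvex hᶜ := by
  -- maximality consequence: for x ∉ h, a ∈ mJoin x h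
  have hJ : ∀ x : X, x ∉ h → ∃ c ∈ h, a ∈ mInterval x c := by
    intro x hx
    have hJconv : MConvex (mJoin x h) := mJoin_convex hmed hconv x
    have hsub : h ⊆ mJoin x h := mJoin_subset
    by_contra hcon
    push_neg at hcon
    have haJ : a ∉ mJoin x h := by
      rintro ⟨s, ⟨c, rfl⟩, hs⟩
      simp only [Set.mem_iUnion, Set.mem_range] at hs
      obtain ⟨hc, has⟩ := hs
      exact (hcon c hc) has
    have := hmax (mJoin x h) hJconv hsub haJ
    have hxJ : x ∈ mJoin x h := mem_mJoin_self hne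
    rw [this] at hxJ
    exact hx hxJ
  intro x hx y hy z hz
  by_contra hzh
  simp only [Set.mem_compl_iff, not_not] at hzh
  simp only [Set.mem_compl_iff] at hx hy
  obtain ⟨c₁, hc₁, hac₁⟩ := hJ x hx
  obtain ⟨c₂, hc₂, hac₂⟩ := hJ y hy
  set c := med hmed a c₁ c₂ with hcdef
  have hcC : c ∈ h := hconv c₁ hc₁ c₂ hc₂ (med_mem₂ hmed a c₁ c₂)
  have hcac₁ : c ∈ mInterval a c₁ := med_mem₁ hmed a c₁ c₂
  have hcac₂ : c ∈ mInterval a c₂ := med_mem₃ hmed a c₁ c₂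
  -- a ∈ [x,c] and a ∈ [y,c]
  have haxc : a ∈ mInterval x c := B3 hac₁ hcac₁
  have hayc : a ∈ mInterval y c := B3 hac₂ hcac₂
  -- T2 at c: a ∈ [c, med x c y]
  have hT2 : a ∈ mInterval c (med hmed x c y) := T2 hmed haxc (mInt_symm hayc)
  -- T4: med x c y ∈ [z,c]
  have hT4 : med hmed x c y ∈ mInterval z c := T4 hmed c hz
  -- a ∈ [c,z]
  have hacz : a ∈ mInterval c z := B1 (mInt_symm hT4) hT2
  exact ha (hconv c hcC z hzh hacz)

end Halfspace

section Analytic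

variable {X : Type*} [MetricSpace X]

/-- The closure of a convex set is convex. -/
lemma closure_mconvex (hmed : IsMedianSpace X) {C : Set X} (hC : MConvex C) :
    MConvex (closure C) := by
  intro u hu v hv w hw
  rw [Metric.mem_closure_iff]
  intro ε hε
  obtain ⟨u', hu'C, hu'⟩ := Metric.mem_closure_iff.mp hu (ε / 4) (by linarith)
  obtain ⟨v', hv'C, hv'⟩ := Metric.mem_closure_iff.mp hv (ε / 4) (by linarith)
  set m := med hmed u' w v' with hm
  have hm1 : m ∈ mInterval u' w := med_mem₁ hmed u' w v'
  have hm2 : m ∈ mInterval w v' := med_mem₂ hmed u' w v'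
  have hm3 : m ∈ mInterval u' v' := med_mem₃ hmed u' w v'
  refine ⟨m, hC u' hu'C v' hv'C hm3, ?_⟩
  -- 2 d(w,m) = d(u',w) + d(w,v') - d(u',v')
  have e1 : dist u' m + dist m w = dist u' w := hm1
  have e2 : dist w m + dist m v' = dist w v' := hm2
  have e3 : dist u' m + dist m v' = dist u' v' := hm3
  have ew : dist u w + dist w v = dist u v := hw
  have t1 : dist u' w ≤ dist u' u + dist u w := dist_triangle u' u w
  have t2 : dist w v' ≤ dist w v + dist v v' := dist_triangle w v v'
  have t3 : dist u v ≤ dist u u' + dist u' v' + dist v' v := by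
    have := dist_triangle u u' v'
    have := dist_triangle u v' v
    have := dist_triangle u u' v
    calc dist u v ≤ dist u u' + dist u' v := dist_triangle u u' v
      _ ≤ dist u u' + (dist u' v' + dist v' v) := by
          have := dist_triangle u' v' v
          linarith
      _ = dist u u' + dist u' v' + dist v' v := by ring
  have c1 : dist u' u = dist u u' := dist_comm u' u
  have c2 : dist v v' = dist v' v := dist_comm v v'
  have c3 : dist m w = dist w m := dist_comm m w
  have hd : dist w m ≤ ε / 2 := by linarith
  calc dist w m ≤ ε / 2 := hd
    _ < ε := by linarith

/-- Nearest-point projection with the gate property, for a nonempty closed convex set. -/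
lemma exists_gate (hmed : IsMedianSpace X) [CompleteSpace X] {K : Set X}
    (hK : MConvex K) (hKc : IsClosed K) (hKne : K.Nonempty) (z : X) :
    ∃ p ∈ K, dist z p = Metric.infDist z K ∧ ∀ c ∈ K, p ∈ mInterval z c := by
  set δ := Metric.infDist z K with hδ
  have hδ0 : 0 ≤ δ := Metric.infDist_nonneg
  -- choose an approximating sequence
  have hex : ∀ k : ℕ, ∃ w ∈ K, dist z w < δ + 1 / (k + 1) := by
    intro k
    apply (Metric.infDist_lt_iff hKne).mp
    have : (0:ℝ) < 1 / (k + 1) := by positivity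
    linarith
  choose w hwK hwd using hex
  have key : ∀ j k : ℕ, dist (w j) (w k) ≤ 1 / (j + 1) + 1 / (k + 1) := by
    intro j k
    set m := med hmed (w j) z (w k) with hm
    have hm1 : m ∈ mInterval (w j) z := med_mem₁ hmed (w j) z (w k)
    have hm2 : m ∈ mInterval z (w k) := med_mem₂ hmed (w j) z (w k)
    have hm3 : m ∈ mInterval (w j) (w k) := med_mem₃ hmed (w j) z (w k)
    have hmK : m ∈ K := hK (w j) (hwK j) (w k) (hwK k) hm3
    have hmδ : δ ≤ dist z m := Metric.infDist_le_dist_of_mem hmK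
    have e1 : dist (w j) m + dist m z = dist (w j) z := hm1
    have e2 : dist z m + dist m (w k) = dist z (w k) := hm2
    have t : dist (w j) (w k) ≤ dist (w j) m + dist m (w k) := dist_triangle _ _ _
    have c1 : dist m z = dist z m := dist_comm m z
    have c2 : dist (w j) z = dist z (w j) := dist_comm (w j) z
    have hj := hwd j
    have hk := hwd k
    linarith
  have hcauchy : CauchySeq w := by
    rw [Metric.cauchySeq_iff']
    intro ε hε
    obtain ⟨N, hN⟩ := exists_nat_gt (2 / ε)
    refine ⟨N, fun n hn => ?_⟩
    have h1 : dist (w n) (w N) ≤ 1 / (n + 1) + 1 / (N + 1) := key n N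
    have hN1 : (0:ℝ) < N + 1 := by positivity
    have hn1 : (0:ℝ) < n + 1 := by positivity
    have hNn : (N:ℝ) ≤ n := by exact_mod_cast hn
    have h2 : 1 / ((n:ℝ) + 1) ≤ 1 / (N + 1) := by
      apply one_div_le_one_div_of_le hN1
      linarith
    have h3 : 2 / ε < N + 1 := by linarith
    have h4 : 1 / ((N:ℝ) + 1) < ε / 2 := by
      rw [div_lt_iff₀ hN1]
      rw [div_lt_iff₀ hε] at h3
      linarith [mul_comm ε ((N:ℝ)+1)]
    linarith
  obtain ⟨p, hp⟩ := cauchySeq_tendsto_of_complete hcauchy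
  have hpK : p ∈ K := hKc.mem_of_tendsto hp (Filter.Eventually.of_forall hwK)
  have hdp : dist z p = δ := by
    have htd : Filter.Tendsto (fun k => dist z (w k)) Filter.atTop (nhds (dist z p)) :=
      (Filter.Tendsto.dist tendsto_const_nhds hp)
    have hub : dist z p ≤ δ := by
      have hten : Filter.Tendsto (fun k : ℕ => δ + 1 / ((k:ℝ) + 1)) Filter.atTop (nhds (δ + 0)) := by
        have h0 : Filter.Tendsto (fun k : ℕ => 1 / ((k:ℝ) + 1)) Filter.atTop (nhds 0) :=
          tendsto_one_div_add_atTop_nhds_zero_nat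
        exact Filter.Tendsto.const_add δ h0
      rw [add_zero] at hten
      exact le_of_tendsto_of_tendsto' htd hten (fun k => le_of_lt (hwd k))
    exact le_antisymm hub (Metric.infDist_le_dist_of_mem hpK)
  refine ⟨p, hpK, hdp, ?_⟩
  intro c hc
  set m' := med hmed z p c with hm'
  have h1 : m' ∈ mInterval z p := med_mem₁ hmed z p c
  have h2 : m' ∈ mInterval p c := med_mem₂ hmed z p c
  have h3 : m' ∈ mInterval z c := med_mem₃ hmed z p c
  have hm'K : m' ∈ K := hK p hpK c hc h2
  have hle : δ ≤ dist z m' := Metric.infDist_le_dist_of_mem hm'K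
  have e1 : dist z m' + dist m' p = dist z p := h1
  have : dist m' p = 0 := by rw [hdp] at e1; linarith [dist_nonneg (x := m') (y := p)]
  have hm'p : m' = p := by rwa [dist_eq_zero] at this
  rwa [hm'p] at h3

end Analytic

section Boundary

variable {X : Type*} [MetricSpace X]

/-- Maximality gives: every point outside `h` sees `a` on the way to some point of `h`. -/
lemma maximal_mem_join (hmed : IsMedianSpace X) {h : Set X} {a : X}
    (hconv : MConvex h) (hne : h.Nonempty)
    (hmax : ∀ g : Set X, MConvex g → h ⊆ g → a ∉ g → g = h) :
    ∀ x : X, x ∉ h → ∃ c ∈ h, a ∈ mInterval x c := by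
  intro x hx
  have hJconv : MConvex (mJoin x h) := mJoin_convex hmed hconv x
  have hsub : h ⊆ mJoin x h := mJoin_subset
  by_contra hcon
  push_neg at hcon
  have haJ : a ∉ mJoin x h := by
    rintro ⟨s, ⟨c, rfl⟩, hs⟩
    simp only [Set.mem_iUnion, Set.mem_range] at hs
    obtain ⟨hc, has⟩ := hs
    exact (hcon c hc) has
  have := hmax (mJoin x h) hJconv hsub haJ
  have hxJ : x ∈ mJoin x h := mem_mJoin_self hne
  rw [this] at hxJ
  exact hx hxJ

/-- In a complete connected median space, a maximal convex set avoiding `a`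
touches `a`. -/
lemma maximal_infDist_zero (hmed : IsMedianSpace X) [CompleteSpace X] [ConnectedSpace X]
    {h : Set X} {a : X} (hconv : MConvex h) (hne : h.Nonempty) (ha : a ∉ h)
    (hmax : ∀ g : Set X, MConvex g → h ⊆ g → a ∉ g → g = h) :
    Metric.infDist a h = 0 := by
  by_contra hδne
  set δ := Metric.infDist a h with hδdef
  have hδ0 : 0 ≤ δ := Metric.infDist_nonneg
  have hδpos : 0 < δ := lt_of_le_of_ne hδ0 (Ne.symm hδne)
  set K := closure h with hKdef
  have hKconv : MConvex K := closure_mconvex hmed hconv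
  have hKne : K.Nonempty := hne.closure
  have hKinf : Metric.infDist a K = δ := by
    rw [hKdef, Metric.infDist_closure]
  obtain ⟨p, hpK, hpd, hgate⟩ := exists_gate hmed hKconv isClosed_closure hKne a
  rw [hKinf] at hpd
  set f : X → ℝ := fun t => dist t p - dist t a with hfdef
  have hfc : Continuous f := by
    apply Continuous.sub
    · exact Continuous.dist continuous_id continuous_const
    · exact Continuous.dist continuous_id continuous_const
  -- f = -δ on h
  have hfh : ∀ c ∈ h, f c = -δ := by
    intro c hc
    have hcK : c ∈ K := subset_closure hc
    have hg : p ∈ mInterval a c := hgate c hcK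
    have e : dist a p + dist p c = dist a c := hg
    simp only [hfdef]
    rw [dist_comm c p, dist_comm c a]
    linarith
  -- f ≥ δ off h
  have hfc' : ∀ x : X, x ∉ h → δ ≤ f x := by
    intro x hx
    obtain ⟨c, hch, hac⟩ := maximal_mem_join hmed hconv hne hmax x hx
    have e1 : dist x a + dist a c = dist x c := hac
    have hcK : c ∈ K := subset_closure hch
    have hg : p ∈ mInterval a c := hgate c hcK
    have e2 : dist a p + dist p c = dist a c := hg
    have t : dist x c ≤ dist x p + dist p c := dist_triangle x p c
    simp only [hfdef]
    linarith
  obtain ⟨b₀, hb₀⟩ := hne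
  have hIVT := intermediate_value_univ b₀ a hfc
  have h0mem : (0:ℝ) ∈ Set.Icc (f b₀) (f a) := by
    constructor
    · rw [hfh b₀ hb₀]; linarith
    · simp only [hfdef]
      rw [dist_self]
      have h1 : dist a p = δ ∨ dist p a = δ := Or.inl hpd
      rcases h1 with h1 | h1 <;> linarith [hδpos, h1]
  obtain ⟨x, hx⟩ := hIVT h0mem
  by_cases hxh : x ∈ h
  · have := hfh x hxh
    rw [hx] at this
    linarith
  · have := hfc' x hxh
    rw [hx] at this
    linarith

end Boundary

/-- In a complete connected median space of rank `n`, any two distinct points `a ≠ b` are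
separated by a halfspace `h` with `b ∈ h`, `a ∈ hᶜ`, `d(a,h) = 0` and `d(b,hᶜ) ≥ d(a,b)/n`. -/
theorem statement4 (X : Type*) [MetricSpace X] [CompleteSpace X] [ConnectedSpace X]
    (hmed : IsMedianSpace X) (n : ℕ) (hrank : HasMedianRank X n)
    (a b : X) (hab : a ≠ b) :
    ∃ h : Set X, IsHalfspace h ∧ b ∈ h ∧ a ∈ hᶜ ∧ Metric.infDist a h = 0 ∧
      dist a b / n ≤ Metric.infDist b hᶜ := by
  -- the case n = 0 is impossible
  rcases Nat.eq_zero_or_pos n with hn0 | hnpos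
  · exfalso
    apply hrank.2
    refine ⟨fun _ => (∅ : Set X), fun i => ⟨?_, ?_⟩, fun i j hij => ?_⟩
    · intro p hp
      exact absurd hp (Set.notMem_empty p)
    · intro p _ q _ r _
      simp
    · exfalso
      apply hij
      subst hn0
      have hi := i.isLt
      have hj := j.isLt
      exact Fin.ext (by omega)
  set D := dist a b with hD
  have hDpos : 0 < D := dist_pos.mpr hab
  have hnR : (0:ℝ) < (n:ℝ) := by exact_mod_cast hnpos
  by_contra hcon
  push_neg at hcon
  -- hcon : ∀ h, IsHalfspace h → b ∈ h → a ∈ hᶜ → infDist a h = 0 → infDist b hᶜ < D / n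
  have key : ∀ k : ℕ, k ≤ n + 1 → ∃ (C : Set X) (hs : ℕ → Set X) (xs : ℕ → X),
      MConvex C ∧ b ∈ C ∧
      (∀ z ∈ C, dist b z ≤ ∑ i ∈ Finset.range k, dist b (xs i)) ∧
      (∀ i < k, dist b (xs i) < D / n) ∧
      (∀ i < k, xs i ∈ C) ∧
      (∀ i < k, IsHalfspace (hs i)) ∧
      (∀ i < k, b ∈ hs i) ∧
      (∀ i < k, a ∉ hs i) ∧
      (∀ i < k, xs i ∉ hs i) ∧
      (∀ i j, i < j → j < k → xs i ∈ hs j) ∧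
      (∀ i < k, ∀ g : Set X, MConvex g → hs i ⊆ g → a ∉ g → g = hs i) := by
    intro k
    induction k with
    | zero =>
      intro _
      refine ⟨{b}, fun _ => ∅, fun _ => b, ?_, rfl, ?_, ?_, ?_, ?_, ?_, ?_, ?_, ?_, ?_⟩
      · intro p hp q hq r hr
        rw [Set.mem_singleton_iff] at hp hq
        subst hp; subst hq
        exact mInt_self hr
      · intro z hz
        rw [Set.mem_singleton_iff] at hz
        subst hz
        simp
      all_goals first
        | (intro i hi; exact absurd hi (Nat.not_lt_zero i))
        | (intro i j hij hj; exact absurd hj (Nat.not_lt_zero j))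
    | succ k ih =>
      intro hk1
      have hkn : k ≤ n := Nat.succ_le_succ_iff.mp hk1
      obtain ⟨C, hs, xs, I1, I2, I3, I4, I5, I6, I7, I8, I9, I10, I11⟩ :=
        ih (le_trans (Nat.le_succ k) hk1)
      set Sk := ∑ i ∈ Finset.range k, dist b (xs i) with hSkdef
      have hSkD : Sk < D := by
        rcases Nat.eq_zero_or_pos k with hk0 | hkpos
        · subst hk0
          simp only [hSkdef, Finset.range_zero, Finset.sum_empty]
          exact hDpos
        · have h1 : Sk < ∑ _i ∈ Finset.range k, D / n := by
            apply Finset.sum_lt_sum_of_nonempty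
            · exact Finset.nonempty_range_iff.mpr (Nat.pos_iff_ne_zero.mp hkpos)
            · intro i hi
              exact I4 i (Finset.mem_range.mp hi)
          have h2 : ∑ _i ∈ Finset.range k, D / n = (k:ℝ) * (D / n) := by
            rw [Finset.sum_const, Finset.card_range]
            simp [nsmul_eq_mul]
          have h3 : (k:ℝ) * (D / n) ≤ (n:ℝ) * (D / n) := by
            apply mul_le_mul_of_nonneg_right
            · exact_mod_cast hkn
            · positivity
          have h4 : (n:ℝ) * (D / n) = D := by
            field_simp
          linarith
      have haC : a ∉ C := by
        intro haC
        have := I3 a haC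
        rw [dist_comm b a] at this
        linarith
      obtain ⟨h, hhconv, hCh, hah, hhmax⟩ := exists_maximal_convex C I1 a haC
      have hbh : b ∈ h := hCh I2
      have hne : h.Nonempty := ⟨b, hbh⟩
      have hhalf : IsHalfspace h :=
        ⟨hhconv, maximal_convex_compl hmed hhconv hne hah hhmax⟩
      have hzero : Metric.infDist a h = 0 :=
        maximal_infDist_zero hmed hhconv hne hah hhmax
      have hdepth : Metric.infDist b hᶜ < D / n := hcon h hhalf hbh hah hzero
      obtain ⟨x₀, hx₀c, hx₀d⟩ := (Metric.infDist_lt_iff ⟨a, hah⟩).mp hdepth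
      refine ⟨mJoin x₀ C, Function.update hs k h, Function.update xs k x₀,
        mJoin_convex hmed I1 x₀, mJoin_subset I2, ?_, ?_, ?_, ?_, ?_, ?_, ?_, ?_, ?_⟩
      · -- radius bound
        intro z hz
        obtain ⟨c, hcC, hzc⟩ : ∃ c ∈ C, z ∈ mInterval x₀ c := by
          simpa [mJoin] using hz
        have e : dist x₀ z + dist z c = dist x₀ c := hzc
        have t1 : dist b z ≤ dist b x₀ + dist x₀ z := dist_triangle b x₀ z
        have t2 : dist b z ≤ dist b c + dist c z := dist_triangle b c z
        have t3 : dist x₀ c ≤ dist x₀ b + dist b c := dist_triangle x₀ b c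
        have c1 : dist c z = dist z c := dist_comm c z
        have c2 : dist x₀ b = dist b x₀ := dist_comm x₀ b
        have hzbound : dist b z ≤ dist b x₀ + dist b c := by linarith
        have hsum : ∑ i ∈ Finset.range (k+1), dist b (Function.update xs k x₀ i)
            = Sk + dist b x₀ := by
          rw [Finset.sum_range_succ, Function.update_self]
          congr 1
          apply Finset.sum_congr rfl
          intro i hi
          rw [Function.update_of_ne (Nat.ne_of_lt (Finset.mem_range.mp hi))]
        rw [hsum]
        have := I3 c hcC
        linarith
      · -- small steps
        intro i hi
        rcases Nat.lt_succ_iff_lt_or_eq.mp hi with hik | hik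
        · rw [Function.update_of_ne (Nat.ne_of_lt hik)]
          exact I4 i hik
        · subst hik
          rw [Function.update_self]
          exact hx₀d
      · -- points in C'
        intro i hi
        rcases Nat.lt_succ_iff_lt_or_eq.mp hi with hik | hik
        · rw [Function.update_of_ne (Nat.ne_of_lt hik)]
          exact mJoin_subset (I5 i hik)
        · subst hik
          rw [Function.update_self]
          exact mem_mJoin_self ⟨b, I2⟩
      · -- halfspaces
        intro i hi
        rcases Nat.lt_succ_iff_lt_or_eq.mp hi with hik | hik
        · rw [Function.update_of_ne (Nat.ne_of_lt hik)]
          exact I6 i hik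
        · subst hik
          rw [Function.update_self]
          exact hhalf
      · -- b in each
        intro i hi
        rcases Nat.lt_succ_iff_lt_or_eq.mp hi with hik | hik
        · rw [Function.update_of_ne (Nat.ne_of_lt hik)]
          exact I7 i hik
        · subst hik
          rw [Function.update_self]
          exact hbh
      · -- a not in each
        intro i hi
        rcases Nat.lt_succ_iff_lt_or_eq.mp hi with hik | hik
        · rw [Function.update_of_ne (Nat.ne_of_lt hik)]
          exact I8 i hik
        · subst hik
          rw [Function.update_self]
          exact hah
      · -- xs i not in hs i
        intro i hi
        rcases Nat.lt_succ_iff_lt_or_eq.mp hi with hik | hik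
        · rw [Function.update_of_ne (Nat.ne_of_lt hik),
            Function.update_of_ne (Nat.ne_of_lt hik)]
          exact I9 i hik
        · subst hik
          rw [Function.update_self, Function.update_self]
          exact hx₀c
      · -- xs i ∈ hs j for i < j
        intro i j hij hj
        rcases Nat.lt_succ_iff_lt_or_eq.mp hj with hjk | hjk
        · rw [Function.update_of_ne (Nat.ne_of_lt (hij.trans hjk)),
            Function.update_of_ne (Nat.ne_of_lt hjk)]
          exact I10 i j hij hjk
        · subst hjk
          rw [Function.update_of_ne (Nat.ne_of_lt hij), Function.update_self]
          exact hCh (I5 i hij)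
      · -- maximality
        intro i hi
        rcases Nat.lt_succ_iff_lt_or_eq.mp hi with hik | hik
        · rw [Function.update_of_ne (Nat.ne_of_lt hik)]
          exact I11 i hik
        · subst hik
          rw [Function.update_self]
          exact hhmax
  obtain ⟨C, hs, xs, I1, I2, I3, I4, I5, I6, I7, I8, I9, I10, I11⟩ := key (n+1) le_rfl
  apply hrank.2
  refine ⟨fun i => hs (i : ℕ), fun i => I6 (i : ℕ) i.isLt, ?_⟩
  have hwitness : ∀ p q : ℕ, p < q → q < n + 1 → (hs p ∩ (hs q)ᶜ).Nonempty := by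
    intro p q hpq hq
    have hp : p < n + 1 := hpq.trans hq
    by_contra hemp
    have hsub : hs p ⊆ hs q := by
      intro t ht
      by_contra htq
      exact hemp ⟨t, ht, htq⟩
    have heq : hs q = hs p := I11 p hp (hs q) (I6 q hq).1 hsub (I8 q hq)
    have : xs p ∈ hs p := heq ▸ I10 p q hpq hq
    exact I9 p hp this
  intro i j hij
  have hne : (i : ℕ) ≠ (j : ℕ) := fun h => hij (Fin.ext h)
  rcases hne.lt_or_gt with hlt | hlt
  · obtain ⟨t, htp, htq⟩ := hwitness i j hlt j.isLt
    exact ⟨⟨b, I7 i i.isLt, I7 j j.isLt⟩,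
      ⟨xs (i:ℕ), I9 (i:ℕ) i.isLt, I10 (i:ℕ) (j:ℕ) hlt j.isLt⟩,
      ⟨t, htp, htq⟩,
      ⟨a, I8 (i:ℕ) i.isLt, I8 (j:ℕ) j.isLt⟩⟩
  · obtain ⟨t, htp, htq⟩ := hwitness j i hlt i.isLt
    exact ⟨⟨b, I7 i i.isLt, I7 j j.isLt⟩,
      ⟨t, htq, htp⟩,
      ⟨xs (j:ℕ), I10 (j:ℕ) (i:ℕ) hlt i.isLt, I9 (j:ℕ) j.isLt⟩,
      ⟨a, I8 (i:ℕ) i.isLt, I8 (j:ℕ) j.isLt⟩⟩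
end

section
/- Let X be a complete median space of finite rank and let C₁, C₂ be nonempty closed convex subsets of X such that no halfspace of X is transverse to both C₁ and C₂. Then the image π_{C₁}(C₂) is a single point c₁ and π_{C₂}(C₁) is a single point c₂, and for all x, y ∈ Conv(C₁ ∪ C₂), a halfspace h of X separates x from y (one of x,y lies in h and the other in hᶜ) if and only if exactly one of the following holds: h separates π_{C₁}(x) from π_{C₁}(y); h separates π_{C₂}(x) from π_{C₂}(y); h separates π_{[c₁,c₂]}(x) from π_{[c₁,c₂]}(y). -/
namespace MedianTheory

variable {X : Type*} [MetricSpace X]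

lemma mem_mI {a b x : X} : x ∈ mInterval a b ↔ dist a x + dist x b = dist a b := Iff.rfl

lemma mI_left {a b : X} : a ∈ mInterval a b := by simp [mInterval]

lemma mI_right {a b : X} : b ∈ mInterval a b := by simp [mInterval]

lemma mI_comm {a b x : X} (h : x ∈ mInterval a b) : x ∈ mInterval b a := by
  rw [mem_mI] at h ⊢
  rw [dist_comm b x, dist_comm x a, dist_comm b a]
  linarith

lemma mI_self {a x : X} (h : x ∈ mInterval a a) : x = a := by
  rw [mem_mI, dist_self] at h
  have h1 : dist x a = 0 := by
    have := dist_nonneg (x := a) (y := x)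
    have := dist_nonneg (x := x) (y := a)
    linarith
  exact dist_eq_zero.mp h1

lemma f4_left {a b y x : X} (hy : y ∈ mInterval a b) (hx : x ∈ mInterval a y) :
    x ∈ mInterval a b := by
  rw [mem_mI] at hy hx ⊢
  have t1 := dist_triangle x y b
  have t2 := dist_triangle a x b
  linarith

lemma f4_right {a b y x : X} (hy : y ∈ mInterval a b) (hx : x ∈ mInterval a y) :
    y ∈ mInterval x b := by
  have hx' := f4_left hy hx
  rw [mem_mI] at hy hx hx' ⊢
  have t1 := dist_triangle x y b
  linarith

lemma f4_left' {a b y x : X} (hy : y ∈ mInterval a b) (hx : x ∈ mInterval y b) :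
    x ∈ mInterval a b := mI_comm (f4_left (mI_comm hy) (mI_comm hx))

lemma between_shrink {u v k u1 : X} (hk : k ∈ mInterval u v) (h1 : u1 ∈ mInterval k u) :
    k ∈ mInterval u1 v := by
  rw [mem_mI] at hk h1 ⊢
  linarith [dist_triangle u1 k v, dist_triangle u u1 v, dist_comm u k, dist_comm k u1,
    dist_comm u u1]

noncomputable def med (hm : IsMedianSpace X) (a b c : X) : X :=
  (hm a b c).exists.choose

lemma med_ab (hm : IsMedianSpace X) (a b c : X) : med hm a b c ∈ mInterval a b :=
  (hm a b c).exists.choose_spec.1.1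

lemma med_bc (hm : IsMedianSpace X) (a b c : X) : med hm a b c ∈ mInterval b c :=
  (hm a b c).exists.choose_spec.1.2

lemma med_ac (hm : IsMedianSpace X) (a b c : X) : med hm a b c ∈ mInterval a c :=
  (hm a b c).exists.choose_spec.2

lemma med_unique (hm : IsMedianSpace X) {a b c z : X} (h1 : z ∈ mInterval a b)
    (h2 : z ∈ mInterval b c) (h3 : z ∈ mInterval a c) : z = med hm a b c :=
  (hm a b c).unique ⟨⟨h1, h2⟩, h3⟩ ⟨⟨med_ab hm a b c, med_bc hm a b c⟩, med_ac hm a b c⟩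

lemma star (hm : IsMedianSpace X) {a b c t : X} (h1 : t ∈ mInterval a b)
    (h2 : t ∈ mInterval a c) : t ∈ mInterval a (med hm a b c) := by
  have hp_ab : med hm t b c ∈ mInterval a b := f4_left' h1 (med_ab hm t b c)
  have hp_ac : med hm t b c ∈ mInterval a c := f4_left' h2 (med_ac hm t b c)
  have hpm : med hm t b c = med hm a b c := med_unique hm hp_ab (med_bc hm t b c) hp_ac
  have hmtb : med hm a b c ∈ mInterval t b := by rw [← hpm]; exact med_ab hm t b c
  have hq_tb : med hm a t (med hm a b c) ∈ mInterval t b :=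
    f4_left hmtb (med_bc hm a t (med hm a b c))
  have hq_ab : med hm a t (med hm a b c) ∈ mInterval a b :=
    f4_left h1 (med_ab hm a t (med hm a b c))
  have e1 : med hm a t (med hm a b c) = med hm a t b :=
    med_unique hm (med_ab hm a t (med hm a b c)) hq_tb hq_ab
  have e2 : t = med hm a t b := med_unique hm mI_right mI_left h1
  have e3 : t = med hm a t (med hm a b c) := e2.trans e1.symm
  have := med_ac hm a t (med hm a b c)
  rwa [← e3] at this

lemma med_min (hm : IsMedianSpace X) {a b x : X} (k : X) (hx : x ∈ mInterval a b) :
    dist k (med hm k a b) ≤ dist k x := by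
  have g1 := med_ab hm k a b
  have g2 := med_bc hm k a b
  have g3 := med_ac hm k a b
  rw [mem_mI] at g1 g2 g3 hx
  have t1 := dist_triangle k x a
  have t2 := dist_triangle k x b
  linarith [dist_comm x a, dist_comm (med hm k a b) a]

lemma mconvex_mI (hm : IsMedianSpace X) (a b : X) : MConvex (mInterval a b) := by
  intro u hu v hv k hk
  have hu1_ak := med_ab hm a k u
  have hu1_ku := med_bc hm a k u
  have hu1_au := med_ac hm a k u
  have hv1_ak := med_ab hm a k v
  have hv1_kv := med_bc hm a k v
  have hv1_av := med_ac hm a k v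
  have hu1_ab : med hm a k u ∈ mInterval a b := f4_left hu hu1_au
  have hv1_ab : med hm a k v ∈ mInterval a b := f4_left hv hv1_av
  have hk1 : k ∈ mInterval (med hm a k u) v := between_shrink hk hu1_ku
  have hk2 : k ∈ mInterval (med hm a k u) (med hm a k v) :=
    mI_comm (between_shrink (mI_comm hk1) hv1_kv)
  -- second stage
  have hu2_ka : med hm b k (med hm a k u) ∈ mInterval k a :=
    f4_left (mI_comm hu1_ak) (med_bc hm b k (med hm a k u))
  have hu2_kb : med hm b k (med hm a k u) ∈ mInterval k b :=
    mI_comm (med_ab hm b k (med hm a k u))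
  have hv2_ka : med hm b k (med hm a k v) ∈ mInterval k a :=
    f4_left (mI_comm hv1_ak) (med_bc hm b k (med hm a k v))
  have hv2_kb : med hm b k (med hm a k v) ∈ mInterval k b :=
    mI_comm (med_ab hm b k (med hm a k v))
  have hu2_ab : med hm b k (med hm a k u) ∈ mInterval a b :=
    mI_comm (f4_left (mI_comm hu1_ab) (med_ac hm b k (med hm a k u)))
  have hv2_ab : med hm b k (med hm a k v) ∈ mInterval a b :=
    mI_comm (f4_left (mI_comm hv1_ab) (med_ac hm b k (med hm a k v)))
  have hu2g : med hm b k (med hm a k u) ∈ mInterval k (med hm k a b) :=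
    star hm hu2_ka hu2_kb
  have hv2g : med hm b k (med hm a k v) ∈ mInterval k (med hm k a b) :=
    star hm hv2_ka hv2_kb
  have hu2eq : med hm b k (med hm a k u) = med hm k a b := by
    have hmin := med_min hm k hu2_ab
    rw [mem_mI] at hu2g
    have : dist (med hm b k (med hm a k u)) (med hm k a b) ≤ 0 := by linarith
    exact dist_le_zero.mp this
  have hv2eq : med hm b k (med hm a k v) = med hm k a b := by
    have hmin := med_min hm k hv2_ab
    rw [mem_mI] at hv2g
    have : dist (med hm b k (med hm a k v)) (med hm k a b) ≤ 0 := by linarith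
    exact dist_le_zero.mp this
  have hk3 : k ∈ mInterval (med hm b k (med hm a k u)) (med hm a k v) :=
    between_shrink hk2 (med_bc hm b k (med hm a k u))
  have hk4 : k ∈ mInterval (med hm b k (med hm a k u)) (med hm b k (med hm a k v)) :=
    mI_comm (between_shrink (mI_comm hk3) (med_bc hm b k (med hm a k v)))
  rw [hu2eq, hv2eq] at hk4
  have : k = med hm k a b := mI_self hk4
  rw [this]
  exact med_bc hm k a b


lemma med_mem_left (hm : IsMedianSpace X) {b c z w : X} (hw : w ∈ mInterval z c) :
    med hm b c z ∈ mInterval b w := by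
  have hγ_bc := med_ab hm b c z
  have hγ_cz := med_bc hm b c z
  have hγ_bz := med_ac hm b c z
  have hρ_bw := med_ab hm b w (med hm b c z)
  have hρ_wγ := med_bc hm b w (med hm b c z)
  have hρ_bγ := med_ac hm b w (med hm b c z)
  have hρ_bz : med hm b w (med hm b c z) ∈ mInterval b z := f4_left hγ_bz hρ_bγ
  have hρ_zc : med hm b w (med hm b c z) ∈ mInterval z c :=
    mconvex_mI hm z c w hw (med hm b c z) (mI_comm hγ_cz) hρ_wγ
  have hstar : med hm b w (med hm b c z) ∈ mInterval z (med hm z b c) :=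
    star hm (mI_comm hρ_bz) hρ_zc
  have hγeq : med hm b c z = med hm z b c :=
    med_unique hm (mI_comm hγ_bz) hγ_bc (mI_comm hγ_cz)
  rw [← hγeq] at hstar
  rw [mem_mI] at hγ_bz hρ_bγ hstar
  have t := dist_triangle b (med hm b w (med hm b c z)) z
  have hzero : dist (med hm b w (med hm b c z)) (med hm b c z) ≤ 0 := by
    linarith [dist_comm (med hm b c z) z,
      dist_comm (med hm b w (med hm b c z)) z]
  have heq : med hm b w (med hm b c z) = med hm b c z := dist_le_zero.mp hzero
  rw [← heq]
  exact hρ_bw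

lemma lemL (hm : IsMedianSpace X) {b c z1 z2 z : X} (h1 : z1 ∈ mInterval b c)
    (h2 : z ∈ mInterval z1 z2) : z ∈ mInterval b (med hm c z2 z) := by
  have hw_cz2 := med_ab hm c z2 z
  have hw_z2z := med_bc hm c z2 z
  have hw_cz := med_ac hm c z2 z
  have hκ_zb := med_ab hm z b z1
  have hκ_bz1 := med_bc hm z b z1
  have hκ_zz1 := med_ac hm z b z1
  have hzk : z ∈ mInterval (med hm z b z1) z2 := f4_right h2 (mI_comm hκ_zz1)
  have hzkw : z ∈ mInterval (med hm z b z1) (med hm c z2 z) := by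
    rw [mem_mI]
    have a1 : dist (med hm z b z1) z + dist z z2 = dist (med hm z b z1) z2 := hzk
    have a2 : dist z (med hm c z2 z) + dist (med hm c z2 z) z2 = dist z z2 :=
      mI_comm hw_z2z
    linarith [dist_triangle (med hm z b z1) z (med hm c z2 z),
      dist_triangle (med hm z b z1) (med hm c z2 z) z2]
  have hγ : med hm b c z ∈ mInterval b (med hm c z2 z) := med_mem_left hm (mI_comm hw_cz)
  have hperm : med hm b z c = med hm b c z :=
    med_unique hm (med_ac hm b z c) (mI_comm (med_bc hm b z c)) (med_ab hm b z c)
  have hκγ : med hm z b z1 ∈ mInterval b (med hm b z c) :=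
    star hm (mI_comm hκ_zb) (f4_left h1 hκ_bz1)
  rw [hperm] at hκγ
  have hκw : med hm z b z1 ∈ mInterval b (med hm c z2 z) := f4_left hγ hκγ
  rw [mem_mI] at hκw hzkw ⊢
  have t1 := dist_triangle b (med hm z b z1) z
  have t2 := dist_triangle b z (med hm c z2 z)
  linarith

lemma join_convex (hm : IsMedianSpace X) {C : Set X} (hC : MConvex C) (u : X) :
    MConvex {z | ∃ c ∈ C, z ∈ mInterval u c} := by
  rintro z1 ⟨c1, hc1, hz1⟩ z2 ⟨c2, hc2, hz2⟩ z hz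
  have h1 : z ∈ mInterval u (med hm c1 z2 z) := lemL hm hz1 hz
  have h2 : med hm c1 z2 z ∈ mInterval u (med hm c2 c1 (med hm c1 z2 z)) :=
    lemL hm hz2 (mI_comm (med_ab hm c1 z2 z))
  exact ⟨med hm c2 c1 (med hm c1 z2 z),
    hC c2 hc2 c1 hc1 (med_ab hm c2 c1 (med hm c1 z2 z)), f4_left h2 h1⟩

lemma pasch (hm : IsMedianSpace X) {a b c x y : X} (hx : x ∈ mInterval a b)
    (hy : y ∈ mInterval b c) : ∃ t, t ∈ mInterval a y ∧ t ∈ mInterval x c := by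
  have hP1 : med hm a c b = med hm a b c :=
    med_unique hm (med_ac hm a c b) (mI_comm (med_bc hm a c b)) (med_ab hm a c b)
  have hP2 : med hm c a b = med hm a b c :=
    med_unique hm (med_bc hm c a b) (mI_comm (med_ac hm c a b)) (mI_comm (med_ab hm c a b))
  have hg_ay : med hm a b c ∈ mInterval a y := by
    have h := med_mem_left hm (b := a) hy
    rwa [hP1] at h
  have hg_cx : med hm a b c ∈ mInterval c x := by
    have h := med_mem_left hm (b := c) (mI_comm hx)
    rwa [hP2] at h
  refine ⟨med hm x y (med hm a b c), ?_, ?_⟩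
  · exact mI_comm (f4_left (mI_comm hg_ay) (med_bc hm x y (med hm a b c)))
  · exact f4_left (mI_comm hg_cx) (med_ac hm x y (med hm a b c))

lemma exists_sep (hm : IsMedianSpace X) {p q : X} (hpq : p ≠ q) :
    ∃ h : Set X, IsHalfspace h ∧ p ∈ h ∧ q ∉ h := by
  classical
  set S : Set (Set X) := {C | MConvex C ∧ p ∈ C ∧ q ∉ C} with hS
  have hpS : {p} ∈ S := by
    refine ⟨?_, rfl, fun hq' => hpq (Set.mem_singleton_iff.mp hq').symm⟩
    intro a ha b hb x hx
    rw [Set.mem_singleton_iff] at ha hb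
    subst ha; subst hb
    exact mI_self hx
  obtain ⟨M, _, hM⟩ := zorn_subset_nonempty S (fun c hcS hchain hcne => by
    refine ⟨⋃₀ c, ⟨?_, ?_, ?_⟩, fun s hs => Set.subset_sUnion_of_mem hs⟩
    · intro a ha b hb x hx
      obtain ⟨s, hs, has⟩ := ha
      obtain ⟨t, ht, hbt⟩ := hb
      by_cases hst : s = t
      · subst hst; exact ⟨s, hs, (hcS hs).1 a has b hbt hx⟩
      · rcases hchain hs ht hst with h' | h'
        · exact ⟨t, ht, (hcS ht).1 a (h' has) b hbt hx⟩
        · exact ⟨s, hs, (hcS hs).1 a has b (h' hbt) hx⟩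
    · obtain ⟨s, hs⟩ := hcne
      exact ⟨s, hs, (hcS hs).2.1⟩
    · rintro ⟨s, hs, hqs⟩
      exact (hcS hs).2.2 hqs) {p} hpS
  obtain ⟨⟨hMcv, hpM, hqM⟩, hMmax⟩ := hM
  have hjoin : ∀ u : X, u ∉ M → ∃ cm ∈ M, q ∈ mInterval u cm := by
    intro u hu
    have hJconv := join_convex hm hMcv u
    have hMJ : M ⊆ {z | ∃ c ∈ M, z ∈ mInterval u c} := fun m hm' => ⟨m, hm', mI_right⟩
    by_contra hq'
    push_neg at hq'
    have hJS : {z | ∃ c ∈ M, z ∈ mInterval u c} ∈ S := by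
      refine ⟨hJconv, hMJ hpM, ?_⟩
      rintro ⟨cm, h1', h2'⟩
      exact hq' cm h1' h2'
    have hsub := hMmax hJS hMJ
    exact hu (hsub ⟨p, hpM, mI_left⟩)
  refine ⟨M, ⟨hMcv, ?_⟩, hpM, hqM⟩
  intro u hu v hv z hz
  by_contra hzM
  rw [Set.mem_compl_iff, not_not] at hzM
  rw [Set.mem_compl_iff] at hu hv
  obtain ⟨cu, hcu, hqcu⟩ := hjoin u hu
  obtain ⟨cv, hcv, hqcv⟩ := hjoin v hv
  obtain ⟨t, htuq, htzcv⟩ := pasch hm hz hqcv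
  have htM : t ∈ M := hMcv z hzM cv hcv htzcv
  have hqt : q ∈ mInterval t cu := f4_right hqcu htuq
  exact hqM (hMcv t htM cu hcu hqt)

lemma gate_mem (hm : IsMedianSpace X) {C : Set X} (hC : MConvex C) {π : X → X}
    (hπ : IsNearestPointProj C π) (x c : X) (hc : c ∈ C) : π x ∈ mInterval c x := by
  have h1 := med_ab hm c (π x) x
  have h2 := med_bc hm c (π x) x
  have h3 := med_ac hm c (π x) x
  have hmC : med hm c (π x) x ∈ C := hC c hc (π x) (hπ x).1 h1
  have hd : dist x (π x) ≤ dist x (med hm c (π x) x) := by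
    rw [(hπ x).2]
    exact Metric.infDist_le_dist_of_mem hmC
  have heq : med hm c (π x) x = π x := by
    rw [mem_mI] at h2
    have : dist (π x) (med hm c (π x) x) ≤ 0 := by
      linarith [dist_comm x (π x), dist_comm (med hm c (π x) x) x]
    have h' := dist_le_zero.mp this
    exact h'.symm
  rw [← heq]
  exact h3

lemma sep_lift (hm : IsMedianSpace X) {C : Set X} (hC : MConvex C) {π : X → X}
    (hπ : IsNearestPointProj C π) {h : Set X} (hh : IsHalfspace h) {x y : X}
    (hs : SeparatesPts h (π x) (π y)) : SeparatesPts h x y := by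
  rcases hs with ⟨hx1, hy1⟩ | ⟨hy1, hx1⟩
  · left
    constructor
    · by_contra hxh
      exact (hh.2 (π y) hy1 x hxh (gate_mem hm hC hπ x (π y) (hπ y).1)) hx1
    · intro hyh
      exact hy1 (hh.1 (π x) hx1 y hyh (gate_mem hm hC hπ y (π x) (hπ x).1))
  · right
    constructor
    · by_contra hyh
      exact (hh.2 (π x) hx1 y hyh (gate_mem hm hC hπ y (π x) (hπ x).1)) hy1
    · intro hxh
      exact hx1 (hh.1 (π y) hy1 x hxh (gate_mem hm hC hπ x (π y) (hπ y).1))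

lemma sep_swap {h : Set X} {x y : X} (hs : SeparatesPts h x y) : SeparatesPts h y x := by
  rcases hs with ⟨h1, h2⟩ | ⟨h1, h2⟩
  · exact Or.inr ⟨h1, h2⟩
  · exact Or.inl ⟨h1, h2⟩

end MedianTheory


/-- If no halfspace is transverse to both closed convex sets `C₁`, `C₂`, then the
projections `π_{C₁}(C₂)` and `π_{C₂}(C₁)` are singletons `{c₁}`, `{c₂}`, and a halfspace
separates two points of `Conv(C₁ ∪ C₂)` iff it separates exactly one of the corresponding
pairs of projections to `C₁`, `C₂` or `[c₁,c₂]`. -/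
theorem statement6 (X : Type*) [MetricSpace X] [CompleteSpace X]
    (hmed : IsMedianSpace X) (hrank : ∃ n : ℕ, HasMedianRank X n)
    (C₁ C₂ : Set X) (h₁ne : C₁.Nonempty) (h₂ne : C₂.Nonempty)
    (h₁cl : IsClosed C₁) (h₂cl : IsClosed C₂) (h₁cv : MConvex C₁) (h₂cv : MConvex C₂)
    (hns : ¬ ∃ h : Set X, IsHalfspace h ∧
      (h ∩ C₁).Nonempty ∧ (hᶜ ∩ C₁).Nonempty ∧ (h ∩ C₂).Nonempty ∧ (hᶜ ∩ C₂).Nonempty)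
    (π₁ π₂ : X → X) (hπ₁ : IsNearestPointProj C₁ π₁) (hπ₂ : IsNearestPointProj C₂ π₂) :
    ∃ c₁ c₂ : X, π₁ '' C₂ = {c₁} ∧ π₂ '' C₁ = {c₂} ∧
      ∀ π₀ : X → X, IsNearestPointProj (mInterval c₁ c₂) π₀ →
      ∀ x ∈ mConvexHull (C₁ ∪ C₂), ∀ y ∈ mConvexHull (C₁ ∪ C₂),
      ∀ h : Set X, IsHalfspace h →
        (SeparatesPts h x y ↔
          ((SeparatesPts h (π₁ x) (π₁ y) ∧ ¬ SeparatesPts h (π₂ x) (π₂ y) ∧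
              ¬ SeparatesPts h (π₀ x) (π₀ y)) ∨
           (¬ SeparatesPts h (π₁ x) (π₁ y) ∧ SeparatesPts h (π₂ x) (π₂ y) ∧
              ¬ SeparatesPts h (π₀ x) (π₀ y)) ∨
           (¬ SeparatesPts h (π₁ x) (π₁ y) ∧ ¬ SeparatesPts h (π₂ x) (π₂ y) ∧
              SeparatesPts h (π₀ x) (π₀ y)))) := by
  classical
  open MedianTheory in
  have hπ₁mem : ∀ x, π₁ x ∈ C₁ := fun x => (hπ₁ x).1
  have hπ₂mem : ∀ x, π₂ x ∈ C₂ := fun x => (hπ₂ x).1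
  obtain ⟨p₂, hp₂C⟩ := h₂ne
  obtain ⟨p₁, hp₁C⟩ := h₁ne
  set c₁ : X := π₁ p₂ with hc₁def
  set c₂ : X := π₂ p₁ with hc₂def
  have gate₁ : ∀ x : X, ∀ c ∈ C₁, π₁ x ∈ mInterval c x :=
    fun x c hc => MedianTheory.gate_mem hmed h₁cv hπ₁ x c hc
  have gate₂ : ∀ x : X, ∀ c ∈ C₂, π₂ x ∈ mInterval c x :=
    fun x c hc => MedianTheory.gate_mem hmed h₂cv hπ₂ x c hc
  have key₁ : ∀ a ∈ C₂, π₁ a = c₁ := by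
    intro a ha
    by_contra hne
    obtain ⟨h, hh, hp, hq⟩ := MedianTheory.exists_sep hmed hne
    refine hns ⟨h, hh, ⟨π₁ a, hp, hπ₁mem a⟩, ⟨c₁, hq, hπ₁mem p₂⟩, ⟨a, ?_, ha⟩,
      ⟨p₂, ?_, hp₂C⟩⟩
    · by_contra hah
      exact (hh.2 c₁ hq a hah (gate₁ a c₁ (hπ₁mem p₂))) hp
    · intro hp₂h
      exact hq (hh.1 (π₁ a) hp p₂ hp₂h (gate₁ p₂ (π₁ a) (hπ₁mem a)))
  have key₂ : ∀ a ∈ C₁, π₂ a = c₂ := by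
    intro a ha
    by_contra hne
    obtain ⟨h, hh, hp, hq⟩ := MedianTheory.exists_sep hmed hne
    refine hns ⟨h, hh, ⟨a, ?_, ha⟩, ⟨p₁, ?_, hp₁C⟩, ⟨π₂ a, hp, hπ₂mem a⟩,
      ⟨c₂, hq, hπ₂mem p₁⟩⟩
    · by_contra hah
      exact (hh.2 c₂ hq a hah (gate₂ a c₂ (hπ₂mem p₁))) hp
    · intro hp₁h
      exact hq (hh.1 (π₂ a) hp p₁ hp₁h (gate₂ p₁ (π₂ a) (hπ₂mem a)))
  have himg₁ : π₁ '' C₂ = {c₁} := by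
    ext z
    constructor
    · rintro ⟨a, ha, rfl⟩
      exact key₁ a ha
    · rintro hz
      rw [Set.mem_singleton_iff] at hz
      exact ⟨p₂, hp₂C, by rw [hz]⟩
  have himg₂ : π₂ '' C₁ = {c₂} := by
    ext z
    constructor
    · rintro ⟨a, ha, rfl⟩
      exact key₂ a ha
    · rintro hz
      rw [Set.mem_singleton_iff] at hz
      exact ⟨p₁, hp₁C, by rw [hz]⟩
  refine ⟨c₁, c₂, himg₁, himg₂, ?_⟩
  intro π₀ hπ₀ x hx y hy h hh
  have hIconv : MConvex (mInterval c₁ c₂) := MedianTheory.mconvex_mI hmed c₁ c₂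
  have gate₀ : ∀ x : X, ∀ c ∈ mInterval c₁ c₂, π₀ x ∈ mInterval c x :=
    fun x c hc => MedianTheory.gate_mem hmed hIconv hπ₀ x c hc
  have hπ₀mem : ∀ x, π₀ x ∈ mInterval c₁ c₂ := fun x => (hπ₀ x).1
  have hc₁I : c₁ ∈ mInterval c₁ c₂ := MedianTheory.mI_left
  have hc₂I : c₂ ∈ mInterval c₁ c₂ := MedianTheory.mI_right
  have hc₁C : c₁ ∈ C₁ := hπ₁mem p₂
  have hc₂C : c₂ ∈ C₂ := hπ₂mem p₁
  have compl_sub : ∀ D : Set X, ¬(h ∩ D).Nonempty → D ⊆ hᶜ :=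
    fun D hn c hc hch => hn ⟨c, hch, hc⟩
  have compl_sub' : ∀ D : Set X, ¬(hᶜ ∩ D).Nonempty → D ⊆ h := by
    intro D hn c hc
    by_contra hch
    exact hn ⟨c, hch, hc⟩
  have mkSep : ∀ {u v : X}, u ∈ h → v ∈ hᶜ → SeparatesPts h u v :=
    fun hu hv => Or.inl ⟨hu, hv⟩
  have noSepIn : ∀ {u v : X}, u ∈ h → v ∈ h → ¬SeparatesPts h u v := by
    rintro u v hu hv (⟨_, h2⟩ | ⟨_, h2⟩)
    · exact h2 hv
    · exact h2 hu
  have noSepOut : ∀ {u v : X}, u ∈ hᶜ → v ∈ hᶜ → ¬SeparatesPts h u v := by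
    rintro u v hu hv (⟨h1, _⟩ | ⟨h1, _⟩)
    · exact hu h1
    · exact hv h1
  have fwd : ∀ x' y', x' ∈ mConvexHull (C₁ ∪ C₂) → y' ∈ mConvexHull (C₁ ∪ C₂) →
      x' ∈ h → y' ∈ hᶜ →
      ((SeparatesPts h (π₁ x') (π₁ y') ∧ ¬ SeparatesPts h (π₂ x') (π₂ y') ∧
          ¬ SeparatesPts h (π₀ x') (π₀ y')) ∨
       (¬ SeparatesPts h (π₁ x') (π₁ y') ∧ SeparatesPts h (π₂ x') (π₂ y') ∧
          ¬ SeparatesPts h (π₀ x') (π₀ y')) ∨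
       (¬ SeparatesPts h (π₁ x') (π₁ y') ∧ ¬ SeparatesPts h (π₂ x') (π₂ y') ∧
          SeparatesPts h (π₀ x') (π₀ y'))) := by
    intro x' y' hx' hy' hxh hyh
    by_cases T1a : (h ∩ C₁).Nonempty
    · by_cases T1b : (hᶜ ∩ C₁).Nonempty
      · -- C₁ transverse
        obtain ⟨d1, hd1h, hd1C⟩ := T1a
        obtain ⟨d2, hd2h, hd2C⟩ := T1b
        have hsep₁ : SeparatesPts h (π₁ x') (π₁ y') :=
          mkSep (hh.1 d1 hd1h x' hxh (gate₁ x' d1 hd1C))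
            (hh.2 d2 hd2h y' hyh (gate₁ y' d2 hd2C))
        by_cases T2a : (h ∩ C₂).Nonempty
        · by_cases T2b : (hᶜ ∩ C₂).Nonempty
          · exact absurd ⟨h, hh, ⟨d1, hd1h, hd1C⟩, ⟨d2, hd2h, hd2C⟩, T2a, T2b⟩ hns
          · -- C₂ ⊆ h
            have hC2h : C₂ ⊆ h := compl_sub' C₂ T2b
            have hc₁h : c₁ ∈ h := hh.1 d1 hd1h p₂ (hC2h hp₂C) (gate₁ p₂ d1 hd1C)
            have hIh : mInterval c₁ c₂ ⊆ h := hh.1 c₁ hc₁h c₂ (hC2h hc₂C)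
            exact Or.inl ⟨hsep₁, noSepIn (hC2h (hπ₂mem x')) (hC2h (hπ₂mem y')),
              noSepIn (hIh (hπ₀mem x')) (hIh (hπ₀mem y'))⟩
        · -- C₂ ⊆ hᶜ
          have hC2h : C₂ ⊆ hᶜ := compl_sub C₂ T2a
          have hc₁h : c₁ ∈ hᶜ := hh.2 d2 hd2h p₂ (hC2h hp₂C) (gate₁ p₂ d2 hd2C)
          have hIh : mInterval c₁ c₂ ⊆ hᶜ := hh.2 c₁ hc₁h c₂ (hC2h hc₂C)
          exact Or.inl ⟨hsep₁, noSepOut (hC2h (hπ₂mem x')) (hC2h (hπ₂mem y')),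
            noSepOut (hIh (hπ₀mem x')) (hIh (hπ₀mem y'))⟩
      · -- C₁ ⊆ h
        have hC1h : C₁ ⊆ h := compl_sub' C₁ T1b
        have hn₁ : ¬ SeparatesPts h (π₁ x') (π₁ y') :=
          noSepIn (hC1h (hπ₁mem x')) (hC1h (hπ₁mem y'))
        by_cases T2a : (h ∩ C₂).Nonempty
        · by_cases T2b : (hᶜ ∩ C₂).Nonempty
          · -- C₂ transverse, C₁ ⊆ h
            obtain ⟨e1, he1h, he1C⟩ := T2a
            obtain ⟨e2, he2h, he2C⟩ := T2b
            have hsep₂ : SeparatesPts h (π₂ x') (π₂ y') :=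
              mkSep (hh.1 e1 he1h x' hxh (gate₂ x' e1 he1C))
                (hh.2 e2 he2h y' hyh (gate₂ y' e2 he2C))
            have hc₂h : c₂ ∈ h := hh.1 e1 he1h p₁ (hC1h hp₁C) (gate₂ p₁ e1 he1C)
            have hIh : mInterval c₁ c₂ ⊆ h := hh.1 c₁ (hC1h hc₁C) c₂ hc₂h
            exact Or.inr (Or.inl ⟨hn₁, hsep₂,
              noSepIn (hIh (hπ₀mem x')) (hIh (hπ₀mem y'))⟩)
          · -- C₂ ⊆ h : everything in h, contradiction with y'
            have hC2h : C₂ ⊆ h := compl_sub' C₂ T2b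
            have : y' ∈ h := Set.mem_sInter.mp hy' h ⟨hh.1, Set.union_subset hC1h hC2h⟩
            exact absurd this hyh
        · -- C₂ ⊆ hᶜ : mixed case, π₀ separates
          have hC2h : C₂ ⊆ hᶜ := compl_sub C₂ T2a
          exact Or.inr (Or.inr ⟨hn₁,
            noSepOut (hC2h (hπ₂mem x')) (hC2h (hπ₂mem y')),
            mkSep (hh.1 c₁ (hC1h hc₁C) x' hxh (gate₀ x' c₁ hc₁I))
              (hh.2 c₂ (hC2h hc₂C) y' hyh (gate₀ y' c₂ hc₂I))⟩)
    · -- C₁ ⊆ hᶜ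
      have hC1h : C₁ ⊆ hᶜ := compl_sub C₁ T1a
      have hn₁ : ¬ SeparatesPts h (π₁ x') (π₁ y') :=
        noSepOut (hC1h (hπ₁mem x')) (hC1h (hπ₁mem y'))
      by_cases T2a : (h ∩ C₂).Nonempty
      · by_cases T2b : (hᶜ ∩ C₂).Nonempty
        · -- C₂ transverse, C₁ ⊆ hᶜ
          obtain ⟨e1, he1h, he1C⟩ := T2a
          obtain ⟨e2, he2h, he2C⟩ := T2b
          have hsep₂ : SeparatesPts h (π₂ x') (π₂ y') :=
            mkSep (hh.1 e1 he1h x' hxh (gate₂ x' e1 he1C))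
              (hh.2 e2 he2h y' hyh (gate₂ y' e2 he2C))
          have hc₂h : c₂ ∈ hᶜ := hh.2 e2 he2h p₁ (hC1h hp₁C) (gate₂ p₁ e2 he2C)
          have hIh : mInterval c₁ c₂ ⊆ hᶜ := hh.2 c₁ (hC1h hc₁C) c₂ hc₂h
          exact Or.inr (Or.inl ⟨hn₁, hsep₂,
            noSepOut (hIh (hπ₀mem x')) (hIh (hπ₀mem y'))⟩)
        · -- C₂ ⊆ h : mixed case, π₀ separates
          have hC2h : C₂ ⊆ h := compl_sub' C₂ T2b
          exact Or.inr (Or.inr ⟨hn₁,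
            noSepIn (hC2h (hπ₂mem x')) (hC2h (hπ₂mem y')),
            mkSep (hh.1 c₂ (hC2h hc₂C) x' hxh (gate₀ x' c₂ hc₂I))
              (hh.2 c₁ (hC1h hc₁C) y' hyh (gate₀ y' c₁ hc₁I))⟩)
      · -- C₂ ⊆ hᶜ : everything in hᶜ, contradiction with x'
        have hC2h : C₂ ⊆ hᶜ := compl_sub C₂ T2a
        have : x' ∈ hᶜ := Set.mem_sInter.mp hx' hᶜ ⟨hh.2, Set.union_subset hC1h hC2h⟩
        exact absurd hxh this
  constructor
  · intro hsep
    rcases hsep with ⟨hxh, hyh⟩ | ⟨hyh, hxh⟩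
    · exact fwd x y hx hy hxh hyh
    · rcases fwd y x hy hx hyh hxh with ⟨s1, n2, n0⟩ | ⟨n1, s2, n0⟩ | ⟨n1, n2, s0⟩
      · exact Or.inl ⟨MedianTheory.sep_swap s1, fun hs => n2 (MedianTheory.sep_swap hs),
          fun hs => n0 (MedianTheory.sep_swap hs)⟩
      · exact Or.inr (Or.inl ⟨fun hs => n1 (MedianTheory.sep_swap hs),
          MedianTheory.sep_swap s2, fun hs => n0 (MedianTheory.sep_swap hs)⟩)
      · exact Or.inr (Or.inr ⟨fun hs => n1 (MedianTheory.sep_swap hs),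
          fun hs => n2 (MedianTheory.sep_swap hs), MedianTheory.sep_swap s0⟩)
  · rintro (⟨s1, -, -⟩ | ⟨-, s2, -⟩ | ⟨-, -, s0⟩)
    · exact MedianTheory.sep_lift hmed h₁cv hπ₁ hh s1
    · exact MedianTheory.sep_lift hmed h₂cv hπ₂ hh s2
    · exact MedianTheory.sep_lift hmed hIconv hπ₀ hh s0
end

section
/- Let X be a complete median space of finite rank and let C₁, C₂ be nonempty closed convex subsets of X such that no halfspace of X is transverse to both C₁ and C₂. Let c₁ be the unique point of π_{C₁}(C₂) and c₂ the unique point of π_{C₂}(C₁). Then the map f : Conv(C₁ ∪ C₂) → C₁ × C₂ × [c₁,c₂], f(x) = (π_{C₁}(x), π_{C₂}(x), π_{[c₁,c₂]}(x)), is an isometric embedding, where the target carries the ℓ¹-product metric d((a,b,c),(a',b',c')) = d(a,a') + d(b,b') + d(c,c'). -/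
set_option linter.unusedSectionVars false
set_option linter.unusedVariables false

namespace MedianDev

variable {X : Type*} [MetricSpace X]

lemma mem_mI {a b x : X} : x ∈ mInterval a b ↔ dist a x + dist x b = dist a b := Iff.rfl

lemma mI_symm {a b x : X} (h : x ∈ mInterval a b) : x ∈ mInterval b a := by
  rw [mem_mI] at h ⊢
  rw [dist_comm b x, dist_comm x a, dist_comm b a]
  linarith

lemma left_mem_mI (a b : X) : a ∈ mInterval a b := by
  rw [mem_mI, dist_self]; ring

lemma right_mem_mI (a b : X) : b ∈ mInterval a b := by
  rw [mem_mI, dist_self]; ring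

/-- If `c ∈ [a,b]` then `[c,b] ⊆ [a,b]`. -/
lemma mI_mono_left {a b c : X} (h : c ∈ mInterval a b) : mInterval c b ⊆ mInterval a b := by
  intro y hy
  rw [mem_mI] at h hy ⊢
  have t1 : dist a y ≤ dist a c + dist c y := dist_triangle a c y
  have t2 : dist a b ≤ dist a y + dist y b := dist_triangle a y b
  linarith

/-- If `c ∈ [a,b]` then `[a,c] ⊆ [a,b]`. -/
lemma mI_mono_right {a b c : X} (h : c ∈ mInterval a b) : mInterval a c ⊆ mInterval a b := by
  intro y hy
  exact mI_symm (mI_mono_left (mI_symm h) (mI_symm hy))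

variable (hmed : IsMedianSpace X)

noncomputable def medT (a b c : X) : X := (hmed a b c).exists.choose

lemma medT_spec (a b c : X) :
    medT hmed a b c ∈ mInterval a b ∩ mInterval b c ∩ mInterval a c :=
  (hmed a b c).exists.choose_spec

lemma medT_mem₁ (a b c : X) : medT hmed a b c ∈ mInterval a b := (medT_spec hmed a b c).1.1
lemma medT_mem₂ (a b c : X) : medT hmed a b c ∈ mInterval b c := (medT_spec hmed a b c).1.2
lemma medT_mem₃ (a b c : X) : medT hmed a b c ∈ mInterval a c := (medT_spec hmed a b c).2

lemma medT_unique {a b c m : X} (h₁ : m ∈ mInterval a b) (h₂ : m ∈ mInterval b c)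
    (h₃ : m ∈ mInterval a c) : m = medT hmed a b c :=
  (hmed a b c).unique ⟨⟨h₁, h₂⟩, h₃⟩ (medT_spec hmed a b c)

lemma medT_eq_self {a b z : X} (h : z ∈ mInterval a b) : medT hmed a z b = z :=
  (medT_unique hmed (right_mem_mI a z) (left_mem_mI z b) h).symm

/-- The interval gate lemma: `medT a z b` is the gate of `z` in `[a,b]`. -/
lemma igl {a b z : X} :
    ∀ u ∈ mInterval a b, dist z u = dist z (medT hmed a z b) + dist (medT hmed a z b) u := by
  intro u hu
  set m₁ := medT hmed a z u with hm₁def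
  set m₂ := medT hmed b z u with hm₂def
  set g := medT hmed m₁ z m₂ with hgdef
  -- memberships of m₁
  have m₁az : m₁ ∈ mInterval a z := medT_mem₁ hmed a z u
  have m₁zu : m₁ ∈ mInterval z u := medT_mem₂ hmed a z u
  have m₁au : m₁ ∈ mInterval a u := medT_mem₃ hmed a z u
  -- memberships of m₂
  have m₂bz : m₂ ∈ mInterval b z := medT_mem₁ hmed b z u
  have m₂zu : m₂ ∈ mInterval z u := medT_mem₂ hmed b z u
  have m₂bu : m₂ ∈ mInterval b u := medT_mem₃ hmed b z u
  -- memberships of g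
  have gm₁z : g ∈ mInterval m₁ z := medT_mem₁ hmed m₁ z m₂
  have gzm₂ : g ∈ mInterval z m₂ := medT_mem₂ hmed m₁ z m₂
  have gm₁m₂ : g ∈ mInterval m₁ m₂ := medT_mem₃ hmed m₁ z m₂
  -- g ∈ [a,z]
  have gaz : g ∈ mInterval a z := mI_mono_left m₁az gm₁z
  -- g ∈ [z,b]
  have gzb : g ∈ mInterval z b :=
    mI_mono_right (mI_symm m₂bz) gzm₂
  -- g ∈ [a,b]
  have gab : g ∈ mInterval a b := by
    rw [mem_mI] at hu m₁au m₂bu gm₁m₂ ⊢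
    have t1 : dist a g ≤ dist a m₁ + dist m₁ g := dist_triangle a m₁ g
    have t2 : dist g b ≤ dist g m₂ + dist m₂ b := dist_triangle g m₂ b
    have t3 : dist m₁ m₂ ≤ dist m₁ u + dist u m₂ := dist_triangle m₁ u m₂
    have t4 : dist a b ≤ dist a g + dist g b := dist_triangle a g b
    have c1 : dist u m₂ = dist m₂ u := dist_comm u m₂
    have c2 : dist b u = dist u b := dist_comm b u
    have c6 : dist m₂ b = dist b m₂ := dist_comm m₂ b
    linarith
  -- hence g is the median of (a, z, b)
  have hg : g = medT hmed a z b := medT_unique hmed gaz gzb gab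
  rw [← hg]
  -- the gate chain
  rw [mem_mI] at m₁zu gm₁z
  have t5 : dist z u ≤ dist z g + dist g u := dist_triangle z g u
  have t6 : dist g u ≤ dist g m₁ + dist m₁ u := dist_triangle g m₁ u
  have c3 : dist z g = dist g z := dist_comm z g
  have c4 : dist z m₁ = dist m₁ z := dist_comm z m₁
  have c5 : dist g m₁ = dist m₁ g := dist_comm g m₁
  linarith

/-- Intervals are convex. -/
lemma mI_convex (hmed : IsMedianSpace X) (a b : X) : MConvex (mInterval a b) := by
  intro x hx y hy z hz
  have hchx := igl hmed x hx (z := z)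
  have hchy := igl hmed y hy (z := z)
  set w := medT hmed a z b with hw
  have hwab : w ∈ mInterval a b := medT_mem₃ hmed a z b
  have hzw : z = w := by
    rw [mem_mI] at hz
    have t1 : dist x y ≤ dist x w + dist w y := dist_triangle x w y
    have c1 : dist z x = dist x z := dist_comm z x
    have c2 : dist w x = dist x w := dist_comm w x
    have n1 : (0:ℝ) ≤ dist z w := dist_nonneg
    have hd : dist z w = 0 := by linarith
    exact dist_eq_zero.mp hd
  rw [hzw]; exact hwab

section Gate

variable {C : Set X} {π : X → X}

lemma gate_mem (hπ : IsNearestPointProj C π) (x : X) : π x ∈ C := (hπ x).1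

/-- The gate chain property of nearest point projections onto convex sets. -/
lemma gate_chain (hmed : IsMedianSpace X) (hC : MConvex C) (hπ : IsNearestPointProj C π)
    (x : X) {u : X} (hu : u ∈ C) :
    dist x u = dist x (π x) + dist (π x) u := by
  set m := medT hmed x (π x) u with hm
  have m1 : m ∈ mInterval x (π x) := medT_mem₁ hmed x (π x) u
  have m2 : m ∈ mInterval (π x) u := medT_mem₂ hmed x (π x) u
  have m3 : m ∈ mInterval x u := medT_mem₃ hmed x (π x) u
  have hmC : m ∈ C := hC (π x) (gate_mem hπ x) u hu m2
  have hinf : Metric.infDist x C ≤ dist x m := Metric.infDist_le_dist_of_mem hmC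
  have hprojdist : dist x (π x) = Metric.infDist x C := (hπ x).2
  rw [mem_mI] at m1 m3
  have n1 : (0:ℝ) ≤ dist m (π x) := dist_nonneg
  have hm0 : dist m (π x) = 0 := by linarith
  have hmproj : m = π x := dist_eq_zero.mp hm0
  rw [hmproj] at m3
  exact m3.symm

lemma gate_self (hπ : IsNearestPointProj C π) {x : X} (hx : x ∈ C) : π x = x := by
  have h0 : dist x (π x) = 0 := by
    rw [(hπ x).2]
    exact Metric.infDist_zero_of_mem hx
  exact (dist_eq_zero.mp h0).symm

lemma gate_lip (hmed : IsMedianSpace X) (hC : MConvex C) (hπ : IsNearestPointProj C π)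
    (x y : X) : dist (π x) (π y) ≤ dist x y := by
  have h1 : dist x (π y) = dist x (π x) + dist (π x) (π y) :=
    gate_chain hmed hC hπ x (gate_mem hπ y)
  have h2 : dist y (π x) = dist y (π y) + dist (π y) (π x) :=
    gate_chain hmed hC hπ y (gate_mem hπ x)
  have t1 : dist x (π y) ≤ dist x y + dist y (π y) := dist_triangle x y (π y)
  have t2 : dist y (π x) ≤ dist y x + dist x (π x) := dist_triangle y x (π x)
  have c1 : dist (π y) (π x) = dist (π x) (π y) := dist_comm _ _
  have c2 : dist y x = dist x y := dist_comm y x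
  linarith

/-- A point on the segment from `x` to its gate has the same gate. -/
lemma gate_seg (hmed : IsMedianSpace X) (hC : MConvex C) (hπ : IsNearestPointProj C π)
    {x μ : X} (h : μ ∈ mInterval x (π x)) : π μ = π x := by
  rw [mem_mI] at h
  have key : ∀ u ∈ C, dist μ (π x) + dist (π x) u ≤ dist μ u := by
    intro u hu
    have h1 : dist x u = dist x (π x) + dist (π x) u := gate_chain hmed hC hπ x hu
    have t1 : dist x u ≤ dist x μ + dist μ u := dist_triangle x μ u
    linarith
  have i1 := key (π μ) (gate_mem hπ μ)
  have i2 : dist μ (π x) = dist μ (π μ) + dist (π μ) (π x) :=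
    gate_chain hmed hC hπ μ (gate_mem hπ x)
  have hd : dist (π x) (π μ) = 0 := by
    have c1 : dist (π μ) (π x) = dist (π x) (π μ) := dist_comm _ _
    have n1 : (0:ℝ) ≤ dist (π x) (π μ) := dist_nonneg
    linarith
  exact (dist_eq_zero.mp hd).symm

/-- Gate maps preserve betweenness (the key "distributivity" lemma). -/
lemma gate_bp (hmed : IsMedianSpace X) (hC : MConvex C) (hπ : IsNearestPointProj C π)
    {α β s : X} (hs : s ∈ mInterval α β) : π s ∈ mInterval (π α) (π β) := by
  set ga := π α with hga
  set gb := π β with hgb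
  set gs := π s with hgs
  set t := medT hmed ga gs gb with ht
  have t1m : t ∈ mInterval ga gs := medT_mem₁ hmed ga gs gb
  have t2m : t ∈ mInterval gs gb := medT_mem₂ hmed ga gs gb
  have t3m : t ∈ mInterval ga gb := medT_mem₃ hmed ga gs gb
  have tC : t ∈ C := hC ga (gate_mem hπ α) gb (gate_mem hπ β) t3m
  have gsC : gs ∈ C := gate_mem hπ s
  -- t ∈ [α, gs]
  have hiv : dist α t + dist t gs = dist α gs := by
    have h1 : dist α gs = dist α ga + dist ga gs := gate_chain hmed hC hπ α gsC
    have h2 : dist ga t + dist t gs = dist ga gs := t1m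
    have tt1 : dist α t ≤ dist α ga + dist ga t := dist_triangle α ga t
    have tt2 : dist α gs ≤ dist α t + dist t gs := dist_triangle α t gs
    linarith
  -- t ∈ [β, gs]
  have hv : dist β t + dist t gs = dist β gs := by
    have h1 : dist β gs = dist β gb + dist gb gs := gate_chain hmed hC hπ β gsC
    have h2 : dist gs t + dist t gb = dist gs gb := t2m
    have c1 : dist gs t = dist t gs := dist_comm gs t
    have c2 : dist t gb = dist gb t := dist_comm t gb
    have c3 : dist gs gb = dist gb gs := dist_comm gs gb
    have tt1 : dist β t ≤ dist β gb + dist gb t := dist_triangle β gb t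
    have tt2 : dist β gs ≤ dist β t + dist t gs := dist_triangle β t gs
    linarith
  set s₀ := medT hmed α gs β with hs₀def
  have s₀1 : s₀ ∈ mInterval α gs := medT_mem₁ hmed α gs β
  have s₀2 : s₀ ∈ mInterval gs β := medT_mem₂ hmed α gs β
  have s₀3 : s₀ ∈ mInterval α β := medT_mem₃ hmed α gs β
  -- gate chain of gs on [α,β] at u = s
  have hvii : dist gs s = dist gs s₀ + dist s₀ s := igl hmed s hs (z := gs)
  -- π s₀ = gs
  have hviii : π s₀ = gs := by
    have hmem : s₀ ∈ mInterval s (π s) := by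
      rw [mem_mI]
      have c1 : dist gs s = dist s gs := dist_comm gs s
      have c2 : dist gs s₀ = dist s₀ gs := dist_comm gs s₀
      have c3 : dist s₀ s = dist s s₀ := dist_comm s₀ s
      rw [← hgs]
      linarith
    exact gate_seg hmed hC hπ hmem
  -- s₀ is also the median of (β, α, gs)
  have hix : s₀ = medT hmed β α gs :=
    medT_unique hmed (mI_symm s₀3) s₀1 (mI_symm s₀2)
  -- gate chain of α on [β, gs] at u = t
  have hixt : dist α t = dist α s₀ + dist s₀ t := by
    have htm : t ∈ mInterval β gs := by rw [mem_mI]; exact hv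
    have := igl hmed t htm (z := α)
    rwa [← hix] at this
  -- gate chain of s₀ at u = t
  have hx : dist s₀ t = dist s₀ gs + dist gs t := by
    have := gate_chain hmed hC hπ s₀ tC
    rwa [hviii] at this
  have hxi : dist α s₀ + dist s₀ gs = dist α gs := s₀1
  have hzero : dist gs t = 0 := by
    have c1 : dist t gs = dist gs t := dist_comm t gs
    have n1 : (0:ℝ) ≤ dist gs t := dist_nonneg
    linarith
  have hgst : gs = t := dist_eq_zero.mp hzero
  rw [hgst]
  exact t3m

/-- Gate maps are median homomorphisms. -/
lemma gate_mh (hmed : IsMedianSpace X) (hC : MConvex C) (hπ : IsNearestPointProj C π)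
    (u v w : X) : π (medT hmed u v w) = medT hmed (π u) (π v) (π w) := by
  exact medT_unique hmed
    (gate_bp hmed hC hπ (medT_mem₁ hmed u v w))
    (gate_bp hmed hC hπ (medT_mem₂ hmed u v w))
    (gate_bp hmed hC hπ (medT_mem₃ hmed u v w))

/-- E3 half of the extraction lemma: `μ ∈ [x, ν]`. -/
lemma gate_e3 (hmed : IsMedianSpace X) (hC : MConvex C) (hπ : IsNearestPointProj C π)
    (x y : X) :
    dist x (medT hmed x (π x) y) + dist (medT hmed x (π x) y) (medT hmed x (π y) y)
      = dist x (medT hmed x (π y) y) := by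
  set a := π x with ha
  set b := π y with hb
  set μ := medT hmed x a y with hμ
  set ν := medT hmed x b y with hν
  have μ3 : μ ∈ mInterval x y := medT_mem₃ hmed x a y
  have ν3 : ν ∈ mInterval x y := medT_mem₃ hmed x b y
  have h1 : dist a x = dist a μ + dist μ x := igl hmed x (left_mem_mI x y) (z := a)
  have h2 : dist b x = dist b ν + dist ν x := igl hmed x (left_mem_mI x y) (z := b)
  have h3 : dist x b = dist x a + dist a b := gate_chain hmed hC hπ x (gate_mem hπ y)
  have h4 : dist b μ = dist b ν + dist ν μ := igl hmed μ μ3 (z := b)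
  have h5 : dist b μ ≤ dist b a + dist a μ := dist_triangle b a μ
  have t6 : dist x ν ≤ dist x μ + dist μ ν := dist_triangle x μ ν
  have c1 : dist a x = dist x a := dist_comm a x
  have c2 : dist b x = dist x b := dist_comm b x
  have c3 : dist μ x = dist x μ := dist_comm μ x
  have c4 : dist ν x = dist x ν := dist_comm ν x
  have c5 : dist ν μ = dist μ ν := dist_comm ν μ
  have c6 : dist b a = dist a b := dist_comm b a
  linarith

/-- The extraction (serial decomposition) lemma. -/
lemma gate_E (hmed : IsMedianSpace X) (hC : MConvex C) (hπ : IsNearestPointProj C π)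
    (x y : X) :
    dist x y = dist x (medT hmed x (π x) y) + dist (π x) (π y)
      + dist (medT hmed x (π y) y) y := by
  set a := π x with ha
  set b := π y with hb
  set μ := medT hmed x a y with hμ
  set ν := medT hmed x b y with hν
  have μ1 : μ ∈ mInterval x a := medT_mem₁ hmed x a y
  have μ2 : μ ∈ mInterval a y := medT_mem₂ hmed x a y
  have μ3 : μ ∈ mInterval x y := medT_mem₃ hmed x a y
  have ν1 : ν ∈ mInterval x b := medT_mem₁ hmed x b y
  have ν2 : ν ∈ mInterval b y := medT_mem₂ hmed x b y
  have ν3 : ν ∈ mInterval x y := medT_mem₃ hmed x b y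
  -- the mirrored medians
  have hperm₁ : medT hmed y b x = ν :=
    (medT_unique hmed (mI_symm ν2) (mI_symm ν1) (mI_symm ν3)).symm
  have hperm₂ : medT hmed y a x = μ :=
    (medT_unique hmed (mI_symm μ2) (mI_symm μ1) (mI_symm μ3)).symm
  -- E3 and its mirror E4
  have e3 : dist x μ + dist μ ν = dist x ν := gate_e3 hmed hC hπ x y
  have e4 : dist y ν + dist ν μ = dist y μ := by
    have := gate_e3 hmed hC hπ y x
    rwa [hperm₁, hperm₂] at this
  -- E5 : dist μ ν = dist a b
  have k1 : dist a y = dist a μ + dist μ y := igl hmed y (right_mem_mI x y) (z := a)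
  have k4 : dist b x = dist b ν + dist ν x := igl hmed x (left_mem_mI x y) (z := b)
  have k3 : dist y a = dist y b + dist b a := gate_chain hmed hC hπ y (gate_mem hπ x)
  have k6 : dist x b = dist x a + dist a b := gate_chain hmed hC hπ x (gate_mem hπ y)
  have k7 : dist a x = dist a μ + dist μ x := igl hmed x (left_mem_mI x y) (z := a)
  have k8 : dist b y = dist b ν + dist ν y := igl hmed y (right_mem_mI x y) (z := b)
  have c1 : dist a y = dist y a := dist_comm a y
  have c2 : dist b a = dist a b := dist_comm b a
  have c3 : dist b y = dist y b := dist_comm b y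
  have c4 : dist b x = dist x b := dist_comm b x
  have c5 : dist a x = dist x a := dist_comm a x
  have c6 : dist μ y = dist y μ := dist_comm μ y
  have c7 : dist ν μ = dist μ ν := dist_comm ν μ
  have c8 : dist ν y = dist y ν := dist_comm ν y
  have c9 : dist ν x = dist x ν := dist_comm ν x
  have c10 : dist μ x = dist x μ := dist_comm μ x
  have e5 : dist μ ν = dist a b := by linarith
  -- E6
  have m3 : dist x μ + dist μ y = dist x y := μ3
  linarith

end Gate

section Main

variable {C₁ C₂ : Set X} {π₁ π₂ π₀ : X → X} {c₁ c₂ : X}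

/-- `π₁` is constant `c₁` on `C₂`. -/
lemma pb_eq (hc₁ : π₁ '' C₂ = {c₁}) {b : X} (hb : b ∈ C₂) : π₁ b = c₁ := by
  have : π₁ b ∈ π₁ '' C₂ := ⟨b, hb, rfl⟩
  rw [hc₁] at this
  exact this

lemma c₁_mem (hπ₁ : IsNearestPointProj C₁ π₁) (hc₁ : π₁ '' C₂ = {c₁})
    (h₂ne : C₂.Nonempty) : c₁ ∈ C₁ := by
  obtain ⟨b, hb⟩ := h₂ne
  rw [← pb_eq hc₁ hb]
  exact (hπ₁ b).1

/-- Cross chain: for `a ∈ C₁`, `d(a,c₂) = d(a,c₁) + d(c₁,c₂)`. -/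
lemma d_cross (hmed : IsMedianSpace X) (h₁cv : MConvex C₁)
    (hπ₁ : IsNearestPointProj C₁ π₁) (hc₁ : π₁ '' C₂ = {c₁})
    (hc₂mem : c₂ ∈ C₂) {a : X} (ha : a ∈ C₁) :
    dist a c₂ = dist a c₁ + dist c₁ c₂ := by
  have h := gate_chain hmed h₁cv hπ₁ c₂ ha
  rw [pb_eq hc₁ hc₂mem] at h
  have e1 : dist c₂ a = dist a c₂ := dist_comm c₂ a
  have e2 : dist c₂ c₁ = dist c₁ c₂ := dist_comm c₂ c₁
  have e3 : dist c₁ a = dist a c₁ := dist_comm c₁ a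
  linarith

/-- `π₀` is constant `c₁` on `C₁`. -/
lemma r_on_C₁ (hmed : IsMedianSpace X) (h₁cv : MConvex C₁)
    (hπ₁ : IsNearestPointProj C₁ π₁) (hc₁ : π₁ '' C₂ = {c₁}) (hc₂mem : c₂ ∈ C₂)
    (hπ₀ : IsNearestPointProj (mInterval c₁ c₂) π₀)
    {a : X} (ha : a ∈ C₁) : π₀ a = c₁ := by
  have hI : MConvex (mInterval c₁ c₂) := mI_convex hmed c₁ c₂
  have hρ : π₀ a ∈ mInterval c₁ c₂ := (hπ₀ a).1
  have ch₂ : dist a c₂ = dist a (π₀ a) + dist (π₀ a) c₂ :=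
    gate_chain hmed hI hπ₀ a (right_mem_mI c₁ c₂)
  have ch₁ : dist a c₁ = dist a (π₀ a) + dist (π₀ a) c₁ :=
    gate_chain hmed hI hπ₀ a (left_mem_mI c₁ c₂)
  have cross := d_cross hmed h₁cv hπ₁ hc₁ hc₂mem ha
  rw [mem_mI] at hρ
  have c1 : dist c₁ (π₀ a) = dist (π₀ a) c₁ := dist_comm _ _
  have h0 : dist (π₀ a) c₁ = 0 := by linarith
  exact dist_eq_zero.mp h0

/-- `π₁` is constant `c₁` on the interval `[c₁,c₂]`. -/
lemma p_on_I (hmed : IsMedianSpace X) (h₁cv : MConvex C₁)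
    (hπ₁ : IsNearestPointProj C₁ π₁) (hc₁ : π₁ '' C₂ = {c₁}) (hc₂mem : c₂ ∈ C₂)
    (hc₁mem : c₁ ∈ C₁) {ι : X} (hι : ι ∈ mInterval c₁ c₂) : π₁ ι = c₁ := by
  have claim : ∀ a ∈ C₁, dist ι a = dist ι c₁ + dist c₁ a := by
    intro a ha
    have h := gate_chain hmed h₁cv hπ₁ c₂ ha
    rw [pb_eq hc₁ hc₂mem] at h
    rw [mem_mI] at hι
    have t1 : dist c₂ a ≤ dist c₂ ι + dist ι a := dist_triangle c₂ ι a
    have t2 : dist ι a ≤ dist ι c₁ + dist c₁ a := dist_triangle ι c₁ a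
    have c3 : dist c₂ c₁ = dist c₁ c₂ := dist_comm c₂ c₁
    have c4 : dist c₂ ι = dist ι c₂ := dist_comm c₂ ι
    have c5 : dist c₁ ι = dist ι c₁ := dist_comm c₁ ι
    linarith
  have ch : dist ι c₁ = dist ι (π₁ ι) + dist (π₁ ι) c₁ :=
    gate_chain hmed h₁cv hπ₁ ι hc₁mem
  have cl := claim (π₁ ι) (gate_mem hπ₁ ι)
  have n1 : (0:ℝ) ≤ dist c₁ (π₁ ι) := dist_nonneg
  have c6 : dist (π₁ ι) c₁ = dist c₁ (π₁ ι) := dist_comm _ _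
  have h0 : dist c₁ (π₁ ι) = 0 := by linarith
  exact (dist_eq_zero.mp h0).symm

lemma mI_comm (a b : X) : mInterval a b = mInterval b a :=
  Set.ext fun _ => ⟨mI_symm, mI_symm⟩

/-- The two-factor lower bound. -/
lemma two_factor (hmed : IsMedianSpace X) (h₂cv : MConvex C₂)
    (hπ₂ : IsNearestPointProj C₂ π₂) (hπ₀ : IsNearestPointProj (mInterval c₁ c₂) π₀)
    (hrC₂ : ∀ b ∈ C₂, π₀ b = c₂) (α β : X) :
    dist (π₂ α) (π₂ β) + dist (π₀ α) (π₀ β) ≤ dist α β := by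
  have hI : MConvex (mInterval c₁ c₂) := mI_convex hmed c₁ c₂
  set μ := medT hmed α (π₂ α) β with hμ
  set ν := medT hmed α (π₂ β) β with hν
  have hE : dist α β = dist α μ + dist (π₂ α) (π₂ β) + dist ν β :=
    gate_E hmed h₂cv hπ₂ α β
  have hrμ : π₀ μ = medT hmed (π₀ α) c₂ (π₀ β) := by
    have := gate_mh hmed hI hπ₀ α (π₂ α) β
    rwa [hrC₂ _ (gate_mem hπ₂ α)] at this
  have hrν : π₀ ν = medT hmed (π₀ α) c₂ (π₀ β) := by
    have := gate_mh hmed hI hπ₀ α (π₂ β) β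
    rwa [hrC₂ _ (gate_mem hπ₂ β)] at this
  have hsplit : dist (π₀ α) (π₀ μ) + dist (π₀ ν) (π₀ β) = dist (π₀ α) (π₀ β) := by
    rw [hrμ, hrν]
    exact medT_mem₃ hmed (π₀ α) c₂ (π₀ β)
  have lip1 : dist (π₀ α) (π₀ μ) ≤ dist α μ := gate_lip hmed hI hπ₀ α μ
  have lip2 : dist (π₀ ν) (π₀ β) ≤ dist ν β := gate_lip hmed hI hπ₀ ν β
  linarith

/-- The full three-factor lower bound, valid for ALL pairs of points. -/
lemma F_lower (hmed : IsMedianSpace X) (h₁cv : MConvex C₁) (h₂cv : MConvex C₂)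
    (hπ₁ : IsNearestPointProj C₁ π₁) (hπ₂ : IsNearestPointProj C₂ π₂)
    (hπ₀ : IsNearestPointProj (mInterval c₁ c₂) π₀)
    (hqC₁ : ∀ a ∈ C₁, π₂ a = c₂) (hrC₁ : ∀ a ∈ C₁, π₀ a = c₁)
    (hrC₂ : ∀ b ∈ C₂, π₀ b = c₂) (α β : X) :
    dist (π₁ α) (π₁ β) + dist (π₂ α) (π₂ β) + dist (π₀ α) (π₀ β) ≤ dist α β := by
  have hI : MConvex (mInterval c₁ c₂) := mI_convex hmed c₁ c₂
  set μ := medT hmed α (π₁ α) β with hμ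
  set ν := medT hmed α (π₁ β) β with hν
  have hE : dist α β = dist α μ + dist (π₁ α) (π₁ β) + dist ν β :=
    gate_E hmed h₁cv hπ₁ α β
  have hqμ : π₂ μ = medT hmed (π₂ α) c₂ (π₂ β) := by
    have := gate_mh hmed h₂cv hπ₂ α (π₁ α) β
    rwa [hqC₁ _ (gate_mem hπ₁ α)] at this
  have hqν : π₂ ν = medT hmed (π₂ α) c₂ (π₂ β) := by
    have := gate_mh hmed h₂cv hπ₂ α (π₁ β) β
    rwa [hqC₁ _ (gate_mem hπ₁ β)] at this
  have hrμ : π₀ μ = medT hmed (π₀ α) c₁ (π₀ β) := by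
    have := gate_mh hmed hI hπ₀ α (π₁ α) β
    rwa [hrC₁ _ (gate_mem hπ₁ α)] at this
  have hrν : π₀ ν = medT hmed (π₀ α) c₁ (π₀ β) := by
    have := gate_mh hmed hI hπ₀ α (π₁ β) β
    rwa [hrC₁ _ (gate_mem hπ₁ β)] at this
  have hqsplit : dist (π₂ α) (π₂ μ) + dist (π₂ ν) (π₂ β) = dist (π₂ α) (π₂ β) := by
    rw [hqμ, hqν]
    exact medT_mem₃ hmed (π₂ α) c₂ (π₂ β)
  have hrsplit : dist (π₀ α) (π₀ μ) + dist (π₀ ν) (π₀ β) = dist (π₀ α) (π₀ β) := by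
    rw [hrμ, hrν]
    exact medT_mem₃ hmed (π₀ α) c₁ (π₀ β)
  have l2a := two_factor hmed h₂cv hπ₂ hπ₀ hrC₂ α μ
  have l2b := two_factor hmed h₂cv hπ₂ hπ₀ hrC₂ ν β
  linarith

end Main

/-- Bundle of all the standing data and hypotheses. -/
structure Ctx (X : Type*) [MetricSpace X] where
  hmed : IsMedianSpace X
  C₁ : Set X
  C₂ : Set X
  π₁ : X → X
  π₂ : X → X
  π₀ : X → X
  c₁ : X
  c₂ : X
  h₁cv : MConvex C₁
  h₂cv : MConvex C₂
  hπ₁ : IsNearestPointProj C₁ π₁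
  hπ₂ : IsNearestPointProj C₂ π₂
  hπ₀ : IsNearestPointProj (mInterval c₁ c₂) π₀
  hqC₁ : ∀ a ∈ C₁, π₂ a = c₂
  hpC₂ : ∀ b ∈ C₂, π₁ b = c₁
  hrC₁ : ∀ a ∈ C₁, π₀ a = c₁
  hrC₂ : ∀ b ∈ C₂, π₀ b = c₂
  hc₁mem : c₁ ∈ C₁
  hc₂mem : c₂ ∈ C₂

namespace Ctx

variable {S : Ctx X}

/-- The target formula. -/
def fmla (S : Ctx X) (x y : X) : Prop :=
  dist x y = dist (S.π₁ x) (S.π₁ y) + dist (S.π₂ x) (S.π₂ y) + dist (S.π₀ x) (S.π₀ y)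

lemma fmla_symm {x y : X} (h : S.fmla x y) : S.fmla y x := by
  unfold fmla at h ⊢
  rw [dist_comm y x, dist_comm (S.π₁ y) (S.π₁ x), dist_comm (S.π₂ y) (S.π₂ x),
    dist_comm (S.π₀ y) (S.π₀ x)]
  exact h

lemma hIcv (S : Ctx X) : MConvex (mInterval S.c₁ S.c₂) := mI_convex S.hmed S.c₁ S.c₂

lemma lower (S : Ctx X) (α β : X) :
    dist (S.π₁ α) (S.π₁ β) + dist (S.π₂ α) (S.π₂ β) + dist (S.π₀ α) (S.π₀ β) ≤ dist α β :=
  F_lower S.hmed S.h₁cv S.h₂cv S.hπ₁ S.hπ₂ S.hπ₀ S.hqC₁ S.hrC₁ S.hrC₂ α β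

lemma bp₁ {α β s : X} (hs : s ∈ mInterval α β) : S.π₁ s ∈ mInterval (S.π₁ α) (S.π₁ β) :=
  gate_bp S.hmed S.h₁cv S.hπ₁ hs

lemma bp₂ {α β s : X} (hs : s ∈ mInterval α β) : S.π₂ s ∈ mInterval (S.π₂ α) (S.π₂ β) :=
  gate_bp S.hmed S.h₂cv S.hπ₂ hs

lemma bp₀ {α β s : X} (hs : s ∈ mInterval α β) : S.π₀ s ∈ mInterval (S.π₀ α) (S.π₀ β) :=
  gate_bp S.hmed S.hIcv S.hπ₀ hs

/-- The squeeze lemma: the formula propagates to points between. -/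
lemma squeeze {α β γ : X} (hf : S.fmla α β) (hγ : γ ∈ mInterval α β) :
    S.fmla α γ ∧ S.fmla γ β := by
  have b₁ := S.bp₁ hγ
  have b₂ := S.bp₂ hγ
  have b₀ := S.bp₀ hγ
  rw [mem_mI] at b₁ b₂ b₀ hγ
  have l1 := S.lower α γ
  have l2 := S.lower γ β
  unfold fmla at hf ⊢
  constructor <;> linarith

/-- Formula between any two points of an interval whose end points satisfy it. -/
lemma sq2 {α β γ γ' : X} (hf : S.fmla α β) (hγ : γ ∈ mInterval α β)
    (hγ' : γ' ∈ mInterval α β) : S.fmla γ γ' := by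
  set ν := medT S.hmed γ α γ' with hν
  have ν1 : ν ∈ mInterval γ α := medT_mem₁ S.hmed γ α γ'
  have ν2 : ν ∈ mInterval α γ' := medT_mem₂ S.hmed γ α γ'
  have ν3 : ν ∈ mInterval γ γ' := medT_mem₃ S.hmed γ α γ'
  have f1 : S.fmla α γ := (S.squeeze hf hγ).1
  have f2 : S.fmla α γ' := (S.squeeze hf hγ').1
  have fγν : S.fmla γ ν := (S.squeeze (fmla_symm f1) ν1).1
  have fνγ' : S.fmla ν γ' := (S.squeeze f2 ν2).2
  have b₁ := S.bp₁ ν3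
  have b₂ := S.bp₂ ν3
  have b₀ := S.bp₀ ν3
  rw [mem_mI] at b₁ b₂ b₀ ν3
  unfold fmla at fγν fνγ' ⊢
  linarith

/-- The star lemma: propagation into intervals. -/
lemma star {w α β ζ : X} (hwa : S.fmla w α) (hwb : S.fmla w β) (hab : S.fmla α β)
    (hζ : ζ ∈ mInterval α β) : S.fmla w ζ := by
  set μ := medT S.hmed α w β with hμ
  have μ1 : μ ∈ mInterval α w := medT_mem₁ S.hmed α w β
  have μ3 : μ ∈ mInterval α β := medT_mem₃ S.hmed α w β
  have chain : dist w ζ = dist w μ + dist μ ζ := igl S.hmed ζ hζ (z := w)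
  have fwμ : S.fmla w μ := (S.squeeze hwa (mI_symm μ1)).1
  have fμζ : S.fmla μ ζ := S.sq2 hab μ3 hζ
  have hμwζ : μ ∈ mInterval w ζ := chain.symm
  have b₁ := S.bp₁ hμwζ
  have b₂ := S.bp₂ hμwζ
  have b₀ := S.bp₀ hμwζ
  rw [mem_mI] at b₁ b₂ b₀
  unfold fmla at fwμ fμζ ⊢
  linarith

/-- The formula holds on the base set `C₁ ∪ C₂`. -/
lemma base (S : Ctx X) : ∀ u ∈ S.C₁ ∪ S.C₂, ∀ v ∈ S.C₁ ∪ S.C₂, S.fmla u v := by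
  have cross₁ : ∀ a ∈ S.C₁, dist a S.c₂ = dist a S.c₁ + dist S.c₁ S.c₂ := by
    intro a ha
    have h := gate_chain S.hmed S.h₁cv S.hπ₁ S.c₂ ha
    rw [S.hpC₂ S.c₂ S.hc₂mem] at h
    have e1 : dist S.c₂ a = dist a S.c₂ := dist_comm _ _
    have e2 : dist S.c₂ S.c₁ = dist S.c₁ S.c₂ := dist_comm _ _
    have e3 : dist S.c₁ a = dist a S.c₁ := dist_comm _ _
    linarith
  have key : ∀ u ∈ S.C₁, ∀ v ∈ S.C₂, S.fmla u v := by
    intro u hu v hv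
    have ch : dist u v = dist u S.c₂ + dist S.c₂ v := by
      have := gate_chain S.hmed S.h₂cv S.hπ₂ u hv
      rwa [S.hqC₁ u hu] at this
    have cross := cross₁ u hu
    unfold fmla
    rw [gate_self S.hπ₁ hu, S.hpC₂ v hv, S.hqC₁ u hu, gate_self S.hπ₂ hv,
      S.hrC₁ u hu, S.hrC₂ v hv]
    linarith
  rintro u (hu | hu) v (hv | hv)
  · unfold fmla
    rw [gate_self S.hπ₁ hu, gate_self S.hπ₁ hv, S.hqC₁ u hu, S.hqC₁ v hv,
      S.hrC₁ u hu, S.hrC₁ v hv, dist_self, dist_self]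
    ring
  · exact key u hu v hv
  · exact fmla_symm (key v hv u hu)
  · unfold fmla
    rw [gate_self S.hπ₂ hu, gate_self S.hπ₂ hv, S.hpC₂ u hu, S.hpC₂ v hv,
      S.hrC₂ u hu, S.hrC₂ v hv, dist_self, dist_self]
    ring

end Ctx

/-- Iterated interval hull. -/
def hullSeq (B : Set X) : ℕ → Set X
  | 0 => B
  | n + 1 => {z | ∃ u ∈ hullSeq B n, ∃ v ∈ hullSeq B n, z ∈ mInterval u v}

lemma hullSeq_succ (B : Set X) (n : ℕ) : hullSeq B n ⊆ hullSeq B (n + 1) :=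
  fun z hz => ⟨z, hz, z, hz, left_mem_mI z z⟩

lemma hullSeq_le {B : Set X} {m n : ℕ} (h : m ≤ n) : hullSeq B m ⊆ hullSeq B n := by
  induction h with
  | refl => exact Set.Subset.rfl
  | step _ ih => exact ih.trans (hullSeq_succ B _)

lemma hullSeq_union_convex (B : Set X) : MConvex (⋃ n, hullSeq B n) := by
  intro a ha b hb z hz
  rw [Set.mem_iUnion] at ha hb ⊢
  obtain ⟨na, hna⟩ := ha
  obtain ⟨nb, hnb⟩ := hb
  refine ⟨max na nb + 1, a, hullSeq_le (le_max_left na nb) hna,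
    b, hullSeq_le (le_max_right na nb) hnb, hz⟩

lemma hull_subset_hullSeq (B : Set X) : mConvexHull B ⊆ ⋃ n, hullSeq B n := by
  apply Set.sInter_subset_of_mem
  refine ⟨hullSeq_union_convex B, ?_⟩
  exact (Set.subset_iUnion (hullSeq B) 0)

namespace Ctx

/-- the main induction -/
lemma main (S : Ctx X) :
    ∀ n, ∀ u ∈ hullSeq (S.C₁ ∪ S.C₂) n, ∀ v ∈ hullSeq (S.C₁ ∪ S.C₂) n, S.fmla u v := by
  intro n
  induction n with
  | zero => exact S.base
  | succ n IH =>
    have claim1 : ∀ w ∈ hullSeq (S.C₁ ∪ S.C₂) n, ∀ z ∈ hullSeq (S.C₁ ∪ S.C₂) (n + 1),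
        S.fmla w z := by
      rintro w hw z ⟨u, hu, v, hv, hz⟩
      exact S.star (IH w hw u hu) (IH w hw v hv) (IH u hu v hv) hz
    rintro z hz z' ⟨u', hu', v', hv', hz'⟩
    exact S.star (fmla_symm (claim1 u' hu' z hz)) (fmla_symm (claim1 v' hv' z hz))
      (IH u' hu' v' hv') hz'

lemma hull_fmla (S : Ctx X) {x y : X} (hx : x ∈ mConvexHull (S.C₁ ∪ S.C₂))
    (hy : y ∈ mConvexHull (S.C₁ ∪ S.C₂)) : S.fmla x y := by
  have hx' := hull_subset_hullSeq _ hx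
  have hy' := hull_subset_hullSeq _ hy
  rw [Set.mem_iUnion] at hx' hy'
  obtain ⟨nx, hnx⟩ := hx'
  obtain ⟨ny, hny⟩ := hy'
  exact S.main (max nx ny) x (hullSeq_le (le_max_left nx ny) hnx)
    y (hullSeq_le (le_max_right nx ny) hny)

end Ctx

/-- Mirror of `r_on_C₁`. -/
lemma r_on_C₂' {C₂ : Set X} {π₂ π₀ : X → X} {c₁ c₂ : X}
    (hmed : IsMedianSpace X) (h₂cv : MConvex C₂)
    (hπ₂ : IsNearestPointProj C₂ π₂) (hc₂ : π₂ '' C₁' = {c₂}) (hc₁mem : c₁ ∈ C₁')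
    (hπ₀ : IsNearestPointProj (mInterval c₁ c₂) π₀)
    {b : X} (hb : b ∈ C₂) : π₀ b = c₂ := by
  have hπ₀' : IsNearestPointProj (mInterval c₂ c₁) π₀ := by
    rw [mI_comm]; exact hπ₀
  exact r_on_C₁ hmed h₂cv hπ₂ hc₂ hc₁mem hπ₀' hb

end MedianDev

/-- If no halfspace is transverse to both closed convex sets `C₁`, `C₂`, then the map
`x ↦ (π_{C₁}(x), π_{C₂}(x), π_{[c₁,c₂]}(x))` is an isometric embedding of `Conv(C₁ ∪ C₂)`
into the `ℓ¹`-product `C₁ × C₂ × [c₁,c₂]`. -/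
theorem statement7 (X : Type*) [MetricSpace X] [CompleteSpace X]
    (hmed : IsMedianSpace X) (hrank : ∃ n : ℕ, HasMedianRank X n)
    (C₁ C₂ : Set X) (h₁ne : C₁.Nonempty) (h₂ne : C₂.Nonempty)
    (h₁cl : IsClosed C₁) (h₂cl : IsClosed C₂) (h₁cv : MConvex C₁) (h₂cv : MConvex C₂)
    (hns : ¬ ∃ h : Set X, IsHalfspace h ∧
      (h ∩ C₁).Nonempty ∧ (hᶜ ∩ C₁).Nonempty ∧ (h ∩ C₂).Nonempty ∧ (hᶜ ∩ C₂).Nonempty)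
    (π₁ π₂ : X → X) (hπ₁ : IsNearestPointProj C₁ π₁) (hπ₂ : IsNearestPointProj C₂ π₂)
    (c₁ c₂ : X) (hc₁ : π₁ '' C₂ = {c₁}) (hc₂ : π₂ '' C₁ = {c₂})
    (π₀ : X → X) (hπ₀ : IsNearestPointProj (mInterval c₁ c₂) π₀) :
    ∀ x ∈ mConvexHull (C₁ ∪ C₂), ∀ y ∈ mConvexHull (C₁ ∪ C₂),
      dist x y = dist (π₁ x) (π₁ y) + dist (π₂ x) (π₂ y) + dist (π₀ x) (π₀ y) := by
  intro x hx y hy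
  have hc₁mem : c₁ ∈ C₁ := MedianDev.c₁_mem hπ₁ hc₁ h₂ne
  have hc₂mem : c₂ ∈ C₂ := MedianDev.c₁_mem hπ₂ hc₂ h₁ne
  let S : MedianDev.Ctx X :=
    { hmed := hmed, C₁ := C₁, C₂ := C₂, π₁ := π₁, π₂ := π₂, π₀ := π₀,
      c₁ := c₁, c₂ := c₂, h₁cv := h₁cv, h₂cv := h₂cv,
      hπ₁ := hπ₁, hπ₂ := hπ₂, hπ₀ := hπ₀,
      hqC₁ := fun a ha => MedianDev.pb_eq hc₂ ha,
      hpC₂ := fun b hb => MedianDev.pb_eq hc₁ hb,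
      hrC₁ := fun a ha => MedianDev.r_on_C₁ hmed h₁cv hπ₁ hc₁ hc₂mem hπ₀ ha,
      hrC₂ := fun b hb => MedianDev.r_on_C₂' (C₁' := C₁) hmed h₂cv hπ₂ hc₂ hc₁mem hπ₀ hb,
      hc₁mem := hc₁mem, hc₂mem := hc₂mem }
  exact S.hull_fmla hx hy
end

section
/- Let X be a median space, let C be a nonempty convex subset of X, let a, b ∈ X, and let x ∈ [a,b]. Then d(x, C) ≤ d(a, C) + d(b, C). -/
/-- In a median space, for a nonempty convex subset `C` and `x ∈ [a,b]`,
`d(x,C) ≤ d(a,C) + d(b,C)`. -/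
theorem statement9 (X : Type*) [MetricSpace X] (hmed : IsMedianSpace X)
    (C : Set X) (hCne : C.Nonempty) (hCconv : MConvex C)
    (a b x : X) (hx : x ∈ mInterval a b) :
    Metric.infDist x C ≤ Metric.infDist a C + Metric.infDist b C := by
  have key : ∀ p ∈ C, ∀ q ∈ C, Metric.infDist x C ≤ dist a p + dist b q := by
    intro p hp q hq
    obtain ⟨m, ⟨⟨h1, h2⟩, h3⟩, -⟩ := hmed x p q
    have hmC : m ∈ C := hCconv p hp q hq h2
    have hle : Metric.infDist x C ≤ dist x m := Metric.infDist_le_dist_of_mem hmC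
    have e1 : dist x m + dist m p = dist x p := h1
    have e2 : dist p m + dist m q = dist p q := h2
    have e3 : dist x m + dist m q = dist x q := h3
    have t1 : dist x p ≤ dist x a + dist a p := dist_triangle x a p
    have t2 : dist x q ≤ dist x b + dist b q := dist_triangle x b q
    have t3 : dist a b ≤ dist a p + (dist p q + dist q b) :=
      le_trans (dist_triangle a p b) (by linarith [dist_triangle p q b])
    have hab : dist a x + dist x b = dist a b := hx
    have c1 : dist m p = dist p m := dist_comm m p
    have c2 : dist x a = dist a x := dist_comm x a
    have c3 : dist x b = dist b x := dist_comm x b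
    have c4 : dist q b = dist b q := dist_comm q b
    linarith
  by_contra hlt
  push_neg at hlt
  obtain ⟨p, hp, hdp⟩ := (Metric.infDist_lt_iff hCne).mp
    (show Metric.infDist a C < Metric.infDist x C - Metric.infDist b C by linarith)
  obtain ⟨q, hq, hdq⟩ := (Metric.infDist_lt_iff hCne).mp
    (show Metric.infDist b C < Metric.infDist x C - dist a p by linarith)
  linarith [key p hp q hq]
end

section
/- Let X be a complete median space and let C₁, C₂ be nonempty closed convex subsets of X. Then the join [C₁, C₂] := ⋃_{a ∈ C₁, b ∈ C₂} [a,b] is a closed subset of X. -/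
/-- In a complete median space, every nonempty closed convex set admits a gate point
for every `x`. -/
lemma gate_exists {X : Type*} [MetricSpace X] [CompleteSpace X]
    (hmed : IsMedianSpace X) (C : Set X) (hne : C.Nonempty) (hcl : IsClosed C)
    (hcv : MConvex C) (x : X) :
    ∃ p ∈ C, ∀ c ∈ C, dist x p + dist p c = dist x c := by
  set r := Metric.infDist x C with hr
  -- key estimate from the median property
  have key : ∀ c ∈ C, ∀ c' ∈ C, dist c c' ≤ (dist x c - r) + (dist x c' - r) := by
    intro c hc c' hc'
    obtain ⟨m, ⟨⟨h1, h2⟩, h3⟩, -⟩ := hmed c x c'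
    have hmC : m ∈ C := hcv c hc c' hc' h3
    have hrm : r ≤ dist x m := Metric.infDist_le_dist_of_mem hmC
    have e1 : dist c m + dist m x = dist c x := h1
    have e2 : dist x m + dist m c' = dist x c' := h2
    have e3 : dist c m + dist m c' = dist c c' := h3
    have := dist_comm c x
    have := dist_comm m x
    linarith
  -- choose an infDist-minimizing sequence
  have hseq : ∀ n : ℕ, ∃ c ∈ C, dist x c < r + (1/2 : ℝ)^n := by
    intro n
    have hpos : r < r + (1/2 : ℝ)^n := by
      have : (0:ℝ) < (1/2:ℝ)^n := by positivity
      linarith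
    exact (Metric.infDist_lt_iff hne).mp hpos
  choose u huC hud using hseq
  have hur : ∀ n, r ≤ dist x (u n) := fun n => Metric.infDist_le_dist_of_mem (huC n)
  have hcauchy : CauchySeq u := by
    rw [Metric.cauchySeq_iff]
    intro ε hε
    obtain ⟨N, hN⟩ := exists_pow_lt_of_lt_one (by linarith : (0:ℝ) < ε/2)
      (by norm_num : (1/2 : ℝ) < 1)
    refine ⟨N, fun m hm n hn => ?_⟩
    have h1 : dist (u m) (u n) ≤ (dist x (u m) - r) + (dist x (u n) - r) :=
      key _ (huC m) _ (huC n)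
    have h2 : (1/2:ℝ)^m ≤ (1/2:ℝ)^N := by
      apply pow_le_pow_of_le_one (by norm_num) (by norm_num) hm
    have h3 : (1/2:ℝ)^n ≤ (1/2:ℝ)^N := by
      apply pow_le_pow_of_le_one (by norm_num) (by norm_num) hn
    have := hud m
    have := hud n
    linarith
  obtain ⟨p, hp⟩ := cauchySeq_tendsto_of_complete hcauchy
  have hpC : p ∈ C := hcl.mem_of_tendsto hp (Filter.Eventually.of_forall huC)
  -- dist x p = r
  have hd : Filter.Tendsto (fun n => dist x (u n)) Filter.atTop (nhds (dist x p)) :=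
    (continuous_const.dist continuous_id).continuousAt.tendsto.comp hp
  have hdr : Filter.Tendsto (fun n => dist x (u n)) Filter.atTop (nhds r) := by
    have hub : Filter.Tendsto (fun n => r + (1/2:ℝ)^n) Filter.atTop (nhds r) := by
      have : Filter.Tendsto (fun n : ℕ => (1/2:ℝ)^n) Filter.atTop (nhds 0) :=
        tendsto_pow_atTop_nhds_zero_of_lt_one (by norm_num) (by norm_num)
      simpa using tendsto_const_nhds.add this
    exact tendsto_of_tendsto_of_tendsto_of_le_of_le tendsto_const_nhds hub hur
      (fun n => (hud n).le)
  have hxp : dist x p = r := tendsto_nhds_unique hd hdr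
  refine ⟨p, hpC, fun c hc => ?_⟩
  -- gate property via the median of x, p, c
  obtain ⟨m, ⟨⟨h1, h2⟩, h3⟩, -⟩ := hmed x p c
  have hmC : m ∈ C := hcv p hpC c hc h2
  have hrm : r ≤ dist x m := Metric.infDist_le_dist_of_mem hmC
  have e1 : dist x m + dist m p = dist x p := h1
  have hmp : dist m p = 0 := le_antisymm (by linarith) dist_nonneg
  have hmp' : m = p := by rwa [dist_eq_zero] at hmp
  have e3 : dist x m + dist m c = dist x c := h3
  rw [hmp'] at e3
  exact e3

/-- Gate points are 1-Lipschitz in the base point. -/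
lemma gate_lipschitz {X : Type*} [MetricSpace X] {C : Set X} {x y p q : X}
    (hpC : p ∈ C) (hqC : q ∈ C)
    (hp : ∀ c ∈ C, dist x p + dist p c = dist x c)
    (hq : ∀ c ∈ C, dist y q + dist q c = dist y c) :
    dist p q ≤ dist x y := by
  have h1 : dist x p + dist p q = dist x q := hp q hqC
  have h2 : dist y q + dist q p = dist y p := hq p hpC
  have t1 : dist x q ≤ dist x y + dist y q := dist_triangle x y q
  have t2 : dist y p ≤ dist y x + dist x p := dist_triangle y x p
  have := dist_comm p q
  have := dist_comm x y
  linarith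

/-- In a complete median space, the join of two nonempty closed convex subsets is closed. -/
theorem statement10 (X : Type*) [MetricSpace X] [CompleteSpace X]
    (hmed : IsMedianSpace X)
    (C₁ C₂ : Set X) (h₁ne : C₁.Nonempty) (h₂ne : C₂.Nonempty)
    (h₁cl : IsClosed C₁) (h₂cl : IsClosed C₂) (h₁cv : MConvex C₁) (h₂cv : MConvex C₂) :
    IsClosed (⋃ a ∈ C₁, ⋃ b ∈ C₂, mInterval a b) := by
  choose π₁ hπ₁C hπ₁ using gate_exists hmed C₁ h₁ne h₁cl h₁cv
  choose π₂ hπ₂C hπ₂ using gate_exists hmed C₂ h₂ne h₂cl h₂cv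
  have hl₁ : LipschitzWith 1 π₁ := by
    rw [lipschitzWith_iff_dist_le_mul]
    intro a b
    simpa using gate_lipschitz (hπ₁C a) (hπ₁C b) (hπ₁ a) (hπ₁ b)
  have hl₂ : LipschitzWith 1 π₂ := by
    rw [lipschitzWith_iff_dist_le_mul]
    intro a b
    simpa using gate_lipschitz (hπ₂C a) (hπ₂C b) (hπ₂ a) (hπ₂ b)
  have hf : Continuous fun x => dist (π₁ x) x + dist x (π₂ x) - dist (π₁ x) (π₂ x) := by
    exact ((hl₁.continuous.dist continuous_id).add
      (continuous_id.dist hl₂.continuous)).sub (hl₁.continuous.dist hl₂.continuous)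
  have hset : (⋃ a ∈ C₁, ⋃ b ∈ C₂, mInterval a b) =
      (fun x => dist (π₁ x) x + dist x (π₂ x) - dist (π₁ x) (π₂ x)) ⁻¹' {0} := by
    ext x
    simp only [Set.mem_iUnion, Set.mem_preimage, Set.mem_singleton_iff]
    constructor
    · rintro ⟨a, ha, b, hb, hx⟩
      have hx' : dist a x + dist x b = dist a b := hx
      have g1 : dist x (π₁ x) + dist (π₁ x) a = dist x a := hπ₁ x a ha
      have g2 : dist x (π₂ x) + dist (π₂ x) b = dist x b := hπ₂ x b hb
      have t1 : dist a b ≤ dist a (π₁ x) + dist (π₁ x) (π₂ x) + dist (π₂ x) b := by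
        have := dist_triangle a (π₁ x) b
        have := dist_triangle (π₁ x) (π₂ x) b
        linarith
      have t2 : dist (π₁ x) (π₂ x) ≤ dist (π₁ x) x + dist x (π₂ x) :=
        dist_triangle _ _ _
      have := dist_comm a x
      have := dist_comm a (π₁ x)
      have := dist_comm (π₁ x) x
      linarith
    · intro h
      refine ⟨π₁ x, hπ₁C x, π₂ x, hπ₂C x, ?_⟩
      show dist (π₁ x) x + dist x (π₂ x) = dist (π₁ x) (π₂ x)
      linarith
  rw [hset]
  exact IsClosed.preimage hf isClosed_singleton
end
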